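/- arXiv:2603.15201 — 5 statements merged into one kernel-verified Lean document; each statement's English description precedes it below -/
import Mathlib

section
/- Let (s_h, i_h, r_h, S_v, I_v) be a classical solution of the age-structured SIRS/SI malaria model on ℝ₊ × ℝ₊, with s_h, i_h ≥ 0, S_v(t) > 0 and I_v(t) ≥ 0 for all t, i_h(t,0) = 0 for all t, i_h(t,·) and ∂_a i_h(t,·) integrable on (0,∞) for each t with ψ(a)·i_h(t,a) → 0 as a → ∞, and such that differentiation under the integral sign in t is justified. Define L_0(t) = ∫_0^∞ ψ(a)·i_h(t,a) da + g(S_v(t)/S_v^0) + I_v(t)/S_v^0 where g(x) = x - ln(x) - 1 and ψ(a) = ∫_a^∞ β_h(s)·exp(-∫_a^s (μ_h(z)+δ(z)+r_1(z))dz) ds. Then for every t > 0, d/dt L_0(t) = (μ_v·I_v(t)/S_v^0)·( (S_v^0/μ_v)·∫_0^∞ β_v(a)·ψ(a)·s_h(t,a) da − 1 ) − (μ_v·S_v(t)/S_v^0)·(1 − S_v^0/S_v(t))². -/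
open MeasureTheory Real Set

open Filter



private lemma bdd_integrableOn {f : ℝ → ℝ} (hf : AEStronglyMeasurable f (volume.restrict (Ioi (0:ℝ)))) {C : ℝ}
    {s : Set ℝ} (hs : s ⊆ Ioi 0) (hsm : MeasurableSet s) (hfin : volume s ≠ ⊤)
    (hC : ∀ x ∈ s, |f x| ≤ C) : IntegrableOn f s := by
  refine ⟨hf.mono_measure (Measure.restrict_mono hs le_rfl), ?_⟩
  apply HasFiniteIntegral.restrict_of_bounded (C := C) hfin.lt_top
  filter_upwards [ae_restrict_mem hsm] with x hx using by
      simpa [Real.norm_eq_abs] using hC x hx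

private lemma intInt_of_bdd {f : ℝ → ℝ} (hf : Measurable f) {C : ℝ}
    (hC : ∀ x, |f x| ≤ C) (u s : ℝ) : IntervalIntegrable f volume u s := by
  rw [intervalIntegrable_iff]
  refine ⟨hf.aestronglyMeasurable.restrict, ?_⟩
  apply HasFiniteIntegral.restrict_of_bounded (C := C) measure_Ioc_lt_top
  filter_upwards with x using by simpa [Real.norm_eq_abs] using hC x


private lemma intInt_of_bdd_on {f : ℝ → ℝ} (hf : Measurable f) {C : ℝ} (u s : ℝ)
    (hC : ∀ x ∈ Set.uIcc u s, |f x| ≤ C) : IntervalIntegrable f volume u s := by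
  rw [intervalIntegrable_iff]
  refine ⟨hf.aestronglyMeasurable.restrict, ?_⟩
  apply HasFiniteIntegral.restrict_of_bounded (C := C) measure_Ioc_lt_top
  filter_upwards [ae_restrict_mem measurableSet_Ioc] with x hx using by
    simpa [Real.norm_eq_abs] using hC x (Set.Ioc_subset_Icc_self hx)

private lemma core_ftc (q : ℝ → ℝ) (hq : Measurable q) (B : ℝ) (hq0 : ∀ x, 0 ≤ q x)
    (hqB : ∀ x, q x ≤ B) {u s : ℝ} (hus : u ≤ s) :
    ∫ a in u..s, q a * exp (∫ x in (0:ℝ)..a, q x)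
      = exp (∫ x in (0:ℝ)..s, q x) - exp (∫ x in (0:ℝ)..u, q x) := by
  have hB0 : 0 ≤ B := le_trans (hq0 0) (hqB 0)
  have habs : ∀ x, |q x| ≤ B := fun x => abs_le.2 ⟨by linarith [hq0 x], hqB x⟩
  have hqi : ∀ a b : ℝ, IntervalIntegrable q volume a b := by
    intro a b
    rw [intervalIntegrable_iff]
    refine ⟨hq.aestronglyMeasurable.restrict, ?_⟩
    apply HasFiniteIntegral.restrict_of_bounded (C := B) measure_Ioc_lt_top
    filter_upwards with x using by simpa [Real.norm_eq_abs] using habs x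
  set R : ℝ → ℝ := fun a => ∫ x in (0:ℝ)..a, q x with hRdef
  have hRd : ∀ a b : ℝ, R b - R a = ∫ x in a..b, q x := by
    intro a b
    exact intervalIntegral.integral_interval_sub_left (hqi 0 b) (hqi 0 a)
  have hRmono : ∀ a b : ℝ, a ≤ b → R a ≤ R b := by
    intro a b hab
    have : 0 ≤ R b - R a := by
      rw [hRd]; exact intervalIntegral.integral_nonneg hab fun x _ => hq0 x
    linarith
  have hRdiff_le : ∀ a b : ℝ, a ≤ b → R b - R a ≤ B * (b - a) := by
    intro a b hab
    rw [hRd]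
    calc ∫ x in a..b, q x ≤ ∫ _x in a..b, B :=
          intervalIntegral.integral_mono_on hab (hqi a b) intervalIntegrable_const
            fun x _ => hqB x
      _ = B * (b - a) := by rw [intervalIntegral.integral_const]; ring_nf
  have hRcont : Continuous R := intervalIntegral.continuous_primitive hqi 0
  set f : ℝ → ℝ := fun x => q x * exp (R x) with hfdef
  have hfm : Measurable f := hq.mul (Real.continuous_exp.comp hRcont).measurable
  have hfi : ∀ a b : ℝ, a ≤ s → b ≤ s → IntervalIntegrable f volume a b := by
    intro a b has hbs
    apply intInt_of_bdd_on hfm (C := B * exp (R s))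
    intro x hx
    have hx' : x ≤ s := le_trans (hx.2) (max_le has hbs)
    have h1 : 0 ≤ f x := mul_nonneg (hq0 x) (exp_pos _).le
    rw [abs_of_nonneg h1]
    exact mul_le_mul (hqB x) (exp_le_exp.2 (hRmono _ _ hx')) (exp_pos _).le hB0
  -- the per-n estimate
  have key : ∀ n : ℕ, 0 < n →
      |(∫ a in u..s, f a) - (exp (R s) - exp (R u))|
        ≤ (B * (s - u) / n) * (exp (R s) - exp (R u)) := by
    intro n hn
    set δn : ℝ := (s - u) / n with hδdef
    have hδ0 : 0 ≤ δn := div_nonneg (by linarith) (Nat.cast_nonneg n)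
    set a : ℕ → ℝ := fun i => u + i * δn with hadef
    have ha0 : a 0 = u := by simp [hadef]
    have han : a n = s := by
      have hn' : (n:ℝ) ≠ 0 := Nat.cast_ne_zero.2 hn.ne'
      have : (n:ℝ) * ((s - u) / n) = s - u := by field_simp
      simp only [hadef, hδdef]; linarith
    have hstep : ∀ i : ℕ, a (i+1) - a i = δn := by
      intro i; simp [hadef]; push_cast; ring
    have hmono : ∀ i j : ℕ, i ≤ j → a i ≤ a j := by
      intro i j hij
      simp only [hadef, add_le_add_iff_left]
      exact mul_le_mul_of_nonneg_right (Nat.cast_le.2 hij) hδ0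
    have hrange : ∀ i : ℕ, i ≤ n → u ≤ a i ∧ a i ≤ s := by
      intro i hi
      constructor
      · rw [← ha0]; exact hmono 0 i (Nat.zero_le i)
      · rw [← han]; exact hmono i n hi
    -- piecewise bounds
    have piece : ∀ k : ℕ, k < n →
        |(∫ x in a k..a (k+1), f x) - (exp (R (a (k+1))) - exp (R (a k)))|
          ≤ (B * δn) * (exp (R (a (k+1))) - exp (R (a k))) := by
      intro k hk
      set x := a k
      set y := a (k+1)
      have hxy : x ≤ y := hmono k (k+1) (Nat.le_succ k)
      have hux : u ≤ x := (hrange k hk.le).1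
      have hys : y ≤ s := (hrange (k+1) hk).2
      set d : ℝ := R y - R x with hddef
      have hd0 : 0 ≤ d := by have := hRmono x y hxy; linarith
      have hdB : d ≤ B * δn := by
        have := hRdiff_le x y hxy
        have hyx : y - x = δn := hstep k
        rw [hyx] at this; linarith
      have hIlow : exp (R x) * d ≤ ∫ z in x..y, f z := by
        have h1 : (∫ z in x..y, q z * exp (R x)) ≤ ∫ z in x..y, f z := by
          apply intervalIntegral.integral_mono_on hxy
            ((hqi x y).mul_const _) (hfi x y ((hrange k hk.le).2) hys)
          intro z hz
          exact mul_le_mul_of_nonneg_left (exp_le_exp.2 (hRmono x z hz.1)) (hq0 z)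
        have h2 : (∫ z in x..y, q z * exp (R x)) = exp (R x) * d := by
          rw [intervalIntegral.integral_mul_const, ← hRd]; ring
        linarith
      have hIhigh : (∫ z in x..y, f z) ≤ exp (R y) * d := by
        have h1 : (∫ z in x..y, f z) ≤ ∫ z in x..y, q z * exp (R y) := by
          apply intervalIntegral.integral_mono_on hxy
            (hfi x y ((hrange k hk.le).2) hys) ((hqi x y).mul_const _)
          intro z hz
          exact mul_le_mul_of_nonneg_left (exp_le_exp.2 (hRmono z y hz.2)) (hq0 z)
        have h2 : (∫ z in x..y, q z * exp (R y)) = exp (R y) * d := by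
          rw [intervalIntegral.integral_mul_const, ← hRd]; ring
        linarith
      have hElow : exp (R x) * d ≤ exp (R y) - exp (R x) := by
        have hRy : R y = R x + d := by rw [hddef]; ring
        rw [hRy, Real.exp_add]
        have h1 : d + 1 ≤ exp d := Real.add_one_le_exp d
        nlinarith [Real.exp_pos (R x)]
      have hEhigh : exp (R y) - exp (R x) ≤ exp (R y) * d := by
        have hRx : R x = R y + (-d) := by rw [hddef]; ring
        rw [hRx, Real.exp_add]
        have h1 : -d + 1 ≤ exp (-d) := Real.add_one_le_exp (-d)
        nlinarith [Real.exp_pos (R y)]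
      rw [abs_le]
      constructor
      · nlinarith [mul_le_mul_of_nonneg_left hdB (Real.exp_pos (R x)).le,
          mul_le_mul_of_nonneg_left hdB (Real.exp_pos (R y)).le]
      · nlinarith [mul_le_mul_of_nonneg_left hdB (Real.exp_pos (R x)).le,
          mul_le_mul_of_nonneg_left hdB (Real.exp_pos (R y)).le]
    -- assemble
    have hsum1 : ∑ k ∈ Finset.range n, ∫ x in a k..a (k+1), f x = ∫ x in u..s, f x := by
      rw [← ha0, ← han]
      apply intervalIntegral.sum_integral_adjacent_intervals
      intro k hk
      exact hfi (a k) (a (k+1)) (hrange k hk.le).2 (hrange (k+1) hk).2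
    have hsum2 : ∑ k ∈ Finset.range n, (exp (R (a (k+1))) - exp (R (a k)))
        = exp (R s) - exp (R u) := by
      rw [Finset.sum_range_sub (fun i => exp (R (a i))), ha0, han]
    calc |(∫ a in u..s, f a) - (exp (R s) - exp (R u))|
        = |∑ k ∈ Finset.range n, ((∫ x in a k..a (k+1), f x)
            - (exp (R (a (k+1))) - exp (R (a k))))| := by
          rw [Finset.sum_sub_distrib, hsum1, hsum2]
      _ ≤ ∑ k ∈ Finset.range n, |(∫ x in a k..a (k+1), f x)
            - (exp (R (a (k+1))) - exp (R (a k)))| := Finset.abs_sum_le_sum_abs _ _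
      _ ≤ ∑ k ∈ Finset.range n, (B * δn) * (exp (R (a (k+1))) - exp (R (a k))) :=
          Finset.sum_le_sum fun k hk => piece k (Finset.mem_range.1 hk)
      _ = (B * δn) * (exp (R s) - exp (R u)) := by rw [← Finset.mul_sum, hsum2]
      _ = (B * (s - u) / n) * (exp (R s) - exp (R u)) := by rw [hδdef]; ring
  -- conclude
  set Δ : ℝ := |(∫ a in u..s, f a) - (exp (R s) - exp (R u))| with hΔdef
  set K : ℝ := B * (s - u) * (exp (R s) - exp (R u)) with hKdef
  have hK0 : 0 ≤ K := by
    apply mul_nonneg (mul_nonneg hB0 (by linarith))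
    have := hRmono u s hus
    have := Real.exp_le_exp.2 this
    linarith
  have hΔK : ∀ n : ℕ, 0 < n → Δ ≤ K / n := by
    intro n hn
    have := key n hn
    calc Δ ≤ (B * (s - u) / n) * (exp (R s) - exp (R u)) := this
      _ = K / n := by rw [hKdef]; ring
  have hΔ0 : Δ ≤ 0 := by
    by_contra h
    push_neg at h
    obtain ⟨n, hn⟩ := exists_nat_gt (K / Δ)
    have hn0 : 0 < n := by
      by_contra hn0
      push_neg at hn0
      interval_cases n
      · simp at hn
        have : K / Δ ≥ 0 := div_nonneg hK0 h.le
        linarith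
    have h1 : K / Δ < n := hn
    have h2 : K < Δ * n := by
      rw [div_lt_iff₀ h] at h1; linarith
    have h3 : K / n < Δ := by
      rw [div_lt_iff₀ (by positivity : (0:ℝ) < (n:ℝ))]
      linarith
    linarith [hΔK n hn0]
  have : Δ = 0 := le_antisymm hΔ0 (abs_nonneg _)
  have := abs_eq_zero.1 this
  linarith [this]


private lemma swap_triangle {s : ℝ} (hs : 0 < s) (w v : ℝ → ℝ)
    (hwm : Measurable w) (hw0 : ∀ x, 0 ≤ w x) (Cw : ℝ) (hwB : ∀ x ∈ Ioc (0:ℝ) s, w x ≤ Cw)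
    (hv : IntegrableOn v (Ioc 0 s)) :
    ∫ a in Ioc (0:ℝ) s, w a * (∫ u in Ioc 0 a, v u)
      = ∫ u in Ioc (0:ℝ) s, (∫ x in u..s, w x) * v u := by
  have hCw0 : 0 ≤ Cw := le_trans (hw0 s) (hwB s ⟨hs, le_rfl⟩)
  set μ := volume.restrict (Ioc (0:ℝ) s) with hμ
  have hvm : AEStronglyMeasurable v μ := hv.aestronglyMeasurable
  set G : ℝ × ℝ → ℝ := fun p => indicator {p : ℝ × ℝ | p.2 ≤ p.1}
    (fun p => w p.1 * v p.2) p with hG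
  have hSm : MeasurableSet {p : ℝ × ℝ | p.2 ≤ p.1} :=
    measurableSet_le measurable_snd measurable_fst
  have hGm : AEStronglyMeasurable G (μ.prod μ) := by
    apply AEStronglyMeasurable.indicator _ hSm
    exact ((hwm.comp measurable_fst).aestronglyMeasurable).mul hvm.comp_snd
  have hslice : ∀ a : ℝ, (fun u => G (a, u)) = fun u => w a * (Iic a).indicator v u := by
    intro a
    funext u
    by_cases h : u ≤ a <;> simp [hG, indicator, h, Set.mem_Iic]
  have hGint : Integrable G (μ.prod μ) := by
    rw [integrable_prod_iff hGm]
    constructor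
    · filter_upwards with a
      rw [hslice a]
      exact (hv.indicator measurableSet_Iic).const_mul _
    · refine ⟨hGm.norm.integral_prod_right', ?_⟩
      rw [hμ]
      apply HasFiniteIntegral.restrict_of_bounded
        (C := Cw * ∫ u in Ioc (0:ℝ) s, |v u|) measure_Ioc_lt_top
      filter_upwards [ae_restrict_mem measurableSet_Ioc] with a ha
      have h1 : 0 ≤ ∫ u, ‖G (a, u)‖ ∂μ := integral_nonneg fun u => norm_nonneg _
      rw [Real.norm_eq_abs, abs_of_nonneg h1]
      have h2 : ∀ u : ℝ, ‖G (a, u)‖ ≤ Cw * |v u| := by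
        intro u
        by_cases h : u ≤ a
        · simp only [hG, indicator, Set.mem_setOf_eq, h, if_true, Real.norm_eq_abs]
          rw [abs_mul, abs_of_nonneg (hw0 a)]
          exact mul_le_mul_of_nonneg_right (hwB a ha) (abs_nonneg _)
        · have : G (a, u) = 0 := by simp [hG, indicator, h]
          rw [this]
          simp only [norm_zero]
          exact mul_nonneg hCw0 (abs_nonneg _)
      calc (∫ u, ‖G (a, u)‖ ∂μ) ≤ ∫ u, Cw * |v u| ∂μ := by
            apply integral_mono_of_nonneg (Filter.Eventually.of_forall fun u => norm_nonneg _)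
              (hv.abs.const_mul Cw) (Filter.Eventually.of_forall h2)
        _ = Cw * ∫ u in Ioc (0:ℝ) s, |v u| := by rw [hμ, integral_const_mul]
  have hlhs : ∀ a ∈ Ioc (0:ℝ) s, (∫ u, G (a, u) ∂μ) = w a * (∫ u in Ioc 0 a, v u) := by
    intro a ha
    rw [hslice a, hμ, integral_const_mul, setIntegral_indicator measurableSet_Iic]
    congr 2
    rw [Set.Ioc_inter_Iic, min_eq_right ha.2]
  have hrhs : ∀ u ∈ Ioc (0:ℝ) s, (∫ a, G (a, u) ∂μ) = (∫ x in u..s, w x) * v u := by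
    intro u hu
    have h1 : (fun a => G (a, u)) = fun a => (Ici u).indicator w a * v u := by
      funext a
      by_cases h : u ≤ a <;> simp [hG, indicator, h, Set.mem_Ici]
    rw [h1, hμ, integral_mul_const, setIntegral_indicator measurableSet_Ici]
    have h2 : Ioc (0:ℝ) s ∩ Ici u = Icc u s := by
      ext x
      simp only [Set.mem_inter_iff, Set.mem_Ioc, Set.mem_Ici, Set.mem_Icc]
      constructor
      · rintro ⟨⟨_, hx2⟩, hx3⟩; exact ⟨hx3, hx2⟩
      · rintro ⟨hx1, hx2⟩; exact ⟨⟨lt_of_lt_of_le hu.1 hx1, hx2⟩, hx1⟩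
    rw [h2, integral_Icc_eq_integral_Ioc, ← intervalIntegral.integral_of_le hu.2]
  calc ∫ a in Ioc (0:ℝ) s, w a * (∫ u in Ioc 0 a, v u)
      = ∫ a, (∫ u, G (a, u) ∂μ) ∂μ := by
        rw [hμ]
        exact (setIntegral_congr_fun measurableSet_Ioc hlhs).symm
    _ = ∫ u, (∫ a, G (a, u) ∂μ) ∂μ := integral_integral_swap hGint
    _ = ∫ u in Ioc (0:ℝ) s, (∫ x in u..s, w x) * v u := by
        rw [hμ]
        exact setIntegral_congr_fun measurableSet_Ioc hrhs


private lemma swap_halfplane (w v : ℝ → ℝ)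
    (hwm : Measurable w) (hw0 : ∀ x, 0 ≤ w x) (hwi : IntegrableOn w (Ioi 0))
    (hv : AEStronglyMeasurable v (volume.restrict (Ioi (0:ℝ))))
    (hint : Integrable (fun a => (∫ x in Ioi a, w x) * v a) (volume.restrict (Ioi 0))) :
    (∫ a in Ioi (0:ℝ), (∫ x in Ioi a, w x) * v a)
      = (∫ s in Ioi (0:ℝ), w s * (∫ a in Ioc 0 s, v a))
    ∧ Integrable (fun s => w s * (∫ a in Ioc 0 s, v a)) (volume.restrict (Ioi 0)) := by
  set μ := volume.restrict (Ioi (0:ℝ)) with hμ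
  set G : ℝ × ℝ → ℝ := fun p => indicator {p : ℝ × ℝ | p.1 < p.2}
    (fun p => w p.2 * v p.1) p with hG
  have hSm : MeasurableSet {p : ℝ × ℝ | p.1 < p.2} :=
    measurableSet_lt measurable_fst measurable_snd
  have hGm : AEStronglyMeasurable G (μ.prod μ) := by
    apply AEStronglyMeasurable.indicator _ hSm
    exact ((hwm.comp measurable_snd).aestronglyMeasurable).mul hv.comp_fst
  -- slice identity in the first variable
  have hslice : ∀ a : ℝ, (fun s => G (a, s)) = fun s => (Ioi a).indicator w s * v a := by
    intro a
    funext s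
    by_cases h : a < s <;> simp [hG, indicator, h, Set.mem_Ioi]
  have hslice_int : ∀ a : ℝ, 0 < a → Integrable (fun s => G (a, s)) μ := by
    intro a _
    rw [hslice a]
    exact (hwi.indicator measurableSet_Ioi).mul_const _
  have hnorm_eq : ∀ a : ℝ, 0 < a →
      (∫ s, ‖G (a, s)‖ ∂μ) = (∫ x in Ioi a, w x) * |v a| := by
    intro a ha
    have : (fun s => ‖G (a, s)‖) = fun s => (Ioi a).indicator w s * |v a| := by
      funext s
      by_cases h : a < s
      · simp [hG, indicator, h, Set.mem_Ioi, abs_mul, abs_of_nonneg (hw0 s)]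
      · simp [hG, indicator, h, Set.mem_Ioi]
    rw [this, integral_mul_const, hμ, setIntegral_indicator measurableSet_Ioi]
    congr 2
    rw [Set.inter_eq_right.2 (Ioi_subset_Ioi ha.le)]
  have hval_eq : ∀ a : ℝ, 0 < a →
      (∫ s, G (a, s) ∂μ) = (∫ x in Ioi a, w x) * v a := by
    intro a ha
    rw [hslice a, integral_mul_const, hμ, setIntegral_indicator measurableSet_Ioi]
    congr 2
    rw [Set.inter_eq_right.2 (Ioi_subset_Ioi ha.le)]
  have hGint : Integrable G (μ.prod μ) := by
    rw [integrable_prod_iff hGm]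
    constructor
    · filter_upwards [ae_restrict_mem measurableSet_Ioi] with a ha
      exact hslice_int a ha
    · apply (hint.abs.congr _)
      filter_upwards [ae_restrict_mem measurableSet_Ioi] with a ha
      rw [hnorm_eq a ha]
      rw [abs_mul, abs_of_nonneg (setIntegral_nonneg measurableSet_Ioi fun x _ => hw0 x)]
  -- inner identity in the second variable
  have hslice2 : ∀ s : ℝ, 0 < s →
      (∫ a, G (a, s) ∂μ) = w s * (∫ a in Ioc 0 s, v a) := by
    intro s hs
    have h1 : (fun a => G (a, s)) = fun a => (Iio s).indicator (fun a => w s * v a) a := by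
      funext a
      by_cases h : a < s <;> simp [hG, indicator, h, Set.mem_Iio]
    rw [h1, hμ, setIntegral_indicator measurableSet_Iio]
    rw [Set.Ioi_inter_Iio, ← integral_Ioc_eq_integral_Ioo, integral_const_mul]
  constructor
  · have hswap := integral_integral_swap (f := fun a s => G (a, s)) (μ := μ) (ν := μ) hGint
    calc (∫ a in Ioi (0:ℝ), (∫ x in Ioi a, w x) * v a)
        = ∫ a, (∫ s, G (a, s) ∂μ) ∂μ := by
          rw [hμ]
          apply setIntegral_congr_fun measurableSet_Ioi
          intro a ha
          exact (hval_eq a ha).symm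
      _ = ∫ s, (∫ a, G (a, s) ∂μ) ∂μ := hswap
      _ = ∫ s in Ioi (0:ℝ), w s * (∫ a in Ioc 0 s, v a) := by
          rw [hμ]
          apply setIntegral_congr_fun measurableSet_Ioi
          intro s hs
          exact hslice2 s hs
  · apply (hGint.integral_prod_right).congr
    filter_upwards [ae_restrict_mem measurableSet_Ioi] with s hs
    exact hslice2 s hs


private lemma integral_exp_neg_mul_Ioi' {b : ℝ} (hb : 0 < b) (a : ℝ) :
    ∫ s in Ioi a, exp (-(b * s)) = exp (-(b * a)) / b := by
  have hd : ∀ x ∈ Ioi a, HasDerivAt (fun s : ℝ => -exp (-(b * s)) / b) (exp (-(b * x))) x := by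
    intro x _
    have h1 : HasDerivAt (fun s : ℝ => -(b * s)) (-b) x := by
      simpa using ((hasDerivAt_id x).const_mul b).fun_neg
    have h2 := (Real.hasDerivAt_exp (-(b * x))).comp x h1
    have h3 := h2.neg.div_const b
    exact h3.congr_deriv (by field_simp)
  have hcont : ContinuousWithinAt (fun s : ℝ => -exp (-(b * s)) / b) (Ici a) a := by
    apply Continuous.continuousWithinAt
    continuity
  have hlim : Tendsto (fun s : ℝ => -exp (-(b * s)) / b) atTop (nhds 0) := by
    have h1 : Tendsto (fun s : ℝ => b * s) atTop atTop :=
      Tendsto.const_mul_atTop hb tendsto_id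
    have h2 : Tendsto (fun s : ℝ => -(b * s)) atTop atBot :=
      tendsto_neg_atTop_atBot.comp h1
    have h3 := Real.tendsto_exp_atBot.comp h2
    have h4 := (h3.neg).div_const b
    simpa using h4
  have hint : IntegrableOn (fun x : ℝ => exp (-(b * x))) (Ioi a) := by
    simpa [neg_mul] using exp_neg_integrableOn_Ioi a hb
  have := integral_Ioi_of_hasDerivAt_of_tendsto hcont hd hint hlim
  rw [this]
  field_simp
  ring

/-- The derivative of the Lyapunov functional `L₀` along a classical solution of the
age-structured SIRS/SI malaria model. -/
theorem lyapunov_derivative_identity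
    (Λh Λv μv μ0 : ℝ)
    (μh δ r1 r2 βh βv : ℝ → ℝ)
    (hΛh : 0 < Λh) (hΛv : 0 < Λv) (hμv : 0 < μv) (hμ0 : 0 < μ0)
    (hμhm : Measurable μh) (hδm : Measurable δ) (hr1m : Measurable r1)
    (hr2m : Measurable r2) (hβhm : Measurable βh) (hβvm : Measurable βv)
    (hμh_lb : ∀ a, μ0 ≤ μh a) (hμv_lb : μ0 ≤ μv)
    (hδ0 : ∀ a, 0 ≤ δ a) (hr10 : ∀ a, 0 ≤ r1 a) (hr20 : ∀ a, 0 ≤ r2 a)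
    (hβh0 : ∀ a, 0 ≤ βh a) (hβv0 : ∀ a, 0 ≤ βv a)
    (Bμh Bδ Br1 Br2 Bβh Bβv : ℝ)
    (hμhB : ∀ a, μh a ≤ Bμh) (hδB : ∀ a, δ a ≤ Bδ) (hr1B : ∀ a, r1 a ≤ Br1)
    (hr2B : ∀ a, r2 a ≤ Br2) (hβhB : ∀ a, βh a ≤ Bβh) (hβvB : ∀ a, βv a ≤ Bβv)
    (Sv0 : ℝ) (hSv0def : Sv0 = Λv / μv)
    (ψ : ℝ → ℝ)
    (hψ : ∀ a, ψ a = ∫ s in Ioi a, βh s * exp (-(∫ z in a..s, (μh z + δ z + r1 z))))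
    -- the solution
    (sh ih rh : ℝ → ℝ → ℝ) (Sv Iv : ℝ → ℝ) (iht iha : ℝ → ℝ → ℝ)
    (hsh_pos : ∀ t a, 0 ≤ sh t a) (hih_pos : ∀ t a, 0 ≤ ih t a)
    (hSv_pos : ∀ t, 0 < Sv t) (hIv_pos : ∀ t, 0 ≤ Iv t)
    (hbc : ∀ t, ih t 0 = 0)
    -- partial derivatives of i_h and the PDE for i_h
    (hih_t : ∀ t a, HasDerivAt (fun τ => ih τ a) (iht t a) t)
    (hih_a : ∀ t a, HasDerivAt (fun α => ih t α) (iha t a) a)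
    (hPDE_i : ∀ t a, iht t a + iha t a
      = βv a * Iv t * sh t a - (μh a + δ a + r1 a) * ih t a)
    -- PDEs for s_h and r_h (derivative along characteristics)
    (hPDE_s : ∀ t a, 0 < t → 0 < a → HasDerivAt (fun h => sh (t+h) (a+h))
      (-(βv a) * Iv t * sh t a - μh a * sh t a + r2 a * rh t a) 0)
    (hPDE_r : ∀ t a, 0 < t → 0 < a → HasDerivAt (fun h => rh (t+h) (a+h))
      (r1 a * ih t a - (r2 a + μh a) * rh t a) 0)
    (hbc_s : ∀ t, sh t 0 = Λh) (hbc_r : ∀ t, rh t 0 = 0)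
    -- vector ODEs
    (hSv : ∀ t, HasDerivAt Sv
      (Λv - Sv t * (∫ a in Ioi (0:ℝ), βh a * ih t a) - μv * Sv t) t)
    (hIv : ∀ t, HasDerivAt Iv
      (Sv t * (∫ a in Ioi (0:ℝ), βh a * ih t a) - μv * Iv t) t)
    -- integrability and decay
    (hsh_int : ∀ t, IntegrableOn (sh t) (Ioi 0))
    (hih_int : ∀ t, IntegrableOn (ih t) (Ioi 0))
    (hiha_int : ∀ t, IntegrableOn (iha t) (Ioi 0))
    (hdecay : ∀ t, Filter.Tendsto (fun a => ψ a * ih t a) Filter.atTop (nhds 0))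
    -- differentiation under the integral sign is justified
    (hdiff_int : ∀ t, HasDerivAt (fun τ => ∫ a in Ioi (0:ℝ), ψ a * ih τ a)
      (∫ a in Ioi (0:ℝ), ψ a * iht t a) t)
    -- the Lyapunov functional
    (L0 : ℝ → ℝ)
    (hL0 : ∀ t, L0 t = (∫ a in Ioi (0:ℝ), ψ a * ih t a)
      + (Sv t / Sv0 - Real.log (Sv t / Sv0) - 1) + Iv t / Sv0) :
    ∀ t, 0 < t → HasDerivAt L0
      ((μv * Iv t / Sv0) * ((Sv0 / μv) * (∫ a in Ioi (0:ℝ), βv a * ψ a * sh t a) - 1)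
        - (μv * Sv t / Sv0) * (1 - Sv0 / Sv t) ^ 2) t := by
  intro t ht
  have hSv0pos : 0 < Sv0 := by rw [hSv0def]; positivity
  -- the total removal rate q and its primitive R
  set q : ℝ → ℝ := fun z => μh z + δ z + r1 z with hqdef
  have hqm : Measurable q := (hμhm.add hδm).add hr1m
  have hqlb : ∀ x, μ0 ≤ q x := by
    intro x
    have h1 := hμh_lb x; have h2 := hδ0 x; have h3 := hr10 x
    simp only [hqdef]; linarith
  have hq0 : ∀ x, 0 ≤ q x := fun x => le_trans hμ0.le (hqlb x)
  set Bq : ℝ := Bμh + Bδ + Br1 with hBqdef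
  have hqB : ∀ x, q x ≤ Bq := by
    intro x
    have h1 := hμhB x; have h2 := hδB x; have h3 := hr1B x
    simp only [hqdef, hBqdef]; linarith
  have hBq0 : 0 ≤ Bq := le_trans (hq0 0) (hqB 0)
  have hqabs : ∀ x, |q x| ≤ Bq := fun x => abs_le.2 ⟨by linarith [hq0 x], hqB x⟩
  have hqi : ∀ a b : ℝ, IntervalIntegrable q volume a b := fun a b => intInt_of_bdd hqm hqabs a b
  set R : ℝ → ℝ := fun a => ∫ x in (0:ℝ)..a, q x with hRdef
  have hRd : ∀ a b : ℝ, R b - R a = ∫ x in a..b, q x := fun a b =>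
    intervalIntegral.integral_interval_sub_left (hqi 0 b) (hqi 0 a)
  have hRmono : ∀ a b : ℝ, a ≤ b → R a ≤ R b := by
    intro a b hab
    have h : 0 ≤ R b - R a := by
      rw [hRd]; exact intervalIntegral.integral_nonneg hab fun x _ => hq0 x
    linarith
  have hRlow : ∀ a b : ℝ, a ≤ b → μ0 * (b - a) ≤ R b - R a := by
    intro a b hab
    rw [hRd]
    calc μ0 * (b - a) = ∫ _x in a..b, μ0 := by
          rw [intervalIntegral.integral_const, smul_eq_mul]; ring
      _ ≤ ∫ x in a..b, q x :=
          intervalIntegral.integral_mono_on hab intervalIntegrable_const (hqi a b)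
            fun x _ => hqlb x
  have hR0 : R 0 = 0 := intervalIntegral.integral_same
  have hRcont : Continuous R := intervalIntegral.continuous_primitive hqi 0
  have hRs_ge : ∀ s : ℝ, 0 ≤ s → μ0 * s ≤ R s := by
    intro s hs
    have := hRlow 0 s hs
    rw [hR0] at this
    simpa using this
  -- ψ in terms of R
  have hψR : ∀ a : ℝ, ψ a = ∫ s in Ioi a, βh s * exp (R a - R s) := by
    intro a
    rw [hψ a]
    apply setIntegral_congr_fun measurableSet_Ioi
    intro s _
    beta_reduce
    rw [show (intervalIntegral q a s volume) = R s - R a from (hRd a s).symm, neg_sub]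
  set g : ℝ → ℝ := fun s => βh s * exp (-R s) with hgdef
  have hgm : Measurable g := hβhm.mul (Real.continuous_exp.comp hRcont.neg).measurable
  have hg0 : ∀ s, 0 ≤ g s := fun s => mul_nonneg (hβh0 s) (exp_pos _).le
  have hBβh0 : 0 ≤ Bβh := le_trans (hβh0 0) (hβhB 0)
  have hgbound : ∀ s : ℝ, 0 ≤ s → g s ≤ Bβh * exp (-(μ0 * s)) := by
    intro s hs
    exact mul_le_mul (hβhB s) (exp_le_exp.2 (by linarith [hRs_ge s hs])) (exp_pos _).le hBβh0
  have hgi : IntegrableOn g (Ioi 0) := by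
    have hb : IntegrableOn (fun x : ℝ => exp (-(μ0 * x))) (Ioi 0) := by
      simpa [neg_mul] using exp_neg_integrableOn_Ioi 0 hμ0
    apply Integrable.mono' (hb.const_mul Bβh) hgm.aestronglyMeasurable.restrict
    filter_upwards [ae_restrict_mem measurableSet_Ioi] with s hs
    rw [Real.norm_eq_abs, abs_of_nonneg (hg0 s)]
    exact hgbound s (le_of_lt hs)
  have hψg : ∀ a : ℝ, ψ a = exp (R a) * ∫ s in Ioi a, g s := by
    intro a
    rw [hψR a, ← integral_const_mul]
    apply setIntegral_congr_fun measurableSet_Ioi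
    intro s _
    beta_reduce
    simp only [hgdef]
    rw [sub_eq_add_neg, Real.exp_add]
    ring
  have hψ0 : ∀ a : ℝ, 0 ≤ ψ a := by
    intro a
    rw [hψR a]
    exact setIntegral_nonneg measurableSet_Ioi fun s _ => mul_nonneg (hβh0 s) (exp_pos _).le
  set Cψ : ℝ := Bβh / μ0 with hCψdef
  have hψub : ∀ a : ℝ, 0 ≤ a → ψ a ≤ Cψ := by
    intro a ha
    rw [hψR a]
    have hexp1 : exp (μ0 * a) * exp (-(μ0 * a)) = 1 := by rw [← Real.exp_add]; simp
    have h1 : ∀ s ∈ Ioi a, βh s * exp (R a - R s) ≤ Bβh * exp (μ0 * a) * exp (-(μ0 * s)) := by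
      intro s hs
      have h2 : R a - R s ≤ μ0 * a - μ0 * s := by
        have := hRlow a s (le_of_lt hs); nlinarith
      calc βh s * exp (R a - R s) ≤ Bβh * exp (μ0 * a - μ0 * s) :=
            mul_le_mul (hβhB s) (exp_le_exp.2 h2) (exp_pos _).le hBβh0
        _ = Bβh * exp (μ0 * a) * exp (-(μ0 * s)) := by
            rw [mul_assoc, ← Real.exp_add]; ring_nf
    calc (∫ s in Ioi a, βh s * exp (R a - R s))
        ≤ ∫ s in Ioi a, Bβh * exp (μ0 * a) * exp (-(μ0 * s)) := by
          apply integral_mono_of_nonneg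
          · filter_upwards with s using mul_nonneg (hβh0 s) (exp_pos _).le
          · exact (Integrable.const_mul (by simpa [neg_mul] using exp_neg_integrableOn_Ioi a hμ0 : IntegrableOn (fun x : ℝ => exp (-(μ0 * x))) (Ioi a)) _)
          · filter_upwards [ae_restrict_mem measurableSet_Ioi] with s hs using h1 s hs
      _ = Bβh * exp (μ0 * a) * (exp (-(μ0 * a)) / μ0) := by
          rw [integral_const_mul, integral_exp_neg_mul_Ioi' hμ0]
      _ = Bβh * (exp (μ0 * a) * exp (-(μ0 * a))) / μ0 := by ring
      _ = Cψ := by rw [hexp1, hCψdef]; ring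
  -- continuous surrogate for ψ on (0,∞)
  have hgii : ∀ a b : ℝ, IntervalIntegrable g volume a b := by
    intro a b
    apply intInt_of_bdd_on hgm (C := Bβh * exp (-R (min a b))) a b
    intro x hx
    rw [abs_of_nonneg (hg0 x)]
    refine mul_le_mul (hβhB x) (exp_le_exp.2 ?_) (exp_pos _).le hBβh0
    have := hRmono (min a b) x hx.1
    linarith
  set Φ' : ℝ → ℝ := fun a => (∫ s in Ioi (0:ℝ), g s) - ∫ x in (0:ℝ)..a, g x with hΦ'def
  have hΦ'cont : Continuous Φ' :=
    continuous_const.sub (intervalIntegral.continuous_primitive hgii 0)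
  set ψ' : ℝ → ℝ := fun a => exp (R a) * Φ' a with hψ'def
  have hψ'cont : Continuous ψ' := (Real.continuous_exp.comp hRcont).mul hΦ'cont
  have hψψ' : ∀ a : ℝ, 0 < a → ψ a = ψ' a := by
    intro a ha
    have hsplit : (∫ s in Ioi (0:ℝ), g s) = (∫ s in Ioc 0 a, g s) + ∫ s in Ioi a, g s := by
      rw [← setIntegral_union (Set.Ioc_disjoint_Ioi le_rfl) measurableSet_Ioi
        (hgi.mono_set Set.Ioc_subset_Ioi_self) (hgi.mono_set (Set.Ioi_subset_Ioi ha.le)),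
        Set.Ioc_union_Ioi_eq_Ioi ha.le]
    have hΦ : Φ' a = ∫ s in Ioi a, g s := by
      simp only [hΦ'def]
      rw [intervalIntegral.integral_of_le ha.le, hsplit]
      ring
    rw [hψg a, hψ'def]
    simp only
    rw [hΦ]
  -- integrability with a ψ weight
  have hψmul : ∀ F : ℝ → ℝ, IntegrableOn F (Ioi 0) →
      IntegrableOn (fun a => ψ a * F a) (Ioi 0) := by
    intro F hF
    have h1 : IntegrableOn (fun a => ψ' a * F a) (Ioi 0) := by
      apply Integrable.mono' (hF.abs.const_mul Cψ)
        ((hψ'cont.aestronglyMeasurable.restrict).mul hF.aestronglyMeasurable)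
      filter_upwards [ae_restrict_mem measurableSet_Ioi] with a ha
      simp only [Pi.mul_apply]
      rw [Real.norm_eq_abs, abs_mul, ← hψψ' a ha, abs_of_nonneg (hψ0 a)]
      exact mul_le_mul_of_nonneg_right (hψub a ha.le) (abs_nonneg _)
    apply h1.congr
    filter_upwards [ae_restrict_mem measurableSet_Ioi] with a ha
    rw [hψψ' a ha]
  -- bounded multiplier integrability
  have hbmul : ∀ (c : ℝ → ℝ) (C : ℝ), Measurable c → (∀ x, 0 ≤ c x) → (∀ x, c x ≤ C) →
      ∀ F : ℝ → ℝ, IntegrableOn F (Ioi 0) → IntegrableOn (fun a => c a * F a) (Ioi 0) := by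
    intro c C hcm hc0 hcB F hF
    apply Integrable.mono' (hF.abs.const_mul C)
      ((hcm.aestronglyMeasurable.restrict).mul hF.aestronglyMeasurable)
    filter_upwards with a
    simp only [Pi.mul_apply]
    rw [Real.norm_eq_abs, abs_mul, abs_of_nonneg (hc0 a)]
    exact mul_le_mul_of_nonneg_right (hcB a) (abs_nonneg _)
  have hTβh : IntegrableOn (fun a => βh a * ih t a) (Ioi 0) :=
    hbmul βh Bβh hβhm hβh0 hβhB _ (hih_int t)
  have hqih : IntegrableOn (fun a => q a * ih t a) (Ioi 0) :=
    hbmul q Bq hqm hq0 hqB _ (hih_int t)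
  have hT2 : IntegrableOn (fun a => ψ a * (q a * ih t a)) (Ioi 0) := hψmul _ hqih
  have hT3 : IntegrableOn (fun a => ψ a * iha t a) (Ioi 0) := hψmul _ (hiha_int t)
  have hβvsh : IntegrableOn (fun a => βv a * Iv t * sh t a) (Ioi 0) := by
    have h := (hbmul βv Bβv hβvm hβv0 hβvB _ (hsh_int t)).const_mul (Iv t)
    apply h.congr
    filter_upwards with a using by ring
  have hT1 : IntegrableOn (fun a => ψ a * (βv a * Iv t * sh t a)) (Ioi 0) := hψmul _ hβvsh
  -- FTC in the age variable
  have hihFTC : ∀ a : ℝ, 0 ≤ a → ih t a = ∫ u in (0:ℝ)..a, iha t u := by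
    intro a ha
    have h1 : IntervalIntegrable (iha t) volume 0 a := by
      rw [intervalIntegrable_iff, uIoc_of_le ha]
      exact (hiha_int t).mono_set Set.Ioc_subset_Ioi_self
    have h2 := intervalIntegral.integral_eq_sub_of_hasDerivAt
      (f := fun α => ih t α) (f' := iha t) (fun x _ => hih_a t x) h1
    rw [h2]
    beta_reduce
    rw [hbc t]
    ring
  -- integration by parts on (0, s] via the triangle swap
  have hstep3 : ∀ s : ℝ, 0 < s →
      (∫ a in Ioc (0:ℝ) s, q a * exp (R a) * ih t a)
        = exp (R s) * ih t s - ∫ a in Ioc (0:ℝ) s, exp (R a) * iha t a := by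
    intro s hs
    have hw : Measurable (fun a => q a * exp (R a)) :=
      hqm.mul (Real.continuous_exp.comp hRcont).measurable
    have hw0 : ∀ x, 0 ≤ q x * exp (R x) := fun x => mul_nonneg (hq0 x) (exp_pos _).le
    have hwB : ∀ x ∈ Ioc (0:ℝ) s, q x * exp (R x) ≤ Bq * exp (R s) := by
      intro x hx
      exact mul_le_mul (hqB x) (exp_le_exp.2 (hRmono x s hx.2)) (exp_pos _).le hBq0
    have hv : IntegrableOn (iha t) (Ioc 0 s) := (hiha_int t).mono_set Set.Ioc_subset_Ioi_self
    have hswap := swap_triangle hs (fun a => q a * exp (R a)) (iha t) hw hw0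
      (Bq * exp (R s)) hwB hv
    have hL : (∫ a in Ioc (0:ℝ) s, (q a * exp (R a)) * (∫ u in Ioc 0 a, iha t u))
        = ∫ a in Ioc (0:ℝ) s, q a * exp (R a) * ih t a := by
      apply setIntegral_congr_fun measurableSet_Ioc
      intro a ha
      beta_reduce
      rw [← intervalIntegral.integral_of_le ha.1.le, ← hihFTC a ha.1.le]
    have hR1 : (∫ u in Ioc (0:ℝ) s, (∫ x in u..s, q x * exp (R x)) * iha t u)
        = ∫ u in Ioc (0:ℝ) s, (exp (R s) - exp (R u)) * iha t u := by
      apply setIntegral_congr_fun measurableSet_Ioc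
      intro u hu
      beta_reduce
      rw [core_ftc q hqm Bq hq0 hqB hu.2]
    have hi1 : IntegrableOn (fun u => exp (R u) * iha t u) (Ioc 0 s) := by
      apply Integrable.mono' (hv.abs.const_mul (exp (R s)))
        (((Real.continuous_exp.comp hRcont).aestronglyMeasurable.restrict).mul
          hv.aestronglyMeasurable)
      filter_upwards [ae_restrict_mem measurableSet_Ioc] with u hu
      simp only [Pi.mul_apply, Function.comp_apply]
      rw [Real.norm_eq_abs, abs_mul, abs_of_nonneg (exp_pos _).le]
      exact mul_le_mul_of_nonneg_right (exp_le_exp.2 (hRmono u s hu.2)) (abs_nonneg _)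
    have hR2 : (∫ u in Ioc (0:ℝ) s, (exp (R s) - exp (R u)) * iha t u)
        = exp (R s) * ih t s - ∫ u in Ioc (0:ℝ) s, exp (R u) * iha t u := by
      have hsub : (fun u => (exp (R s) - exp (R u)) * iha t u)
          = fun u => exp (R s) * iha t u - exp (R u) * iha t u := by funext u; ring
      rw [hsub, integral_sub (hv.const_mul (exp (R s))) hi1, integral_const_mul,
        hihFTC s hs.le, intervalIntegral.integral_of_le hs.le]
    rw [← hL, hswap, hR1, hR2]
  -- half-plane Fubini, twice
  have happ1 := swap_halfplane g (fun a => exp (R a) * iha t a) hgm hg0 hgi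
    (((Real.continuous_exp.comp hRcont).aestronglyMeasurable.restrict).mul
      (hiha_int t).aestronglyMeasurable)
    (by
      apply hT3.congr
      filter_upwards with a
      rw [hψg a]; ring)
  have happ2 := swap_halfplane g (fun a => q a * exp (R a) * ih t a) hgm hg0 hgi
    (((hqm.mul (Real.continuous_exp.comp hRcont).measurable).aestronglyMeasurable.restrict).mul
      (hih_int t).aestronglyMeasurable)
    (by
      apply hT2.congr
      filter_upwards with a
      rw [hψg a]; ring)
  have hgexp : ∀ s : ℝ, g s * exp (R s) = βh s := by
    intro s
    simp only [hgdef]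
    rw [mul_assoc, ← Real.exp_add]
    simp
  have hstep5 : (∫ s in Ioi (0:ℝ), g s * (∫ a in Ioc 0 s, q a * exp (R a) * ih t a))
      = (∫ a in Ioi (0:ℝ), βh a * ih t a)
        - ∫ s in Ioi (0:ℝ), g s * (∫ a in Ioc 0 s, exp (R a) * iha t a) := by
    have h1 : ∀ s ∈ Ioi (0:ℝ), g s * (∫ a in Ioc 0 s, q a * exp (R a) * ih t a)
        = βh s * ih t s - g s * (∫ a in Ioc 0 s, exp (R a) * iha t a) := by
      intro s hs
      rw [hstep3 s hs, mul_sub, ← mul_assoc, hgexp s]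
    rw [setIntegral_congr_fun measurableSet_Ioi h1, integral_sub hTβh happ1.2]
  have hKEY : (∫ a in Ioi (0:ℝ), ψ a * iha t a)
      = (∫ a in Ioi (0:ℝ), βh a * ih t a)
        - ∫ a in Ioi (0:ℝ), ψ a * (q a * ih t a) := by
    have e1 : (∫ a in Ioi (0:ℝ), ψ a * iha t a)
        = ∫ a in Ioi (0:ℝ), (∫ x in Ioi a, g x) * (exp (R a) * iha t a) := by
      apply setIntegral_congr_fun measurableSet_Ioi
      intro a _
      beta_reduce
      rw [hψg a]; ring
    have e2 : (∫ a in Ioi (0:ℝ), ψ a * (q a * ih t a))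
        = ∫ a in Ioi (0:ℝ), (∫ x in Ioi a, g x) * (q a * exp (R a) * ih t a) := by
      apply setIntegral_congr_fun measurableSet_Ioi
      intro a _
      beta_reduce
      rw [hψg a]; ring
    rw [e1, happ1.1, e2, happ2.1]
    linarith [hstep5]
  -- compute the derivative of the integral term
  set Y : ℝ := ∫ a in Ioi (0:ℝ), βv a * ψ a * sh t a with hYdef
  set Bint : ℝ := ∫ a in Ioi (0:ℝ), βh a * ih t a with hBintdef
  have hD1 : (∫ a in Ioi (0:ℝ), ψ a * iht t a) = Iv t * Y - Bint := by
    have hsplit : ∀ a : ℝ, ψ a * iht t a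
        = ψ a * (βv a * Iv t * sh t a) - ψ a * (q a * ih t a) - ψ a * iha t a := by
      intro a
      have h := hPDE_i t a
      have h2 : iht t a = βv a * Iv t * sh t a - q a * ih t a - iha t a := by
        simp only [hqdef]; linarith
      rw [h2]; ring
    calc (∫ a in Ioi (0:ℝ), ψ a * iht t a)
        = ∫ a in Ioi (0:ℝ), (ψ a * (βv a * Iv t * sh t a)
            - ψ a * (q a * ih t a) - ψ a * iha t a) := by
          apply setIntegral_congr_fun measurableSet_Ioi
          intro a _
          beta_reduce
          rw [hsplit a]
      _ = (∫ a in Ioi (0:ℝ), ψ a * (βv a * Iv t * sh t a))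
            - (∫ a in Ioi (0:ℝ), ψ a * (q a * ih t a))
            - ∫ a in Ioi (0:ℝ), ψ a * iha t a := by
          have hs1 := integral_sub (μ := volume.restrict (Ioi 0)) (hT1.sub hT2) hT3
          have hs2 := integral_sub (μ := volume.restrict (Ioi 0)) hT1 hT2
          simp only [Pi.sub_apply] at hs1
          rw [hs1, hs2]
      _ = Iv t * Y - Bint := by
          rw [hKEY]
          have h3 : (∫ a in Ioi (0:ℝ), ψ a * (βv a * Iv t * sh t a)) = Iv t * Y := by
            rw [hYdef, ← integral_const_mul]
            apply setIntegral_congr_fun measurableSet_Ioi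
            intro a _
            beta_reduce
            ring
          rw [h3]
          ring
  -- assemble the derivative of L0
  have hd1 := hdiff_int t
  rw [hD1] at hd1
  have hSvne : Sv t ≠ 0 := (hSv_pos t).ne'
  have hSv0ne : Sv0 ≠ 0 := hSv0pos.ne'
  have hdiv_ne : Sv t / Sv0 ≠ 0 := div_ne_zero hSvne hSv0ne
  have hd2 : HasDerivAt (fun τ => Sv τ / Sv0 - Real.log (Sv τ / Sv0) - 1)
      ((Λv - Sv t * Bint - μv * Sv t) / Sv0
        - ((Λv - Sv t * Bint - μv * Sv t) / Sv0) / (Sv t / Sv0)) t :=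
    (((hSv t).div_const Sv0).sub (((hSv t).div_const Sv0).log hdiv_ne)).sub_const 1
  have hd3 : HasDerivAt (fun τ => Iv τ / Sv0) ((Sv t * Bint - μv * Iv t) / Sv0) t :=
    (hIv t).div_const Sv0
  have htotal := (hd1.add hd2).add hd3
  have hfun : L0 = fun τ => (∫ a in Ioi (0:ℝ), ψ a * ih τ a)
      + (Sv τ / Sv0 - Real.log (Sv τ / Sv0) - 1) + Iv τ / Sv0 := funext hL0
  rw [hfun]
  refine htotal.congr_deriv ?_
  have hΛv : Λv = μv * Sv0 := by rw [hSv0def]; field_simp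
  rw [hΛv]
  field_simp
  ring
end

section
/- Under the hypotheses of the Lyapunov derivative identity, suppose additionally that R_0 ≤ 1 and that s_h(t,a) ≤ s_h^0(a) for all t, a ≥ 0. Then for every t > 0, d/dt L_0(t) ≤ (μ_v·I_v(t)/S_v^0)·(R_0² − 1) − (μ_v·S_v(t)/S_v^0)·(1 − S_v^0/S_v(t))² ≤ 0; that is, the Lyapunov functional L_0 is nonincreasing along the solution. -/
open MeasureTheory Real Set Filter intervalIntegral

namespace LyapAux

lemma bddII {f : ℝ → ℝ} (hf : Measurable f) {C : ℝ} {a b : ℝ}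
    (hC : ∀ x ∈ Set.uIoc a b, |f x| ≤ C) : IntervalIntegrable f volume a b := by
  rw [intervalIntegrable_iff]
  refine Integrable.mono' (g := fun _ => C) ?_ hf.aestronglyMeasurable.restrict ?_
  · exact integrableOn_const (by rw [Set.uIoc]; exact measure_Ioc_lt_top.ne)
  · exact (ae_restrict_iff' measurableSet_uIoc).2 (Filter.Eventually.of_forall hC)

variable {m : ℝ → ℝ} {μ0 Bm : ℝ}

lemma m_abs (hm0 : ∀ x, 0 ≤ m x) (hmB : ∀ x, m x ≤ Bm) (x : ℝ) : |m x| ≤ Bm := by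
  rw [abs_of_nonneg (hm0 x)]; exact hmB x

lemma m_II (hm : Measurable m) (hm0 : ∀ x, 0 ≤ m x) (hmB : ∀ x, m x ≤ Bm) (a b : ℝ) :
    IntervalIntegrable m volume a b :=
  bddII hm (fun x _ => m_abs hm0 hmB x)

/-- `M` primitive difference. -/
lemma M_sub (hm : Measurable m) (hm0 : ∀ x, 0 ≤ m x) (hmB : ∀ x, m x ≤ Bm) (a b : ℝ) :
    (∫ x in (0:ℝ)..b, m x) - (∫ x in (0:ℝ)..a, m x) = ∫ x in a..b, m x :=
  integral_interval_sub_left (m_II hm hm0 hmB 0 b) (m_II hm hm0 hmB 0 a)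

lemma M_mono (hm : Measurable m) (hm0 : ∀ x, 0 ≤ m x) (hmB : ∀ x, m x ≤ Bm)
    {a b : ℝ} (hab : a ≤ b) : (∫ x in (0:ℝ)..a, m x) ≤ ∫ x in (0:ℝ)..b, m x := by
  have h := M_sub hm hm0 hmB a b
  have h2 : (0:ℝ) ≤ ∫ x in a..b, m x := intervalIntegral.integral_nonneg hab fun u _ => hm0 u
  linarith

lemma M_sub_le (hm : Measurable m) (hm0 : ∀ x, 0 ≤ m x) (hmB : ∀ x, m x ≤ Bm)
    {a b : ℝ} (hab : a ≤ b) :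
    (∫ x in (0:ℝ)..b, m x) - (∫ x in (0:ℝ)..a, m x) ≤ Bm * (b - a) := by
  rw [M_sub hm hm0 hmB]
  calc (∫ x in a..b, m x) ≤ ∫ _x in a..b, Bm :=
        intervalIntegral.integral_mono_on hab (m_II hm hm0 hmB a b)
          intervalIntegrable_const (fun x _ => hmB x)
    _ = Bm * (b - a) := by simp [intervalIntegral.integral_const, mul_comm]

lemma M_sub_ge (hm : Measurable m) (hmμ : ∀ x, μ0 ≤ m x) (hm0 : ∀ x, 0 ≤ m x)
    (hmB : ∀ x, m x ≤ Bm) {a b : ℝ} (hab : a ≤ b) :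
    μ0 * (b - a) ≤ (∫ x in (0:ℝ)..b, m x) - (∫ x in (0:ℝ)..a, m x) := by
  rw [M_sub hm hm0 hmB]
  calc μ0 * (b - a) = ∫ _x in a..b, μ0 := by simp [intervalIntegral.integral_const, mul_comm]
    _ ≤ ∫ x in a..b, m x :=
        intervalIntegral.integral_mono_on hab intervalIntegrable_const
          (m_II hm hm0 hmB a b) (fun x _ => hmμ x)

lemma M_cont (hm : Measurable m) (hm0 : ∀ x, 0 ≤ m x) (hmB : ∀ x, m x ≤ Bm) :
    Continuous (fun a => ∫ x in (0:ℝ)..a, m x) :=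
  intervalIntegral.continuous_primitive (fun a b => m_II hm hm0 hmB a b) 0

end LyapAux

namespace LyapAux
open scoped BigOperators

lemma meM_II (hm : Measurable m) (hm0 : ∀ x, 0 ≤ m x) (hmB : ∀ x, m x ≤ Bm) (a b : ℝ) :
    IntervalIntegrable (fun x => m x * exp (∫ y in (0:ℝ)..x, m y)) volume a b := by
  refine bddII (hm.mul ((M_cont hm hm0 hmB).rexp.measurable)) (C := Bm * exp (∫ y in (0:ℝ)..(a ⊔ b), m y)) ?_
  intro x hx
  have hx2 : x ≤ a ⊔ b := hx.2
  have h1 : exp (∫ y in (0:ℝ)..x, m y) ≤ exp (∫ y in (0:ℝ)..(a ⊔ b), m y) :=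
    exp_le_exp.2 (M_mono hm hm0 hmB hx2)
  show |m x * exp (∫ y in (0:ℝ)..x, m y)| ≤ _
  rw [abs_mul, abs_of_nonneg (hm0 x), abs_of_nonneg (exp_nonneg _)]
  exact mul_le_mul (hmB x) h1 (exp_nonneg _) (le_trans (hm0 x) (hmB x))

/-- The fundamental theorem of calculus for `exp` of a primitive of a bounded
measurable function, proved by a Riemann-sum style squeeze. -/
lemma ftc_exp (hm : Measurable m) (hm0 : ∀ x, 0 ≤ m x) (hmB : ∀ x, m x ≤ Bm)
    {u s : ℝ} (hus : u ≤ s) :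
    ∫ a in u..s, m a * exp (∫ y in (0:ℝ)..a, m y)
      = exp (∫ y in (0:ℝ)..s, m y) - exp (∫ y in (0:ℝ)..u, m y) := by
  set M : ℝ → ℝ := fun a => ∫ y in (0:ℝ)..a, m y with hM
  have hBm0 : 0 ≤ Bm := le_trans (hm0 0) (hmB 0)
  -- per-interval estimate
  have key : ∀ a b : ℝ, a ≤ b → b ≤ s →
      |(∫ x in a..b, m x * exp (M x)) - (exp (M b) - exp (M a))|
        ≤ exp (M s) * (Bm * (b - a))^2 := by
    intro a b hab hbs
    set Δ : ℝ := M b - M a with hΔ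
    have hΔ0 : 0 ≤ Δ := sub_nonneg.2 (M_mono hm hm0 hmB hab)
    have hΔle : Δ ≤ Bm * (b - a) := M_sub_le hm hm0 hmB hab
    have hMbs : M b ≤ M s := M_mono hm hm0 hmB hbs
    -- integral bounds
    have hIl : exp (M a) * Δ ≤ ∫ x in a..b, m x * exp (M x) := by
      have : (∫ x in a..b, m x * exp (M a)) ≤ ∫ x in a..b, m x * exp (M x) := by
        refine intervalIntegral.integral_mono_on hab ?_ (meM_II hm hm0 hmB a b) ?_
        · exact (m_II hm hm0 hmB a b).mul_const _
        · intro x hx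
          exact mul_le_mul_of_nonneg_left (exp_le_exp.2 (M_mono hm hm0 hmB hx.1)) (hm0 x)
      calc exp (M a) * Δ = (∫ x in a..b, m x) * exp (M a) := by
            rw [← M_sub hm hm0 hmB]; ring
        _ = ∫ x in a..b, m x * exp (M a) := (intervalIntegral.integral_mul_const _ _).symm
        _ ≤ _ := this
    have hIu : (∫ x in a..b, m x * exp (M x)) ≤ exp (M b) * Δ := by
      have : (∫ x in a..b, m x * exp (M x)) ≤ ∫ x in a..b, m x * exp (M b) := by
        refine intervalIntegral.integral_mono_on hab (meM_II hm hm0 hmB a b) ?_ ?_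
        · exact (m_II hm hm0 hmB a b).mul_const _
        · intro x hx
          exact mul_le_mul_of_nonneg_left (exp_le_exp.2 (M_mono hm hm0 hmB hx.2)) (hm0 x)
      calc (∫ x in a..b, m x * exp (M x)) ≤ ∫ x in a..b, m x * exp (M b) := this
        _ = (∫ x in a..b, m x) * exp (M b) := intervalIntegral.integral_mul_const _ _
        _ = exp (M b) * Δ := by rw [← M_sub hm hm0 hmB]; ring
    -- exponential difference bounds
    have hMb : M b = M a + Δ := by ring
    have hEl : exp (M a) * Δ ≤ exp (M b) - exp (M a) := by
      rw [hMb, exp_add]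
      have := Real.add_one_le_exp Δ
      nlinarith [exp_pos (M a)]
    have hEu : exp (M b) - exp (M a) ≤ exp (M b) * Δ := by
      have h2 : 1 - Δ ≤ exp (-Δ) := by linarith [Real.add_one_le_exp (-Δ)]
      have h3 : exp (M a) = exp (M b) * exp (-Δ) := by rw [hMb, ← exp_add]; ring_nf
      nlinarith [exp_pos (M b)]
    have hdiff : |(∫ x in a..b, m x * exp (M x)) - (exp (M b) - exp (M a))|
        ≤ (exp (M b) - exp (M a)) * Δ := by
      rw [abs_le]
      constructor <;> nlinarith
    calc |(∫ x in a..b, m x * exp (M x)) - (exp (M b) - exp (M a))|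
        ≤ (exp (M b) - exp (M a)) * Δ := hdiff
      _ ≤ (exp (M b) * Δ) * Δ := by nlinarith
      _ ≤ exp (M s) * (Bm * (b - a))^2 := by
          have h1 : Δ * Δ ≤ (Bm * (b - a)) * (Bm * (b - a)) :=
            mul_le_mul hΔle hΔle hΔ0 (le_trans hΔ0 hΔle)
          nlinarith [mul_le_mul (exp_le_exp.2 hMbs) h1 (mul_nonneg hΔ0 hΔ0) (exp_pos (M s)).le]
  -- partition squeeze
  have main : ∀ n : ℕ, 0 < n →
      |(∫ a in u..s, m a * exp (M a)) - (exp (M s) - exp (M u))|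
        ≤ exp (M s) * Bm^2 * (s - u)^2 / n := by
    intro n hn
    have hn' : (0:ℝ) < n := by exact_mod_cast hn
    set c : ℕ → ℝ := fun i => u + i * ((s - u) / n) with hc
    have hstep : ∀ i : ℕ, c (i+1) - c i = (s - u) / n := by
      intro i; simp only [hc]; push_cast; ring
    have hstep0 : (0:ℝ) ≤ (s - u) / n := div_nonneg (by linarith) hn'.le
    have hcmono : ∀ i j : ℕ, i ≤ j → c i ≤ c j := by
      intro i j hij
      simp only [hc]
      have : (i:ℝ) ≤ j := by exact_mod_cast hij
      nlinarith
    have hc0 : c 0 = u := by simp [hc]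
    have hcn : c n = s := by simp only [hc]; rw [mul_div_assoc', mul_div_cancel_left₀ _ hn'.ne']; ring
    have hcs : ∀ i : ℕ, i ≤ n → c i ≤ s := by
      intro i hi; rw [← hcn]; exact hcmono _ _ hi
    have hsum : ∑ i ∈ Finset.range n, ∫ x in c i..c (i+1), m x * exp (M x)
        = ∫ a in u..s, m a * exp (M a) := by
      rw [intervalIntegral.sum_integral_adjacent_intervals
        (fun k _ => meM_II hm hm0 hmB (c k) (c (k+1)))]
      rw [hc0, hcn]
    have htel : ∑ i ∈ Finset.range n, (exp (M (c (i+1))) - exp (M (c i)))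
        = exp (M s) - exp (M u) := by
      rw [Finset.sum_range_sub (fun i => exp (M (c i))), hc0, hcn]
    rw [← hsum, ← htel, ← Finset.sum_sub_distrib]
    calc |∑ i ∈ Finset.range n, ((∫ x in c i..c (i+1), m x * exp (M x))
            - (exp (M (c (i+1))) - exp (M (c i))))|
        ≤ ∑ i ∈ Finset.range n, |(∫ x in c i..c (i+1), m x * exp (M x))
            - (exp (M (c (i+1))) - exp (M (c i)))| := Finset.abs_sum_le_sum_abs _ _
      _ ≤ ∑ _i ∈ Finset.range n, exp (M s) * (Bm * ((s-u)/n))^2 := by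
          refine Finset.sum_le_sum fun i hi => ?_
          have hi' : i + 1 ≤ n := Nat.succ_le_of_lt (Finset.mem_range.1 hi)
          have := key (c i) (c (i+1)) (by rw [← sub_nonneg, hstep i]; exact hstep0)
            (hcs _ hi')
          rwa [hstep i] at this
      _ = n * (exp (M s) * (Bm * ((s-u)/n))^2) := by
          rw [Finset.sum_const, Finset.card_range]; simp [nsmul_eq_mul]
      _ = exp (M s) * Bm^2 * (s - u)^2 / n := by field_simp
  -- conclude
  have habs : |(∫ a in u..s, m a * exp (M a)) - (exp (M s) - exp (M u))| = 0 := by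
    by_contra h
    have hpos : 0 < |(∫ a in u..s, m a * exp (M a)) - (exp (M s) - exp (M u))| :=
      lt_of_le_of_ne (abs_nonneg _) (Ne.symm h)
    set X := |(∫ a in u..s, m a * exp (M a)) - (exp (M s) - exp (M u))| with hX
    set C := exp (M s) * Bm^2 * (s - u)^2 with hC
    have hC0 : 0 ≤ C := by positivity
    obtain ⟨n, hnn⟩ := exists_nat_gt (C / X)
    have hn0 : 0 < n := by
      by_contra hn
      push_neg at hn
      interval_cases n
      · simp at hnn
        nlinarith [div_nonneg hC0 hpos.le]
    have h1 : X ≤ C / n := main n hn0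
    have hn' : (0:ℝ) < n := by exact_mod_cast hn0
    rw [div_lt_iff₀ hpos] at hnn
    rw [le_div_iff₀ hn'] at h1
    nlinarith
  have := abs_eq_zero.1 habs
  linarith [sub_eq_zero.1 this]

end LyapAux

namespace LyapAux

lemma integrableOn_mul_of_bound {f g : ℝ → ℝ} {s : Set ℝ} (hs : MeasurableSet s)
    (hg : IntegrableOn g s) (hf : AEStronglyMeasurable f (volume.restrict s))
    {C : ℝ} (hC : ∀ x ∈ s, |f x| ≤ C) : IntegrableOn (fun x => f x * g x) s := by
  refine Integrable.mono' (hg.norm.const_mul C) (hf.mul hg.1) ?_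
  refine (ae_restrict_iff' hs).2 (Filter.Eventually.of_forall fun x hx => ?_)
  rw [norm_mul]
  exact mul_le_mul_of_nonneg_right (hC x hx) (norm_nonneg _)

lemma integral_Ioi_shift (f : ℝ → ℝ) (c : ℝ) :
    ∫ x in Ioi c, f x = ∫ x in Ioi (0:ℝ), f (c + x) := by
  rw [← MeasureTheory.integral_indicator measurableSet_Ioi,
    ← MeasureTheory.integral_indicator measurableSet_Ioi]
  rw [← MeasureTheory.integral_add_left_eq_self (fun x => (Ioi c).indicator f x) c]
  congr 1
  funext x
  by_cases hx : 0 < x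
  · rw [indicator_of_mem (by simpa using hx), indicator_of_mem (by simpa using hx)]
  · rw [indicator_of_notMem (by simpa using hx), indicator_of_notMem (by simpa using hx)]

lemma expShift_intOn {k : ℝ} (hk : 0 < k) (c : ℝ) :
    IntegrableOn (fun x => exp (-(k * (x - c)))) (Ioi c) := by
  have h : (fun x : ℝ => exp (-(k * (x - c)))) = fun x => exp (k * c) * exp (-k * x) := by
    funext x; rw [← exp_add]; ring_nf
  rw [h]
  exact (exp_neg_integrableOn_Ioi c hk).const_mul _

lemma expShift_integral {k : ℝ} (hk : 0 < k) (c : ℝ) :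
    ∫ x in Ioi c, exp (-(k * (x - c))) = 1 / k := by
  rw [integral_Ioi_shift]
  simp only [add_sub_cancel_left]
  have hderiv : ∀ x ∈ Ici (0:ℝ), HasDerivAt (fun y => -exp (-(k * y)) / k) (exp (-(k * x))) x := by
    intro x _
    have h1 : HasDerivAt (fun y : ℝ => -(k * y)) (-k) x := by
      simpa using ((hasDerivAt_id x).const_mul k).fun_neg
    have h2 := (h1.exp.fun_neg).div_const k
    rw [mul_neg, neg_neg, mul_div_assoc, div_self hk.ne', mul_one] at h2
    exact h2
  have hint : IntegrableOn (fun x => exp (-(k * x))) (Ioi (0:ℝ)) := by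
    have := exp_neg_integrableOn_Ioi (0:ℝ) hk
    simpa [neg_mul] using this
  have htend : Tendsto (fun y => -exp (-(k * y)) / k) atTop (nhds 0) := by
    have h1 : Tendsto (fun y : ℝ => -(k * y)) atTop atBot := by
      rw [tendsto_neg_atBot_iff]
      exact Tendsto.const_mul_atTop hk tendsto_id
    have h2 : Tendsto (fun y : ℝ => exp (-(k * y))) atTop (nhds 0) :=
      Real.tendsto_exp_atBot.comp h1
    have := (h2.neg).div_const k
    simpa using this
  rw [integral_Ioi_of_hasDerivAt_of_tendsto' hderiv hint htend]
  simp [div_eq_mul_inv]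

end LyapAux

namespace LyapAux

variable {βh : ℝ → ℝ} {Bβh : ℝ}

lemma psi_integrand_intOn (hμ0 : 0 < μ0) (hm : Measurable m) (hmμ : ∀ x, μ0 ≤ m x)
    (hmB : ∀ x, m x ≤ Bm) (hβh : Measurable βh) (hβh0 : ∀ x, 0 ≤ βh x)
    (hβhB : ∀ x, βh x ≤ Bβh) (a : ℝ) :
    IntegrableOn (fun s => βh s * exp ((∫ y in (0:ℝ)..a, m y) - ∫ y in (0:ℝ)..s, m y))
      (Ioi a) := by
  have hm0 : ∀ x, 0 ≤ m x := fun x => le_trans hμ0.le (hmμ x)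
  refine Integrable.mono' ((expShift_intOn hμ0 a).const_mul Bβh)
    ((hβh.mul ((continuous_const.sub (M_cont hm hm0 hmB)).rexp.measurable)).aestronglyMeasurable.restrict)
    ((ae_restrict_iff' measurableSet_Ioi).2 (Filter.Eventually.of_forall fun s hs => ?_))
  have hsa : a ≤ s := le_of_lt hs
  have h1 := M_sub_ge hm hmμ hm0 hmB hsa
  have h2 : exp ((∫ y in (0:ℝ)..a, m y) - ∫ y in (0:ℝ)..s, m y) ≤ exp (-(μ0 * (s - a))) :=
    exp_le_exp.2 (by linarith)
  rw [norm_mul, norm_of_nonneg (hβh0 s), norm_of_nonneg (exp_nonneg _)]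
  exact mul_le_mul (hβhB s) h2 (exp_nonneg _) (le_trans (hβh0 s) (hβhB s))

lemma psi_props (hμ0 : 0 < μ0) (hm : Measurable m) (hmμ : ∀ x, μ0 ≤ m x)
    (hmB : ∀ x, m x ≤ Bm) (hβh : Measurable βh) (hβh0 : ∀ x, 0 ≤ βh x)
    (hβhB : ∀ x, βh x ≤ Bβh) (ψ : ℝ → ℝ)
    (hψ : ∀ a, ψ a = ∫ s in Ioi a,
      βh s * exp ((∫ y in (0:ℝ)..a, m y) - ∫ y in (0:ℝ)..s, m y)) :
    Measurable ψ ∧ (∀ a, 0 ≤ ψ a) ∧ ∀ a, ψ a ≤ Bβh / μ0 := by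
  have hm0 : ∀ x, 0 ≤ m x := fun x => le_trans hμ0.le (hmμ x)
  set M : ℝ → ℝ := fun a => ∫ y in (0:ℝ)..a, m y with hM
  set g : ℝ → ℝ := fun s => βh s * exp (-(M s)) with hg
  have hfact : ∀ a s : ℝ, βh s * exp (M a - M s) = exp (M a) * g s := by
    intro a s
    rw [hg, sub_eq_add_neg, exp_add]
    ring
  have hg_int : ∀ a : ℝ, IntegrableOn g (Ioi a) := by
    intro a
    have h : IntegrableOn
        (fun s => exp (-(M a)) * (βh s * exp ((∫ y in (0:ℝ)..a, m y) - ∫ y in (0:ℝ)..s, m y)))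
        (Ioi a) :=
      (psi_integrand_intOn hμ0 hm hmμ hmB hβh hβh0 hβhB a).const_mul (exp (-(M a)))
    refine h.congr_fun (fun s _ => ?_) measurableSet_Ioi
    show exp (-(M a)) * (βh s * exp (M a - M s)) = g s
    rw [hfact a s, ← mul_assoc, ← exp_add]
    simp
  have hg0 : ∀ s, 0 ≤ g s := fun s => mul_nonneg (hβh0 s) (exp_nonneg _)
  -- ψ a = exp (M a) * ∫ g over Ioi a
  have hrepr : ∀ a, ψ a = exp (M a) * ∫ s in Ioi a, g s := by
    intro a
    rw [hψ a, ← MeasureTheory.integral_const_mul]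
    exact setIntegral_congr_fun measurableSet_Ioi fun s _ => hfact a s
  have hGanti : Antitone (fun a => ∫ s in Ioi a, g s) := by
    intro a b hab
    exact setIntegral_mono_set (hg_int a) (Filter.Eventually.of_forall hg0)
      (HasSubset.Subset.eventuallyLE (Ioi_subset_Ioi hab))
  have hmeas : Measurable ψ := by
    have h1 : Measurable fun a => exp (M a) * ∫ s in Ioi a, g s :=
      ((M_cont hm hm0 hmB).rexp.measurable).mul hGanti.measurable
    have h2 : ψ = fun a => exp (M a) * ∫ s in Ioi a, g s := funext hrepr
    rw [h2]; exact h1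
  refine ⟨hmeas, fun a => ?_, fun a => ?_⟩
  · rw [hψ a]
    exact setIntegral_nonneg measurableSet_Ioi fun s _ =>
      mul_nonneg (hβh0 s) (exp_nonneg _)
  · rw [hψ a]
    have hle : (∫ s in Ioi a, βh s * exp (M a - M s))
        ≤ ∫ s in Ioi a, Bβh * exp (-(μ0 * (s - a))) := by
      refine setIntegral_mono_on (psi_integrand_intOn hμ0 hm hmμ hmB hβh hβh0 hβhB a)
        ((expShift_intOn hμ0 a).const_mul Bβh) measurableSet_Ioi fun s hs => ?_
      have h1 := M_sub_ge hm hmμ hm0 hmB (le_of_lt hs)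
      have h2 : exp (M a - M s) ≤ exp (-(μ0 * (s - a))) := exp_le_exp.2 (by linarith)
      exact mul_le_mul (hβhB s) h2 (exp_nonneg _) (le_trans (hβh0 s) (hβhB s))
    calc (∫ s in Ioi a, βh s * exp (M a - M s))
        ≤ ∫ s in Ioi a, Bβh * exp (-(μ0 * (s - a))) := hle
      _ = Bβh * (1 / μ0) := by rw [MeasureTheory.integral_const_mul, expShift_integral hμ0]
      _ = Bβh / μ0 := by ring

end LyapAux

namespace LyapAux

lemma stepA (hμ0 : 0 < μ0) (hm : Measurable m) (hmμ : ∀ x, μ0 ≤ m x)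
    (hmB : ∀ x, m x ≤ Bm) {v u : ℝ → ℝ} (hv : Measurable v)
    (hvint : IntegrableOn v (Ioi 0)) (hucont : Continuous u)
    (huftc : ∀ a, 0 ≤ a → u a = ∫ w in Ioc (0:ℝ) a, v w)
    {s : ℝ} (hs : 0 < s) :
    ∫ a in Ioc (0:ℝ) s, exp (∫ y in (0:ℝ)..a, m y) * (m a * u a + v a)
      = exp (∫ y in (0:ℝ)..s, m y) * u s := by
  have hm0 : ∀ x, 0 ≤ m x := fun x => le_trans hμ0.le (hmμ x)
  have hBm0 : 0 ≤ Bm := le_trans (hm0 0) (hmB 0)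
  set M : ℝ → ℝ := fun a => ∫ y in (0:ℝ)..a, m y with hM
  have hMcont : Continuous M := M_cont hm hm0 hmB
  set f : ℝ → ℝ := fun a => m a * exp (M a) with hf
  have hfmeas : Measurable f := hm.mul (hMcont.rexp.measurable)
  have hfbd : ∀ a ∈ Ioc (0:ℝ) s, |f a| ≤ Bm * exp (M s) := by
    intro a ha
    rw [abs_mul, abs_of_nonneg (hm0 a), abs_of_nonneg (exp_nonneg _)]
    exact mul_le_mul (hmB a) (exp_le_exp.2 (M_mono hm hm0 hmB ha.2)) (exp_nonneg _) hBm0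
  set μs := volume.restrict (Ioc (0:ℝ) s) with hμs
  haveI : IsFiniteMeasure μs :=
    ⟨by rw [hμs, Measure.restrict_apply_univ]; exact measure_Ioc_lt_top⟩
  have hvint' : IntegrableOn v (Ioc (0:ℝ) s) := hvint.mono_set Ioc_subset_Ioi_self
  -- the product kernel
  set Fp : ℝ × ℝ → ℝ := fun p => ({p : ℝ × ℝ | p.2 ≤ p.1}.indicator
    (fun p => f p.1 * v p.2)) p with hFp
  have hFpmeas : Measurable Fp :=
    (((hfmeas.comp measurable_fst).mul (hv.comp measurable_snd)).indicator
      (measurableSet_le measurable_snd measurable_fst))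
  have hFpint : Integrable Fp (μs.prod μs) := by
    refine Integrable.mono' (g := fun p => (Bm * exp (M s)) * |v p.2|) ?_
      hFpmeas.aestronglyMeasurable ?_
    · refine (integrable_prod_iff
        ((measurable_const.mul ((hv.comp measurable_snd).abs)).aestronglyMeasurable)).2
        ⟨?_, ?_⟩
      · refine Filter.Eventually.of_forall fun a => ?_
        have := (hvint'.norm.const_mul (Bm * exp (M s)))
        simpa [Real.norm_eq_abs] using this
      · exact integrable_const (∫ w, ‖(Bm * exp (M s)) * |v w|‖ ∂μs)
    · rw [hμs, Measure.prod_restrict]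
      refine (ae_restrict_iff' (measurableSet_Ioc.prod measurableSet_Ioc)).2
        (Filter.Eventually.of_forall fun p hp => ?_)
      by_cases h : p.2 ≤ p.1
      · simp only [hFp, Set.indicator_apply, mem_setOf_eq, if_pos h, norm_mul, Real.norm_eq_abs]
        exact mul_le_mul_of_nonneg_right (hfbd p.1 hp.1) (abs_nonneg _)
      · simp only [hFp, Set.indicator_apply, mem_setOf_eq, if_neg h, norm_zero]
        positivity
  -- inner integral identities
  have hinner1 : ∀ a ∈ Ioc (0:ℝ) s, (∫ w, Fp (a, w) ∂μs) = f a * u a := by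
    intro a ha
    have h1 : (fun w => Fp (a, w)) = (Iic a).indicator (fun w => f a * v w) := by
      funext w
      rw [hFp]
      simp only [Set.indicator_apply, mem_setOf_eq, mem_Iic]
    rw [h1, hμs, MeasureTheory.integral_indicator measurableSet_Iic,
      Measure.restrict_restrict measurableSet_Iic]
    have h2 : Iic a ∩ Ioc 0 s = Ioc 0 a := by
      ext w
      simp only [mem_inter_iff, mem_Iic, mem_Ioc]
      exact ⟨fun ⟨hwa, hw0, _⟩ => ⟨hw0, hwa⟩, fun ⟨hw0, hwa⟩ => ⟨hwa, hw0, le_trans hwa ha.2⟩⟩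
    rw [h2, MeasureTheory.integral_const_mul, ← huftc a ha.1.le]
  have hinner2 : ∀ w ∈ Ioc (0:ℝ) s, (∫ a, Fp (a, w) ∂μs)
      = v w * (exp (M s) - exp (M w)) := by
    intro w hw
    have h1 : (fun a => Fp (a, w)) = (Ici w).indicator (fun a => f a * v w) := by
      funext a
      rw [hFp]
      simp only [Set.indicator_apply, mem_setOf_eq, mem_Ici]
    rw [h1, hμs, MeasureTheory.integral_indicator measurableSet_Ici,
      Measure.restrict_restrict measurableSet_Ici]
    have h2 : Ici w ∩ Ioc 0 s = Icc w s := by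
      ext a
      simp only [mem_inter_iff, mem_Ici, mem_Ioc, mem_Icc]
      exact ⟨fun ⟨hwa, _, has⟩ => ⟨hwa, has⟩,
        fun ⟨hwa, has⟩ => ⟨hwa, lt_of_lt_of_le hw.1 hwa, has⟩⟩
    rw [h2, MeasureTheory.integral_Icc_eq_integral_Ioc]
    have h3 : ∫ a in Ioc w s, f a * v w = (∫ a in Ioc w s, f a) * v w := by
      have := _root_.integral_smul_const (μ := volume.restrict (Ioc w s)) f (v w)
      simpa only [smul_eq_mul] using this
    rw [h3, ← intervalIntegral.integral_of_le hw.2, hf]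
    rw [ftc_exp hm hm0 hmB hw.2]
    ring
  -- assemble
  have hint2 : IntegrableOn (fun a => exp (M a) * v a) (Ioc (0:ℝ) s) := by
    refine integrableOn_mul_of_bound measurableSet_Ioc hvint'
      ((hMcont.rexp.measurable).aestronglyMeasurable.restrict) (C := exp (M s)) ?_
    intro x hx
    rw [abs_of_nonneg (exp_nonneg _)]
    exact exp_le_exp.2 (M_mono hm hm0 hmB hx.2)
  have hint1 : IntegrableOn (fun a => f a * u a) (Ioc (0:ℝ) s) := by
    refine integrableOn_mul_of_bound measurableSet_Ioc ?_
      (hfmeas.aestronglyMeasurable.restrict) (C := Bm * exp (M s)) hfbd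
    exact (hucont.integrableOn_Icc (a := 0) (b := s)).mono_set Ioc_subset_Icc_self
  have hsplit : ∫ a in Ioc (0:ℝ) s, exp (M a) * (m a * u a + v a)
      = (∫ a in Ioc (0:ℝ) s, f a * u a) + ∫ a in Ioc (0:ℝ) s, exp (M a) * v a := by
    rw [← integral_add hint1 hint2]
    exact setIntegral_congr_fun measurableSet_Ioc fun a _ => by rw [hf]; ring
  have hT1 : (∫ a in Ioc (0:ℝ) s, f a * u a)
      = ∫ w in Ioc (0:ℝ) s, v w * (exp (M s) - exp (M w)) := by
    have hswap := MeasureTheory.integral_integral_swap (f := fun a w => Fp (a, w))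
      (μ := μs) (ν := μs) (by exact hFpint)
    calc (∫ a in Ioc (0:ℝ) s, f a * u a)
        = ∫ a, (∫ w, Fp (a, w) ∂μs) ∂μs :=
          (setIntegral_congr_fun measurableSet_Ioc fun a ha => (hinner1 a ha)).symm
      _ = ∫ w, (∫ a, Fp (a, w) ∂μs) ∂μs := hswap
      _ = ∫ w in Ioc (0:ℝ) s, v w * (exp (M s) - exp (M w)) :=
          setIntegral_congr_fun measurableSet_Ioc fun w hw => hinner2 w hw
  have hintT1 : IntegrableOn (fun w => v w * (exp (M s) - exp (M w))) (Ioc (0:ℝ) s) := by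
    have h := integrableOn_mul_of_bound (f := fun w => exp (M s) - exp (M w))
      (g := v) measurableSet_Ioc hvint'
      (((continuous_const.sub hMcont.rexp).measurable).aestronglyMeasurable.restrict)
      (C := exp (M s)) ?_
    · exact h.congr_fun (fun w _ => mul_comm _ _) measurableSet_Ioc
    · intro x hx
      have hx2 : exp (M x) ≤ exp (M s) := exp_le_exp.2 (M_mono hm hm0 hmB hx.2)
      show |exp (M s) - exp (M x)| ≤ exp (M s)
      rw [abs_of_nonneg (by linarith)]
      linarith [exp_nonneg (M x)]
  rw [hsplit, hT1]
  have hcomb : (∫ w in Ioc (0:ℝ) s, v w * (exp (M s) - exp (M w)))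
      + (∫ w in Ioc (0:ℝ) s, exp (M w) * v w)
      = ∫ w in Ioc (0:ℝ) s, exp (M s) * v w := by
    rw [← integral_add hintT1 hint2]
    exact setIntegral_congr_fun measurableSet_Ioc fun w _ => by ring
  rw [hcomb, MeasureTheory.integral_const_mul, ← huftc s hs.le]

end LyapAux

namespace LyapAux

lemma key_identity (hμ0 : 0 < μ0) (hm : Measurable m) (hmμ : ∀ x, μ0 ≤ m x)
    (hmB : ∀ x, m x ≤ Bm) (hβh : Measurable βh) (hβh0 : ∀ x, 0 ≤ βh x)
    (hβhB : ∀ x, βh x ≤ Bβh) {u u' : ℝ → ℝ}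
    (hu : ∀ a, HasDerivAt u (u' a) a) (hu0 : u 0 = 0)
    (huint : IntegrableOn u (Ioi 0)) (hu'int : IntegrableOn u' (Ioi 0))
    (ψ : ℝ → ℝ)
    (hψ : ∀ a, ψ a = ∫ s in Ioi a,
      βh s * exp ((∫ y in (0:ℝ)..a, m y) - ∫ y in (0:ℝ)..s, m y)) :
    ∫ a in Ioi (0:ℝ), ψ a * (m a * u a + u' a) = ∫ a in Ioi (0:ℝ), βh a * u a := by
  have hm0 : ∀ x, 0 ≤ m x := fun x => le_trans hμ0.le (hmμ x)
  have hBm0 : 0 ≤ Bm := le_trans (hm0 0) (hmB 0)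
  have hBβh0 : 0 ≤ Bβh := le_trans (hβh0 0) (hβhB 0)
  set M : ℝ → ℝ := fun a => ∫ y in (0:ℝ)..a, m y with hM
  have hMcont : Continuous M := M_cont hm hm0 hmB
  have hucont : Continuous u := by
    rw [continuous_iff_continuousAt]; exact fun a => (hu a).continuousAt
  obtain ⟨hψmeas, hψ0, hψle⟩ := psi_props hμ0 hm hmμ hmB hβh hβh0 hβhB ψ hψ
  -- measurable representative of u'
  have hsm := hu'int.1
  set v : ℝ → ℝ := hsm.mk u' with hv
  have hvsm : StronglyMeasurable v := hsm.stronglyMeasurable_mk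
  have hvmeas : Measurable v := hvsm.measurable
  have hvae : u' =ᵐ[volume.restrict (Ioi 0)] v := hsm.ae_eq_mk
  have hvint : IntegrableOn v (Ioi 0) := hu'int.congr hvae
  have hae0 : ∀ᵐ x ∂(volume : Measure ℝ), x ∈ Ioi (0:ℝ) → u' x = v x :=
    (ae_restrict_iff' measurableSet_Ioi).1 hvae
  -- FTC for u in terms of v
  have huftc : ∀ a, 0 ≤ a → u a = ∫ w in Ioc (0:ℝ) a, v w := by
    intro a ha
    have hII : IntervalIntegrable u' volume 0 a := by
      rw [intervalIntegrable_iff_integrableOn_Ioc_of_le ha]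
      exact hu'int.mono_set Ioc_subset_Ioi_self
    have h1 : ∫ w in (0:ℝ)..a, u' w = u a - u 0 :=
      intervalIntegral.integral_eq_sub_of_hasDerivAt (fun x _ => hu x) hII
    have h2 : ∫ w in (0:ℝ)..a, u' w = ∫ w in (0:ℝ)..a, v w := by
      apply intervalIntegral.integral_congr_ae
      filter_upwards [hae0] with x hx hxmem
      refine hx ?_
      rw [uIoc_of_le ha] at hxmem
      exact Ioc_subset_Ioi_self hxmem
    rw [hu0, sub_zero] at h1
    rw [← h1, h2, intervalIntegral.integral_of_le ha]
  -- replace u' by v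
  have hLHS : ∫ a in Ioi (0:ℝ), ψ a * (m a * u a + u' a)
      = ∫ a in Ioi (0:ℝ), ψ a * (m a * u a + v a) := by
    apply MeasureTheory.integral_congr_ae
    filter_upwards [hvae] with a ha
    rw [ha]
  rw [hLHS]
  set q : ℝ → ℝ := fun a => m a * u a + v a with hq
  have hqmeas : Measurable q := (hm.mul hucont.measurable).add hvmeas
  have hqint : IntegrableOn q (Ioi 0) := by
    refine Integrable.add ?_ hvint
    exact integrableOn_mul_of_bound measurableSet_Ioi huint
      (hm.aestronglyMeasurable.restrict) (C := Bm) (fun x _ => m_abs hm0 hmB x)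
  set μI := volume.restrict (Ioi (0:ℝ)) with hμI
  -- the kernel
  set K : ℝ × ℝ → ℝ := fun p => ({p : ℝ × ℝ | p.1 < p.2}.indicator
    (fun p => βh p.2 * exp (M p.1 - M p.2) * q p.1)) p with hK
  have hKmeas : Measurable K :=
    (((hβh.comp measurable_snd).mul
      (((hMcont.comp continuous_fst).sub (hMcont.comp continuous_snd)).rexp.measurable)).mul
      (hqmeas.comp measurable_fst)).indicator (measurableSet_lt measurable_fst measurable_snd)
  -- inner integral in s
  have hinner_a : ∀ a ∈ Ioi (0:ℝ), (∫ s, K (a, s) ∂μI) = ψ a * q a := by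
    intro a ha
    have h1 : (fun s => K (a, s)) = (Ioi a).indicator
        (fun s => βh s * exp (M a - M s) * q a) := by
      funext s
      rw [hK]
      simp only [Set.indicator_apply, mem_setOf_eq, mem_Ioi]
    rw [h1, hμI, MeasureTheory.integral_indicator measurableSet_Ioi,
      Measure.restrict_restrict measurableSet_Ioi,
      inter_eq_self_of_subset_left (Ioi_subset_Ioi (le_of_lt ha))]
    have h3 := _root_.integral_smul_const (μ := volume.restrict (Ioi a))
      (fun s => βh s * exp (M a - M s)) (q a)
    simp only [smul_eq_mul] at h3
    rw [h3, ← hψ a]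
  -- inner integral in a
  have hinner_s : ∀ s ∈ Ioi (0:ℝ), (∫ a, K (a, s) ∂μI) = βh s * u s := by
    intro s hs
    have h1 : (fun a => K (a, s)) = (Iio s).indicator
        (fun a => βh s * exp (M a - M s) * q a) := by
      funext a
      rw [hK]
      simp only [Set.indicator_apply, mem_setOf_eq, mem_Iio]
    rw [h1, hμI, MeasureTheory.integral_indicator measurableSet_Iio,
      Measure.restrict_restrict measurableSet_Iio]
    have h2 : Iio s ∩ Ioi 0 = Ioo 0 s := by
      ext x; simp only [mem_inter_iff, mem_Iio, mem_Ioi, mem_Ioo]; tauto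
    rw [h2]
    have h3 : ∀ a : ℝ, βh s * exp (M a - M s) * q a
        = (βh s * exp (-(M s))) * (exp (M a) * q a) := by
      intro a
      rw [sub_eq_add_neg, exp_add]
      ring
    rw [setIntegral_congr_fun measurableSet_Ioo fun a _ => h3 a,
      MeasureTheory.integral_const_mul, ← MeasureTheory.integral_Ioc_eq_integral_Ioo]
    have h4 : ∫ a in Ioc (0:ℝ) s, exp (M a) * q a = exp (M s) * u s :=
      stepA hμ0 hm hmμ hmB hvmeas hvint hucont huftc hs
    rw [h4, ← mul_assoc, mul_assoc (βh s), ← exp_add]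
    simp
  -- integrability of the kernel on the product
  have hKint : Integrable K (μI.prod μI) := by
    set W : ℝ × ℝ → ℝ := fun p => Bβh * (({p : ℝ × ℝ | p.1 < p.2}.indicator
      (fun p => exp (-(μ0 * (p.2 - p.1))))) p) * |q p.1| with hW
    have hWmeas : Measurable W :=
      ((measurable_const.mul
        ((((continuous_const.mul (continuous_snd.sub continuous_fst)).neg).rexp.measurable).indicator
          (measurableSet_lt measurable_fst measurable_snd))).mul
        ((hqmeas.comp measurable_fst).abs))
    have hWint : Integrable W (μI.prod μI) := by
      refine (integrable_prod_iff hWmeas.aestronglyMeasurable).2 ⟨?_, ?_⟩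
      · refine Filter.Eventually.of_forall fun a => ?_
        have h5 : (fun s => W (a, s)) = fun s => (Bβh * |q a|) *
            ((Ioi a).indicator (fun s => exp (-(μ0 * (s - a)))) s) := by
          funext s
          by_cases h : a < s
          · simp only [hW, Set.indicator_apply, mem_setOf_eq, mem_Ioi, if_pos h]; ring
          · simp only [hW, Set.indicator_apply, mem_setOf_eq, mem_Ioi, if_neg h]; ring
        rw [h5]
        exact (((expShift_intOn hμ0 a).integrable_indicator
          measurableSet_Ioi).integrableOn).const_mul _
      · have h6 : ∀ a ∈ Ioi (0:ℝ), (∫ s, ‖W (a, s)‖ ∂μI)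
            = (Bβh * (1/μ0)) * |q a| := by
          intro a ha
          have h5 : (fun s => ‖W (a, s)‖) = fun s => (Bβh * |q a|) *
              ((Ioi a).indicator (fun s => exp (-(μ0 * (s - a)))) s) := by
            funext s
            by_cases h : a < s
            · simp only [hW, Set.indicator_apply, mem_setOf_eq, mem_Ioi, if_pos h,
                Real.norm_eq_abs, abs_mul, abs_abs, abs_of_nonneg hBβh0,
                abs_of_nonneg (exp_nonneg _)]
              ring
            · simp only [hW, Set.indicator_apply, mem_setOf_eq, mem_Ioi, if_neg h,
                Real.norm_eq_abs, mul_zero, zero_mul, abs_zero]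
          rw [h5, MeasureTheory.integral_const_mul, hμI,
            MeasureTheory.integral_indicator measurableSet_Ioi,
            Measure.restrict_restrict measurableSet_Ioi,
            inter_eq_self_of_subset_left (Ioi_subset_Ioi (le_of_lt ha)),
            expShift_integral hμ0]
          ring
        refine Integrable.congr ((hqint.abs.const_mul (Bβh * (1/μ0)))) ?_
        rw [hμI]
        refine (ae_restrict_iff' measurableSet_Ioi).2 (Filter.Eventually.of_forall fun a ha => ?_)
        exact (h6 a ha).symm
    refine Integrable.mono' hWint hKmeas.aestronglyMeasurable
      (Filter.Eventually.of_forall fun p => ?_)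
    by_cases h : p.1 < p.2
    · simp only [hK, hW, Set.indicator_apply, mem_setOf_eq, if_pos h, Real.norm_eq_abs,
        abs_mul, abs_of_nonneg (hβh0 p.2), abs_of_nonneg (exp_nonneg _)]
      have hMle : exp (M p.1 - M p.2) ≤ exp (-(μ0 * (p.2 - p.1))) := by
        have := M_sub_ge hm hmμ hm0 hmB (le_of_lt h)
        exact exp_le_exp.2 (by linarith)
      have h7 : βh p.2 * exp (M p.1 - M p.2) ≤ Bβh * exp (-(μ0 * (p.2 - p.1))) :=
        mul_le_mul (hβhB p.2) hMle (exp_nonneg _) hBβh0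
      exact mul_le_mul_of_nonneg_right h7 (abs_nonneg _)
    · simp only [hK, hW, Set.indicator_apply, mem_setOf_eq, if_neg h, norm_zero,
        mul_zero, zero_mul]
      exact le_refl 0
  -- Fubini
  calc ∫ a in Ioi (0:ℝ), ψ a * (m a * u a + v a)
      = ∫ a, (∫ s, K (a, s) ∂μI) ∂μI :=
        (setIntegral_congr_fun measurableSet_Ioi fun a ha => (hinner_a a ha)).symm
    _ = ∫ s, (∫ a, K (a, s) ∂μI) ∂μI :=
        MeasureTheory.integral_integral_swap (f := fun a s => K (a, s)) (by exact hKint)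
    _ = ∫ s in Ioi (0:ℝ), βh s * u s :=
        setIntegral_congr_fun measurableSet_Ioi fun s hs => hinner_s s hs

end LyapAux

namespace LyapAux

variable {βv sh0 : ℝ → ℝ} {Bβv C0 : ℝ}

lemma R0_swap (hμ0 : 0 < μ0) (hm : Measurable m) (hmμ : ∀ x, μ0 ≤ m x) (hmB : ∀ x, m x ≤ Bm)
    (hβh : Measurable βh) (hβh0 : ∀ x, 0 ≤ βh x) (hβhB : ∀ x, βh x ≤ Bβh)
    (hβv : Measurable βv) (hβv0 : ∀ x, 0 ≤ βv x) (hβvB : ∀ x, βv x ≤ Bβv)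
    (hsh0c : Continuous sh0) (hsh00 : ∀ x, 0 ≤ sh0 x) (hC0 : 0 ≤ C0)
    (hsh0b : ∀ x, 0 ≤ x → sh0 x ≤ C0 * exp (-(μ0 * x)))
    (ψ : ℝ → ℝ)
    (hψ : ∀ a, ψ a = ∫ s in Ioi a,
      βh s * exp ((∫ y in (0:ℝ)..a, m y) - ∫ y in (0:ℝ)..s, m y)) :
    ∫ s in Ioi (0:ℝ), ∫ ξ in Ioi (0:ℝ),
        βh (ξ+s) * βv ξ * sh0 ξ * exp ((∫ y in (0:ℝ)..ξ, m y) - ∫ y in (0:ℝ)..(ξ+s), m y)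
      = ∫ ξ in Ioi (0:ℝ), ψ ξ * (βv ξ * sh0 ξ) := by
  have hm0 : ∀ x, 0 ≤ m x := fun x => le_trans hμ0.le (hmμ x)
  have hBβh0 : 0 ≤ Bβh := le_trans (hβh0 0) (hβhB 0)
  have hBβv0 : 0 ≤ Bβv := le_trans (hβv0 0) (hβvB 0)
  set M : ℝ → ℝ := fun a => ∫ y in (0:ℝ)..a, m y with hM
  have hMcont : Continuous M := M_cont hm hm0 hmB
  set μI := volume.restrict (Ioi (0:ℝ)) with hμI
  have hψM : ∀ a, ψ a = ∫ s in Ioi a, βh s * exp (M a - M s) := by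
    intro a
    simp only [hM]
    exact hψ a
  set H : ℝ × ℝ → ℝ := fun p =>
    βh (p.1 + p.2) * βv p.1 * sh0 p.1 * exp (M p.1 - M (p.1 + p.2)) with hH
  have hHmeas : Measurable H := by
    refine (((hβh.comp (measurable_fst.add measurable_snd)).mul
      (hβv.comp measurable_fst)).mul
      (hsh0c.measurable.comp measurable_fst)).mul ?_
    exact (((hMcont.comp continuous_fst).sub
      (hMcont.comp (continuous_fst.add continuous_snd))).rexp).measurable
  have hHint : Integrable H (μI.prod μI) := by
    refine Integrable.mono' (g := fun p => (Bβh * Bβv * C0) *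
      (exp (-(μ0 * p.1)) * exp (-(μ0 * p.2)))) ?_ hHmeas.aestronglyMeasurable ?_
    · have h1 : IntegrableOn (fun x : ℝ => exp (-(μ0 * x))) (Ioi 0) := by
        have := exp_neg_integrableOn_Ioi (0:ℝ) hμ0
        simpa [neg_mul] using this
      refine (integrable_prod_iff ?_).2 ⟨?_, ?_⟩
      · exact ((measurable_const.mul
          (((continuous_const.mul continuous_fst).neg.rexp.measurable).mul
            ((continuous_const.mul continuous_snd).neg.rexp.measurable)))).aestronglyMeasurable
      · refine Filter.Eventually.of_forall fun ξ => ?_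
        have h2 : Integrable (fun s : ℝ =>
            ((Bβh * Bβv * C0) * exp (-(μ0 * ξ))) * exp (-(μ0 * s))) μI := by
          rw [hμI]; exact h1.const_mul _
        refine h2.congr (Filter.Eventually.of_forall fun s => by ring)
      · have h3 : Integrable (fun ξ : ℝ =>
            ((Bβh * Bβv * C0) * (∫ s in Ioi (0:ℝ), exp (-(μ0 * s)))) * exp (-(μ0 * ξ))) μI := by
          rw [hμI]; exact h1.const_mul _
        refine h3.congr ?_
        refine Filter.Eventually.of_forall fun ξ => ?_
        calc ((Bβh * Bβv * C0) * (∫ s in Ioi (0:ℝ), exp (-(μ0 * s)))) * exp (-(μ0 * ξ))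
            = ((Bβh * Bβv * C0) * exp (-(μ0 * ξ))) * (∫ s in Ioi (0:ℝ), exp (-(μ0 * s))) := by
              ring
          _ = ∫ s in Ioi (0:ℝ), ((Bβh * Bβv * C0) * exp (-(μ0 * ξ))) * exp (-(μ0 * s)) :=
              (MeasureTheory.integral_const_mul _ _).symm
          _ = ∫ s, ‖(Bβh * Bβv * C0) * (exp (-(μ0 * ξ)) * exp (-(μ0 * s)))‖ ∂μI := by
              refine setIntegral_congr_fun measurableSet_Ioi fun s _ => ?_
              rw [Real.norm_eq_abs, abs_of_nonneg (by positivity)]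
              ring
    · rw [hμI, Measure.prod_restrict]
      refine (ae_restrict_iff' (measurableSet_Ioi.prod measurableSet_Ioi)).2
        (Filter.Eventually.of_forall fun p hp => ?_)
      have hp1 : (0:ℝ) < p.1 := hp.1
      have hp2 : (0:ℝ) < p.2 := hp.2
      have hMge := M_sub_ge hm hmμ hm0 hmB (le_add_of_nonneg_right hp2.le : p.1 ≤ p.1 + p.2)
      have hexp : exp (M p.1 - M (p.1 + p.2)) ≤ exp (-(μ0 * p.2)) :=
        exp_le_exp.2 (by rw [hM] at *; nlinarith)
      have hsh : sh0 p.1 ≤ C0 * exp (-(μ0 * p.1)) := hsh0b p.1 hp1.le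
      rw [hH]
      simp only [Real.norm_eq_abs]
      rw [abs_of_nonneg (mul_nonneg (mul_nonneg (mul_nonneg (hβh0 _) (hβv0 _))
        (hsh00 _)) (exp_nonneg _))]
      calc βh (p.1 + p.2) * βv p.1 * sh0 p.1 * exp (M p.1 - M (p.1 + p.2))
          ≤ Bβh * Bβv * (C0 * exp (-(μ0 * p.1))) * exp (-(μ0 * p.2)) := by
            refine mul_le_mul (mul_le_mul (mul_le_mul (hβhB _) (hβvB _) (hβv0 _) hBβh0)
              hsh (hsh00 _) (by positivity)) hexp (exp_nonneg _) (by positivity)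
        _ = (Bβh * Bβv * C0) * (exp (-(μ0 * p.1)) * exp (-(μ0 * p.2))) := by ring
  have hinner : ∀ ξ : ℝ, (∫ s, H (ξ, s) ∂μI) = ψ ξ * (βv ξ * sh0 ξ) := by
    intro ξ
    have h1 : ∀ s : ℝ, H (ξ, s)
        = (fun s' => βh s' * exp (M ξ - M s')) (ξ + s) * (βv ξ * sh0 ξ) := by
      intro s
      rw [hH]
      ring
    rw [MeasureTheory.integral_congr_ae (Filter.Eventually.of_forall h1)]
    have h2 := _root_.integral_smul_const (μ := μI)
      (fun s => (fun s' => βh s' * exp (M ξ - M s')) (ξ + s)) (βv ξ * sh0 ξ)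
    simp only [smul_eq_mul] at h2
    rw [h2, hμI, ← integral_Ioi_shift (fun s' => βh s' * exp (M ξ - M s')) ξ, ← hψM ξ]
  calc ∫ s in Ioi (0:ℝ), ∫ ξ in Ioi (0:ℝ),
        βh (ξ+s) * βv ξ * sh0 ξ * exp ((∫ y in (0:ℝ)..ξ, m y) - ∫ y in (0:ℝ)..(ξ+s), m y)
      = ∫ s, (∫ ξ, H (ξ, s) ∂μI) ∂μI := by
        refine setIntegral_congr_fun measurableSet_Ioi fun s _ => ?_
        refine setIntegral_congr_fun measurableSet_Ioi fun ξ _ => ?_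
        simp only [hH, hM]
    _ = ∫ ξ, (∫ s, H (ξ, s) ∂μI) ∂μI := by
        have := MeasureTheory.integral_integral_swap (f := fun s ξ => H (ξ, s))
          (μ := μI) (ν := μI) (by exact hHint.swap)
        exact this
    _ = ∫ ξ in Ioi (0:ℝ), ψ ξ * (βv ξ * sh0 ξ) :=
        setIntegral_congr_fun measurableSet_Ioi fun ξ _ => hinner ξ

end LyapAux
open MeasureTheory Real Set

set_option maxHeartbeats 1000000 in
/-- When `R₀ ≤ 1` and `s_h(t,a) ≤ s_h⁰(a)`, the Lyapunov functional `L₀` of the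
age-structured SIRS/SI malaria model has nonpositive derivative along the solution,
bounded by `(μ_v I_v/S_v⁰)(R₀²−1) − (μ_v S_v/S_v⁰)(1−S_v⁰/S_v)²`, and is nonincreasing. -/
theorem lyapunov_functional_nonincreasing
    (Λh Λv μv μ0 : ℝ)
    (μh δ r1 r2 βh βv : ℝ → ℝ)
    (hΛh : 0 < Λh) (hΛv : 0 < Λv) (hμv : 0 < μv) (hμ0 : 0 < μ0)
    (hμhm : Measurable μh) (hδm : Measurable δ) (hr1m : Measurable r1)
    (hr2m : Measurable r2) (hβhm : Measurable βh) (hβvm : Measurable βv)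
    (hμh_lb : ∀ a, μ0 ≤ μh a) (hμv_lb : μ0 ≤ μv)
    (hδ0 : ∀ a, 0 ≤ δ a) (hr10 : ∀ a, 0 ≤ r1 a) (hr20 : ∀ a, 0 ≤ r2 a)
    (hβh0 : ∀ a, 0 ≤ βh a) (hβv0 : ∀ a, 0 ≤ βv a)
    (Bμh Bδ Br1 Br2 Bβh Bβv : ℝ)
    (hμhB : ∀ a, μh a ≤ Bμh) (hδB : ∀ a, δ a ≤ Bδ) (hr1B : ∀ a, r1 a ≤ Br1)
    (hr2B : ∀ a, r2 a ≤ Br2) (hβhB : ∀ a, βh a ≤ Bβh) (hβvB : ∀ a, βv a ≤ Bβv)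
    (sh0 : ℝ → ℝ) (hsh0 : ∀ a, sh0 a = Λh * exp (-(∫ u in (0:ℝ)..a, μh u)))
    (Sv0 : ℝ) (hSv0def : Sv0 = Λv / μv)
    (R0 : ℝ)
    (hR0 : R0 = Real.sqrt ((Sv0 / μv) * ∫ s in Ioi (0:ℝ), ∫ ξ in Ioi (0:ℝ),
      βh (ξ+s) * βv ξ * sh0 ξ * exp (-(∫ u in ξ..(ξ+s), (μh u + r1 u + δ u)))))
    (hR0le : R0 ≤ 1)
    (ψ : ℝ → ℝ)
    (hψ : ∀ a, ψ a = ∫ s in Ioi a, βh s * exp (-(∫ z in a..s, (μh z + δ z + r1 z))))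
    -- the solution
    (sh ih rh : ℝ → ℝ → ℝ) (Sv Iv : ℝ → ℝ) (iht iha : ℝ → ℝ → ℝ)
    (hsh_pos : ∀ t a, 0 ≤ sh t a) (hih_pos : ∀ t a, 0 ≤ ih t a)
    (hSv_pos : ∀ t, 0 < Sv t) (hIv_pos : ∀ t, 0 ≤ Iv t)
    (hbc : ∀ t, ih t 0 = 0)
    (hih_t : ∀ t a, HasDerivAt (fun τ => ih τ a) (iht t a) t)
    (hih_a : ∀ t a, HasDerivAt (fun α => ih t α) (iha t a) a)
    (hPDE_i : ∀ t a, iht t a + iha t a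
      = βv a * Iv t * sh t a - (μh a + δ a + r1 a) * ih t a)
    (hPDE_s : ∀ t a, 0 < t → 0 < a → HasDerivAt (fun h => sh (t+h) (a+h))
      (-(βv a) * Iv t * sh t a - μh a * sh t a + r2 a * rh t a) 0)
    (hPDE_r : ∀ t a, 0 < t → 0 < a → HasDerivAt (fun h => rh (t+h) (a+h))
      (r1 a * ih t a - (r2 a + μh a) * rh t a) 0)
    (hbc_s : ∀ t, sh t 0 = Λh) (hbc_r : ∀ t, rh t 0 = 0)
    (hSv : ∀ t, HasDerivAt Sv
      (Λv - Sv t * (∫ a in Ioi (0:ℝ), βh a * ih t a) - μv * Sv t) t)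
    (hIv : ∀ t, HasDerivAt Iv
      (Sv t * (∫ a in Ioi (0:ℝ), βh a * ih t a) - μv * Iv t) t)
    (hsh_int : ∀ t, IntegrableOn (sh t) (Ioi 0))
    (hih_int : ∀ t, IntegrableOn (ih t) (Ioi 0))
    (hiha_int : ∀ t, IntegrableOn (iha t) (Ioi 0))
    (hdecay : ∀ t, Filter.Tendsto (fun a => ψ a * ih t a) Filter.atTop (nhds 0))
    (hdiff_int : ∀ t, HasDerivAt (fun τ => ∫ a in Ioi (0:ℝ), ψ a * ih τ a)
      (∫ a in Ioi (0:ℝ), ψ a * iht t a) t)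
    -- the comparison with the parasite-free equilibrium
    (hsh_le : ∀ t a, 0 ≤ t → 0 ≤ a → sh t a ≤ sh0 a)
    -- the Lyapunov functional
    (L0 : ℝ → ℝ)
    (hL0 : ∀ t, L0 t = (∫ a in Ioi (0:ℝ), ψ a * ih t a)
      + (Sv t / Sv0 - Real.log (Sv t / Sv0) - 1) + Iv t / Sv0) :
    (∀ t, 0 < t → ∃ D : ℝ, HasDerivAt L0 D t ∧
      D ≤ (μv * Iv t / Sv0) * (R0 ^ 2 - 1)
            - (μv * Sv t / Sv0) * (1 - Sv0 / Sv t) ^ 2 ∧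
      (μv * Iv t / Sv0) * (R0 ^ 2 - 1)
            - (μv * Sv t / Sv0) * (1 - Sv0 / Sv t) ^ 2 ≤ 0) ∧
    AntitoneOn L0 (Ioi 0) := by
  set m : ℝ → ℝ := fun a => μh a + δ a + r1 a with hm_def
  set Bm : ℝ := Bμh + Bδ + Br1 with hBm_def
  have hmmeas : Measurable m := (hμhm.add hδm).add hr1m
  have hmμ : ∀ x, μ0 ≤ m x := fun x => by
    simp only [hm_def]; linarith [hμh_lb x, hδ0 x, hr10 x]
  have hmB : ∀ x, m x ≤ Bm := fun x => by
    simp only [hm_def, hBm_def]; linarith [hμhB x, hδB x, hr1B x]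
  have hm0 : ∀ x, 0 ≤ m x := fun x => le_trans hμ0.le (hmμ x)
  have hμh0 : ∀ x, 0 ≤ μh x := fun x => le_trans hμ0.le (hμh_lb x)
  have hSv0pos : 0 < Sv0 := by rw [hSv0def]; exact div_pos hΛv hμv
  have hΛveq : Λv = μv * Sv0 := by rw [hSv0def]; field_simp
  -- ψ in normal form
  have hψ' : ∀ a, ψ a = ∫ s in Ioi a,
      βh s * exp ((∫ y in (0:ℝ)..a, m y) - ∫ y in (0:ℝ)..s, m y) := by
    intro a
    rw [hψ a]
    refine setIntegral_congr_fun measurableSet_Ioi fun s _ => ?_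
    congr 1
    congr 1
    linarith [LyapAux.M_sub hmmeas hm0 hmB a s]
  obtain ⟨hψmeas, hψ0, hψle⟩ :=
    LyapAux.psi_props hμ0 hmmeas hmμ hmB hβhm hβh0 hβhB ψ hψ'
  have hψBd : ∀ a, |ψ a| ≤ Bβh / μ0 := fun a => by
    rw [abs_of_nonneg (hψ0 a)]; exact hψle a
  -- sh0 facts
  have hsh0c : Continuous sh0 := by
    have h : sh0 = fun a => Λh * exp (-(∫ u in (0:ℝ)..a, μh u)) := funext hsh0
    rw [h]
    exact continuous_const.mul ((LyapAux.M_cont hμhm hμh0 hμhB).neg.rexp)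
  have hsh00 : ∀ x, 0 ≤ sh0 x := fun x => by rw [hsh0 x]; positivity
  have hsh0b : ∀ x, 0 ≤ x → sh0 x ≤ Λh * exp (-(μ0 * x)) := by
    intro x hx
    rw [hsh0 x]
    refine mul_le_mul_of_nonneg_left (exp_le_exp.2 ?_) hΛh.le
    have h := LyapAux.M_sub_ge hμhm hμh_lb hμh0 hμhB hx
    rw [intervalIntegral.integral_same] at h
    linarith
  have hsh0int : IntegrableOn sh0 (Ioi 0) := by
    have hbase : IntegrableOn (fun x : ℝ => exp (-(μ0 * x))) (Ioi 0) := by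
      simpa [neg_mul] using exp_neg_integrableOn_Ioi (0:ℝ) hμ0
    refine Integrable.mono' (hbase.const_mul Λh)
      (hsh0c.measurable.aestronglyMeasurable.restrict) ?_
    refine (ae_restrict_iff' measurableSet_Ioi).2 (Filter.Eventually.of_forall fun x hx => ?_)
    rw [Real.norm_eq_abs, abs_of_nonneg (hsh00 x)]
    exact hsh0b x (le_of_lt hx)
  -- R0 squared via Fubini
  set J : ℝ := ∫ s in Ioi (0:ℝ), ∫ ξ in Ioi (0:ℝ),
    βh (ξ+s) * βv ξ * sh0 ξ * exp ((∫ y in (0:ℝ)..ξ, m y) - ∫ y in (0:ℝ)..(ξ+s), m y)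
    with hJ
  have hR0form : R0 = Real.sqrt ((Sv0 / μv) * J) := by
    rw [hR0, hJ]
    congr 2
    refine setIntegral_congr_fun measurableSet_Ioi fun s _ => ?_
    refine setIntegral_congr_fun measurableSet_Ioi fun ξ _ => ?_
    congr 1
    congr 1
    have h1 : (∫ u in ξ..(ξ+s), (μh u + r1 u + δ u)) = ∫ u in ξ..(ξ+s), m u := by
      refine intervalIntegral.integral_congr fun u _ => ?_
      simp only [hm_def]; ring
    rw [h1]
    linarith [LyapAux.M_sub hmmeas hm0 hmB ξ (ξ+s)]
  have hJnonneg : 0 ≤ J := by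
    rw [hJ]
    refine setIntegral_nonneg measurableSet_Ioi fun s _ => ?_
    refine setIntegral_nonneg measurableSet_Ioi fun ξ _ => ?_
    exact mul_nonneg (mul_nonneg (mul_nonneg (hβh0 _) (hβv0 _)) (hsh00 _)) (exp_nonneg _)
  have hR0sq : R0 ^ 2 = (Sv0 / μv) * J := by
    rw [hR0form, sq_sqrt (mul_nonneg (div_pos hSv0pos hμv).le hJnonneg)]
  have hR0nonneg : 0 ≤ R0 := by rw [hR0form]; exact Real.sqrt_nonneg _
  have hJeq : J = ∫ ξ in Ioi (0:ℝ), ψ ξ * (βv ξ * sh0 ξ) := by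
    rw [hJ]
    exact LyapAux.R0_swap hμ0 hmmeas hmμ hmB hβhm hβh0 hβhB hβvm hβv0 hβvB
      hsh0c hsh00 hΛh.le hsh0b ψ hψ'
  clear_value J
  -- main derivative statement
  have main : ∀ t, 0 < t → ∃ D : ℝ, HasDerivAt L0 D t ∧
      D ≤ (μv * Iv t / Sv0) * (R0 ^ 2 - 1)
            - (μv * Sv t / Sv0) * (1 - Sv0 / Sv t) ^ 2 ∧
      (μv * Iv t / Sv0) * (R0 ^ 2 - 1)
            - (μv * Sv t / Sv0) * (1 - Sv0 / Sv t) ^ 2 ≤ 0 := by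
    intro t ht
    set B : ℝ := ∫ a in Ioi (0:ℝ), βh a * ih t a with hB
    set S' : ℝ := Λv - Sv t * B - μv * Sv t with hS'
    set I' : ℝ := Sv t * B - μv * Iv t with hI'
    set Dψ : ℝ := ∫ a in Ioi (0:ℝ), ψ a * iht t a with hDψ
    have hSvne : Sv t ≠ 0 := ne_of_gt (hSv_pos t)
    -- derivative of L0
    have hgd : HasDerivAt (fun τ => Sv τ / Sv0 - Real.log (Sv τ / Sv0) - 1)
        (S' / Sv0 - S' / Sv t) t := by
      have h1 : HasDerivAt (fun τ => Sv τ / Sv0) (S' / Sv0) t := (hSv t).div_const Sv0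
      have h2 : HasDerivAt (fun τ => Real.log (Sv τ / Sv0)) ((S' / Sv0) / (Sv t / Sv0)) t :=
        h1.log (div_ne_zero hSvne (ne_of_gt hSv0pos))
      have h3 : (S' / Sv0) / (Sv t / Sv0) = S' / Sv t := by
        rw [div_div_div_eq]
        rw [mul_comm S' Sv0, mul_div_mul_left _ _ (ne_of_gt hSv0pos)]
      rw [h3] at h2
      exact (h1.sub h2).sub_const 1
    have hL0eq : L0 = fun τ => (∫ a in Ioi (0:ℝ), ψ a * ih τ a)
        + (Sv τ / Sv0 - Real.log (Sv τ / Sv0) - 1) + Iv τ / Sv0 := funext hL0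
    have hD : HasDerivAt L0 (Dψ + (S' / Sv0 - S' / Sv t) + I' / Sv0) t := by
      rw [hL0eq]
      exact ((hdiff_int t).add hgd).add ((hIv t).div_const Sv0)
    -- integrabilities
    set P : ℝ := ∫ a in Ioi (0:ℝ), ψ a * (βv a * sh t a) with hP
    have hψβv_bd : ∀ x ∈ Ioi (0:ℝ), |ψ x * βv x| ≤ (Bβh / μ0) * Bβv := by
      intro x _
      rw [abs_mul]
      exact mul_le_mul (hψBd x) (by rw [abs_of_nonneg (hβv0 x)]; exact hβvB x)
        (abs_nonneg _) (div_nonneg (le_trans (hβh0 0) (hβhB 0)) hμ0.le)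
    have int1 : IntegrableOn (fun a => ψ a * (βv a * sh t a)) (Ioi 0) := by
      have h := LyapAux.integrableOn_mul_of_bound measurableSet_Ioi (hsh_int t)
        ((hψmeas.mul hβvm).aestronglyMeasurable.restrict) hψβv_bd
      exact h.congr_fun (fun a _ => mul_assoc _ _ _) measurableSet_Ioi
    have intK : IntegrableOn (fun a => ψ a * (βv a * sh0 a)) (Ioi 0) := by
      have h := LyapAux.integrableOn_mul_of_bound measurableSet_Ioi hsh0int
        ((hψmeas.mul hβvm).aestronglyMeasurable.restrict) hψβv_bd
      exact h.congr_fun (fun a _ => mul_assoc _ _ _) measurableSet_Ioi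
    have int2a : IntegrableOn (fun a => ψ a * (m a * ih t a)) (Ioi 0) := by
      refine LyapAux.integrableOn_mul_of_bound measurableSet_Ioi ?_
        (hψmeas.aestronglyMeasurable.restrict) (fun x _ => hψBd x)
      exact LyapAux.integrableOn_mul_of_bound measurableSet_Ioi (hih_int t)
        (hmmeas.aestronglyMeasurable.restrict) (fun x _ => LyapAux.m_abs hm0 hmB x)
    have int2b : IntegrableOn (fun a => ψ a * iha t a) (Ioi 0) :=
      LyapAux.integrableOn_mul_of_bound measurableSet_Ioi (hiha_int t)
        (hψmeas.aestronglyMeasurable.restrict) (fun x _ => hψBd x)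
    have int2 : IntegrableOn (fun a => ψ a * (m a * ih t a + iha t a)) (Ioi 0) := by
      have hsum : IntegrableOn (fun a => ψ a * (m a * ih t a) + ψ a * iha t a) (Ioi 0) :=
        int2a.add int2b
      exact hsum.congr_fun (fun a _ => by ring) measurableSet_Ioi
    -- the key identity
    have hKey : ∫ a in Ioi (0:ℝ), ψ a * (m a * ih t a + iha t a)
        = ∫ a in Ioi (0:ℝ), βh a * ih t a :=
      LyapAux.key_identity hμ0 hmmeas hmμ hmB hβhm hβh0 hβhB
        (hih_a t) (hbc t) (hih_int t) (hiha_int t) ψ hψ'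
    -- pointwise PDE rewriting
    have hpt : ∀ a : ℝ, ψ a * iht t a
        = Iv t * (ψ a * (βv a * sh t a)) - ψ a * (m a * ih t a + iha t a) := by
      intro a
      have h := hPDE_i t a
      have h2 : iht t a = βv a * Iv t * sh t a - (μh a + δ a + r1 a) * ih t a - iha t a := by
        linarith
      rw [h2]
      simp only [hm_def]
      ring
    have hDψeq : Dψ = Iv t * P - B := by
      rw [hDψ, hP, hB]
      calc (∫ a in Ioi (0:ℝ), ψ a * iht t a)
          = ∫ a in Ioi (0:ℝ),
            (Iv t * (ψ a * (βv a * sh t a)) - ψ a * (m a * ih t a + iha t a)) :=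
            setIntegral_congr_fun measurableSet_Ioi fun a _ => hpt a
        _ = (∫ a in Ioi (0:ℝ), Iv t * (ψ a * (βv a * sh t a)))
            - ∫ a in Ioi (0:ℝ), ψ a * (m a * ih t a + iha t a) :=
            integral_sub (int1.const_mul (Iv t)) int2
        _ = Iv t * (∫ a in Ioi (0:ℝ), ψ a * (βv a * sh t a))
            - ∫ a in Ioi (0:ℝ), βh a * ih t a := by
            rw [MeasureTheory.integral_const_mul, hKey]
    -- comparison P ≤ J
    have hPK : P ≤ ∫ a in Ioi (0:ℝ), ψ a * (βv a * sh0 a) := by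
      rw [hP]
      refine setIntegral_mono_on int1 intK measurableSet_Ioi fun a ha => ?_
      exact mul_le_mul_of_nonneg_left
        (mul_le_mul_of_nonneg_left (hsh_le t a ht.le (le_of_lt ha)) (hβv0 a)) (hψ0 a)
    have hPleJ : Iv t * P ≤ Iv t * J := by
      rw [hJeq]
      exact mul_le_mul_of_nonneg_left hPK (hIv_pos t)
    clear_value B S' I' Dψ P
    refine ⟨Dψ + (S' / Sv0 - S' / Sv t) + I' / Sv0, hD, ?_, ?_⟩
    · -- the derivative bound
      have hgoal : (μv * Iv t / Sv0) * ((Sv0 / μv) * J - 1)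
          - (μv * Sv t / Sv0) * (1 - Sv0 / Sv t) ^ 2
          - ((Iv t * P - B) + (S' / Sv0 - S' / Sv t) + I' / Sv0)
          = Iv t * J - Iv t * P := by
        rw [hS', hI', hΛveq]
        field_simp
        ring
      rw [hDψeq, hR0sq]
      linarith
    · -- nonpositivity of the bound
      have h1 : R0 ^ 2 ≤ 1 := by nlinarith [hR0le, hR0nonneg]
      have h2 : 0 ≤ μv * Iv t / Sv0 :=
        div_nonneg (mul_nonneg hμv.le (hIv_pos t)) hSv0pos.le
      have h3 : 0 ≤ (μv * Sv t / Sv0) * (1 - Sv0 / Sv t) ^ 2 :=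
        mul_nonneg (div_nonneg (mul_nonneg hμv.le (hSv_pos t).le) hSv0pos.le) (sq_nonneg _)
      nlinarith [mul_nonneg h2 (by linarith : (0:ℝ) ≤ 1 - R0 ^ 2), h3]
  refine ⟨main, ?_⟩
  refine antitoneOn_of_deriv_nonpos (convex_Ioi 0) ?_ ?_ ?_
  · intro x hx
    obtain ⟨D, hD, _, _⟩ := main x hx
    exact hD.continuousAt.continuousWithinAt
  · rw [interior_Ioi]
    intro x hx
    obtain ⟨D, hD, _, _⟩ := main x hx
    exact hD.differentiableAt.differentiableWithinAt
  · rw [interior_Ioi]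
    intro x hx
    obtain ⟨D, hD, h1, h2⟩ := main x hx
    rw [hD.deriv]
    linarith
end

section
/- Define, for x ≥ 0, f(x) = (Λ_h·Λ_v/(μ_v·(μ_v + x)))·∫_0^∞ β_h(a)·∫_0^a β_v(s)·exp(-∫_0^s ( Λ_v·β_v(ξ)·x/(μ_v·(μ_v + x)) + μ_h(ξ) )dξ)·exp(-∫_s^a (μ_h(ξ)+r_1(ξ)+δ(ξ))dξ) ds da. Then f is continuous and strictly decreasing on [0,∞), f(0) = R_0², and if R_0 > 1 there exists a unique x > 0 with f(x) = 1. -/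
open MeasureTheory Real Set Function Filter Topology

lemma aux_II {g : ℝ → ℝ} (hm : Measurable g) {C : ℝ} (hb : ∀ x, |g x| ≤ C) (a b : ℝ) :
    IntervalIntegrable g volume a b := by
  rw [intervalIntegrable_iff]
  refine Integrable.mono' (g := fun _ => C) ?_ hm.aestronglyMeasurable.restrict
    (Eventually.of_forall fun x => by simpa using hb x)
  exact integrableOn_const (by rw [Set.uIoc]; exact measure_Ioc_lt_top.ne)

lemma aux_II_mul {g h : ℝ → ℝ} (hm : Measurable g) {C : ℝ} (hb : ∀ x, |g x| ≤ C)
    (hh : Continuous h) (a b : ℝ) : IntervalIntegrable (fun s => g s * h s) volume a b := by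
  have hInt : IntervalIntegrable h volume a b := hh.intervalIntegrable a b
  rw [intervalIntegrable_iff] at hInt ⊢
  exact hInt.bdd_mul hm.aestronglyMeasurable.restrict
    (Eventually.of_forall fun x => by rw [Real.norm_eq_abs]; exact hb x)

lemma aux_integral_Ioi_shift (g : ℝ → ℝ) (s : ℝ) :
    (∫ σ in Ioi (0:ℝ), g (s + σ)) = ∫ u in Ioi s, g u := by
  rw [← integral_indicator measurableSet_Ioi, ← integral_indicator measurableSet_Ioi]
  rw [← MeasureTheory.integral_add_left_eq_self (fun u => (Ioi s).indicator g u) s]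
  congr 1; funext σ
  by_cases h : (0:ℝ) < σ
  · rw [indicator_of_mem (mem_Ioi.2 h), indicator_of_mem (by simp [mem_Ioi]; linarith)]
  · rw [indicator_of_notMem (by simpa using h), indicator_of_notMem (by simp [mem_Ioi]; linarith)]

lemma aux_exp_integral {c : ℝ} (hc : 0 < c) (a : ℝ) :
    (∫ u in Ioi a, exp (-(c * u))) = exp (-(c * a)) / c := by
  have h : ∫ u in Ioi a, exp (-(c*u)) = 0 - (-exp (-(c*a))/c) := by
    refine integral_Ioi_of_hasDerivAt_of_tendsto' (f := fun u => -exp (-(c*u))/c)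
      (fun x _ => ?_) ?_ ?_
    · have : HasDerivAt (fun u : ℝ => -(c*u)) (-c) x := by
        have h := ((hasDerivAt_id x).const_mul c).neg; simp only [mul_one] at h; exact h
      have := (this.exp).neg.div_const c
      refine this.congr_deriv ?_
      rw [div_eq_iff hc.ne']; ring
    · exact (exp_neg_integrableOn_Ioi a hc).congr_fun
        (fun x _ => by rw [neg_mul]) measurableSet_Ioi |>.congr_fun (fun x _ => rfl) measurableSet_Ioi
    · have : Tendsto (fun x => exp (-(c * x))) atTop (𝓝 0) := by
        have h1 : Tendsto (fun x : ℝ => c * x) atTop atTop := Tendsto.const_mul_atTop hc tendsto_id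
        have h2 : Tendsto (fun x : ℝ => -(c * x)) atTop atBot := tendsto_neg_atBot_iff.2 h1
        exact Real.tendsto_exp_atBot.comp h2
      simpa using (this.neg).div_const c
  rw [h]; ring

lemma aux_triangle_swap (g : ℝ → ℝ → ℝ)
    (hInt : Integrable (fun p : ℝ × ℝ => if p.2 < p.1 then g p.2 p.1 else 0)
      ((volume.restrict (Ioi (0:ℝ))).prod (volume.restrict (Ioi (0:ℝ))))) :
    (∫ u in Ioi (0:ℝ), ∫ s in Ioc (0:ℝ) u, g s u) = ∫ s in Ioi (0:ℝ), ∫ u in Ioi s, g s u := by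
  have h1 : ∀ u ∈ Ioi (0:ℝ), (∫ s in Ioc (0:ℝ) u, g s u)
      = ∫ s in Ioi (0:ℝ), if s < u then g s u else 0 := by
    intro u _
    have key : (fun s => if s < u then g s u else 0) = (Iio u).indicator fun s => g s u := by
      funext s; by_cases h : s < u <;> simp [Set.indicator, h]
    rw [key, setIntegral_indicator measurableSet_Iio, Set.Ioi_inter_Iio,
      integral_Ioc_eq_integral_Ioo]
  have h2 : ∀ s ∈ Ioi (0:ℝ), (∫ u in Ioi (0:ℝ), if s < u then g s u else 0)
      = ∫ u in Ioi s, g s u := by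
    intro s hs
    have key2 : (fun u => if s < u then g s u else 0) = (Ioi s).indicator fun u => g s u := by
      funext u; by_cases h : s < u <;> simp [Set.indicator, h]
    rw [key2, setIntegral_indicator measurableSet_Ioi,
      Set.Ioi_inter_Ioi, sup_eq_right.2 (le_of_lt hs)]
  rw [setIntegral_congr_fun measurableSet_Ioi h1,
    MeasureTheory.integral_integral_swap hInt,
    setIntegral_congr_fun measurableSet_Ioi h2]

set_option maxHeartbeats 1600000 in
/-- The scalar reduction of the endemic steady-state system of the age-structured
SIRS/SI malaria model without reinfection (`r₂ ≡ 0`): the function `f` is continuous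
and strictly decreasing, `f(0) = R₀²`, and when `R₀ > 1` the equation `f(x) = 1` has
a unique positive root. -/
theorem endemic_scalar_equation
    (Λh Λv μv μ0 : ℝ)
    (μh δ r1 βh βv : ℝ → ℝ)
    (hΛh : 0 < Λh) (hΛv : 0 < Λv) (hμv : 0 < μv) (hμ0 : 0 < μ0)
    (hμhm : Measurable μh) (hδm : Measurable δ) (hr1m : Measurable r1)
    (hβhm : Measurable βh) (hβvm : Measurable βv)
    (hμh_lb : ∀ a, μ0 ≤ μh a) (hμv_lb : μ0 ≤ μv)
    (hδ0 : ∀ a, 0 ≤ δ a) (hr10 : ∀ a, 0 ≤ r1 a)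
    (hβh0 : ∀ a, 0 ≤ βh a) (hβv0 : ∀ a, 0 ≤ βv a)
    (Bμh Bδ Br1 Bβh Bβv : ℝ)
    (hμhB : ∀ a, μh a ≤ Bμh) (hδB : ∀ a, δ a ≤ Bδ) (hr1B : ∀ a, r1 a ≤ Br1)
    (hβhB : ∀ a, βh a ≤ Bβh) (hβvB : ∀ a, βv a ≤ Bβv)
    (hirr : 0 < ∫ a in Ioi (0:ℝ), ∫ s in Ioi (0:ℝ), βh (a+s) * βv a * exp (-μ0 * (a+s)))
    (sh0 : ℝ → ℝ) (hsh0 : ∀ a, sh0 a = Λh * exp (-(∫ u in (0:ℝ)..a, μh u)))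
    (Sv0 : ℝ) (hSv0def : Sv0 = Λv / μv)
    (R0 : ℝ)
    (hR0 : R0 = Real.sqrt ((Sv0 / μv) * ∫ s in Ioi (0:ℝ), ∫ ξ in Ioi (0:ℝ),
      βh (ξ+s) * βv ξ * sh0 ξ * exp (-(∫ u in ξ..(ξ+s), (μh u + r1 u + δ u)))))
    (f : ℝ → ℝ)
    (hf : ∀ x, f x = (Λh * Λv / (μv * (μv + x))) * ∫ a in Ioi (0:ℝ), βh a *
      ∫ s in (0:ℝ)..a, βv s
        * exp (-(∫ ξ in (0:ℝ)..s, (Λv * βv ξ * x / (μv * (μv + x)) + μh ξ)))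
        * exp (-(∫ ξ in s..a, (μh ξ + r1 ξ + δ ξ)))) :
    ContinuousOn f (Ici 0) ∧
    StrictAntiOn f (Ici 0) ∧
    f 0 = R0 ^ 2 ∧
    (1 < R0 → ∃! x : ℝ, 0 < x ∧ f x = 1) := by
  -- nonnegativity of bounds
  have hBβv0 : 0 ≤ Bβv := le_trans (hβv0 0) (hβvB 0)
  have hBβh0 : 0 ≤ Bβh := le_trans (hβh0 0) (hβhB 0)
  have hBμh0 : 0 < Bμh := lt_of_lt_of_le hμ0 (le_trans (hμh_lb 0) (hμhB 0))
  have hBr10 : 0 ≤ Br1 := le_trans (hr10 0) (hr1B 0)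
  have hBδ0 : 0 ≤ Bδ := le_trans (hδ0 0) (hδB 0)
  set K : ℝ := Bμh + Br1 + Bδ with hKdef
  have hK0 : 0 < K := by positivity
  set w : ℝ → ℝ := fun u => μh u + r1 u + δ u with hwdef
  have hwm : Measurable w := (hμhm.add hr1m).add hδm
  have hw_lb : ∀ u, μ0 ≤ w u := fun u => by
    have := hr10 u; have := hδ0 u; have := hμh_lb u; simp only [hwdef]; linarith
  have hw_ub : ∀ u, w u ≤ K := fun u => by
    have := hr1B u; have := hδB u; have := hμhB u; simp only [hwdef, hKdef]; linarith
  have hw_abs : ∀ u, |w u| ≤ K := fun u =>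
    abs_le.2 ⟨by have := hw_lb u; linarith, hw_ub u⟩
  have hμh_abs : ∀ u, |μh u| ≤ Bμh := fun u =>
    abs_le.2 ⟨by have := hμh_lb u; linarith, hμhB u⟩
  have hβv_abs : ∀ u, |βv u| ≤ Bβv := fun u => abs_le.2 ⟨by have := hβv0 u; linarith, hβvB u⟩
  have hβh_abs : ∀ u, |βh u| ≤ Bβh := fun u => abs_le.2 ⟨by have := hβh0 u; linarith, hβhB u⟩
  have hwII : ∀ a b, IntervalIntegrable w volume a b := aux_II hwm hw_abs
  have hμhII : ∀ a b, IntervalIntegrable μh volume a b := aux_II hμhm hμh_abs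
  have hβvII : ∀ a b, IntervalIntegrable βv volume a b := aux_II hβvm hβv_abs
  set W : ℝ → ℝ := fun a => ∫ u in (0:ℝ)..a, w u with hWdef
  set Mh : ℝ → ℝ := fun a => ∫ u in (0:ℝ)..a, μh u with hMhdef
  set Bv : ℝ → ℝ := fun a => ∫ u in (0:ℝ)..a, βv u with hBvdef
  have hWcont : Continuous W := intervalIntegral.continuous_primitive hwII 0
  have hMhcont : Continuous Mh := intervalIntegral.continuous_primitive hμhII 0
  have hBvcont : Continuous Bv := intervalIntegral.continuous_primitive hβvII 0
  -- pointwise estimates on the primitives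
  have hconst_int : ∀ (c : ℝ) (a b : ℝ), (∫ u in a..b, c) = (b - a) * c := by
    intro c a b; rw [intervalIntegral.integral_const]; simp [smul_eq_mul]
  have hMh_lb : ∀ a, 0 ≤ a → μ0 * a ≤ Mh a := by
    intro a ha
    have h := intervalIntegral.integral_mono_on ha (intervalIntegrable_const (c := μ0))
      (hμhII 0 a) (fun u _ => hμh_lb u)
    rw [hconst_int] at h
    have h2 : (a - 0) * μ0 = μ0 * a := by ring
    rw [h2] at h; exact h
  have hW_ub : ∀ a, 0 ≤ a → W a ≤ K * a := by
    intro a ha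
    have h := intervalIntegral.integral_mono_on ha (hwII 0 a)
      (intervalIntegrable_const (c := K)) (fun u _ => hw_ub u)
    rw [hconst_int] at h
    have h2 : (a - 0) * K = K * a := by ring
    rw [h2] at h; exact h
  have hWsub : ∀ s a : ℝ, (∫ u in s..a, w u) = W a - W s :=
    fun s a => (intervalIntegral.integral_interval_sub_left (hwII 0 a) (hwII 0 s)).symm
  have hWdiff_lb : ∀ s a : ℝ, s ≤ a → μ0 * (a - s) ≤ W a - W s := by
    intro s a hsa
    rw [← hWsub s a]
    have h := intervalIntegral.integral_mono_on hsa (intervalIntegrable_const (c := μ0))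
      (hwII s a) (fun u _ => hw_lb u)
    rw [hconst_int] at h
    have h2 : (a - s) * μ0 = μ0 * (a - s) := by ring
    rw [h2] at h; exact h
  have hμh_le_w : ∀ u, μh u ≤ w u := by
    intro u; have := hr10 u; have := hδ0 u; simp only [hwdef]; linarith
  have hρ0 : ∀ s, 0 ≤ s → 0 ≤ W s - Mh s := by
    intro s hs
    have h := intervalIntegral.integral_mono_on hs (hμhII 0 s) (hwII 0 s)
      (fun u _ => hμh_le_w u)
    simpa using h
  have hρ_ub : ∀ s, 0 ≤ s → W s - Mh s ≤ (Br1 + Bδ) * s := by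
    intro s hs
    have h := intervalIntegral.integral_mono_on hs (hwII 0 s)
      ((hμhII 0 s).add (intervalIntegrable_const (c := Br1 + Bδ)))
      (fun u _ => by have := hr1B u; have := hδB u; simp only [hwdef]; linarith)
    rw [intervalIntegral.integral_add (hμhII 0 s) (intervalIntegrable_const (c := Br1 + Bδ)),
      hconst_int] at h
    have : W s ≤ Mh s + (s - 0) * (Br1 + Bδ) := h
    nlinarith [this]
  have hBv_lb : ∀ s, 0 ≤ s → 0 ≤ Bv s :=
    fun s hs => intervalIntegral.integral_nonneg hs (fun u _ => hβv0 u)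
  have hBv_ub : ∀ s, 0 ≤ s → Bv s ≤ Bβv * s := by
    intro s hs
    have h := intervalIntegral.integral_mono_on hs (hβvII 0 s)
      (intervalIntegrable_const (c := Bβv)) (fun u _ => hβvB u)
    rw [hconst_int] at h
    have h2 : (s - 0) * Bβv = Bβv * s := by ring
    rw [h2] at h; exact h
  have hMhW : ∀ a, 0 ≤ a → μ0 * a ≤ W a := fun a ha =>
    le_trans (hMh_lb a ha) (by have := hρ0 a ha; linarith)
  -- the kernel functions
  set q : ℝ → ℝ → ℝ := fun t s => βv s * exp ((W s - Mh s) - t * Bv s) with hqdef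
  have hqcont_t : ∀ s, Continuous fun t => q t s := by
    intro s
    exact continuous_const.mul (Real.continuous_exp.comp
      (continuous_const.sub (continuous_id.mul continuous_const)))
  have hqm : ∀ t, Measurable (q t) := by
    intro t
    exact hβvm.mul ((Real.continuous_exp.comp
      (((hWcont.sub hMhcont).sub (continuous_const.mul hBvcont)))).measurable)
  have hq0 : ∀ t s, 0 ≤ q t s := fun t s => mul_nonneg (hβv0 s) (exp_pos _).le
  have hqII : ∀ t a b, IntervalIntegrable (q t) volume a b := by
    intro t a b
    exact aux_II_mul hβvm hβv_abs (Real.continuous_exp.comp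
      (((hWcont.sub hMhcont).sub (continuous_const.mul hBvcont)))) a b
  set J : ℝ → ℝ → ℝ := fun t a => ∫ s in (0:ℝ)..a, q t s with hJdef
  have hJcont_a : ∀ t, Continuous (J t) := fun t =>
    intervalIntegral.continuous_primitive (hqII t) 0
  have hJ0 : ∀ t a, 0 ≤ a → 0 ≤ J t a := fun t a ha =>
    intervalIntegral.integral_nonneg ha (fun s _ => hq0 t s)
  have hMhsub : ∀ s a : ℝ, (∫ u in s..a, μh u) = Mh a - Mh s :=
    fun s a => (intervalIntegral.integral_interval_sub_left (hμhII 0 a) (hμhII 0 s)).symm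
  have hρmono : ∀ s a : ℝ, s ≤ a → W s - Mh s ≤ W a - Mh a := by
    intro s a hsa
    have h := intervalIntegral.integral_mono_on hsa (hμhII s a) (hwII s a)
      (fun u _ => hμh_le_w u)
    rw [hMhsub, hWsub] at h; linarith
  have hJ_ub : ∀ t a, 0 ≤ t → 0 ≤ a → J t a ≤ Bβv * exp (W a - Mh a) * a := by
    intro t a ht ha
    have h := intervalIntegral.integral_mono_on ha (hqII t 0 a)
      (intervalIntegrable_const (c := Bβv * exp (W a - Mh a)))
      (fun s hs => ?_)
    · rw [hconst_int] at h
      calc J t a ≤ (a - 0) * (Bβv * exp (W a - Mh a)) := h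
        _ = Bβv * exp (W a - Mh a) * a := by ring
    · have h1 : (W s - Mh s) - t * Bv s ≤ W a - Mh a := by
        have h2 : W s - Mh s ≤ W a - Mh a := hρmono s a hs.2
        have h4 : 0 ≤ t * Bv s := mul_nonneg ht (hBv_lb s hs.1)
        linarith
      calc q t s ≤ Bβv * exp ((W s - Mh s) - t * Bv s) :=
            mul_le_mul_of_nonneg_right (hβvB s) (exp_pos _).le
        _ ≤ Bβv * exp (W a - Mh a) :=
            mul_le_mul_of_nonneg_left (exp_le_exp.2 h1) hBβv0
  set A : ℝ → ℝ := fun a => βh a * exp (-W a) with hAdef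
  have hAm : Measurable A := hβhm.mul ((Real.continuous_exp.comp hWcont.neg).measurable)
  have hA0 : ∀ a, 0 ≤ A a := fun a => mul_nonneg (hβh0 a) (exp_pos _).le
  -- the main bound
  set Cb : ℝ := Bβh * Bβv * (2 / μ0) with hCbdef
  have hlin : ∀ c a : ℝ, 0 < c → 0 ≤ a → a * exp (-(c * a)) ≤ (2 / c) * exp (-(c / 2 * a)) := by
    intro c a hc ha
    have h1 : c / 2 * a + 1 ≤ exp (c / 2 * a) := Real.add_one_le_exp _
    have h2 : a ≤ (2 / c) * exp (c / 2 * a) := by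
      rw [div_mul_eq_mul_div, le_div_iff₀ hc]
      nlinarith
    have h3 : exp (-(c * a)) = exp (-(c / 2 * a)) * exp (-(c / 2 * a)) := by
      rw [← Real.exp_add]; ring_nf
    have h4 : exp (c / 2 * a) * exp (-(c / 2 * a)) = 1 := by
      rw [← Real.exp_add]; simp
    calc a * exp (-(c * a)) ≤ (2 / c) * exp (c / 2 * a) * exp (-(c * a)) := by
          apply mul_le_mul_of_nonneg_right h2 (exp_pos _).le
      _ = (2 / c) * exp (-(c / 2 * a)) * (exp (c / 2 * a) * exp (-(c / 2 * a))) := by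
          rw [h3]; ring
      _ = (2 / c) * exp (-(c / 2 * a)) := by rw [h4, mul_one]
  have hAJ_ub : ∀ t a, 0 ≤ t → 0 ≤ a → A a * J t a ≤ Cb * exp (-(μ0 / 2 * a)) := by
    intro t a ht ha
    have h1 : A a * J t a ≤ (Bβh * exp (-W a)) * (Bβv * exp (W a - Mh a) * a) := by
      apply mul_le_mul
      · exact mul_le_mul_of_nonneg_right (hβhB a) (exp_pos _).le
      · exact hJ_ub t a ht ha
      · exact hJ0 t a ha
      · positivity
    have h2 : exp (-W a) * exp (W a - Mh a) ≤ exp (-(μ0 * a)) := by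
      rw [← Real.exp_add, exp_le_exp]
      have := hMh_lb a ha
      linarith
    calc A a * J t a ≤ (Bβh * exp (-W a)) * (Bβv * exp (W a - Mh a) * a) := h1
      _ = Bβh * Bβv * (a * (exp (-W a) * exp (W a - Mh a))) := by ring
      _ ≤ Bβh * Bβv * (a * exp (-(μ0 * a))) := by
          apply mul_le_mul_of_nonneg_left _ (by positivity)
          exact mul_le_mul_of_nonneg_left h2 ha
      _ ≤ Bβh * Bβv * ((2 / μ0) * exp (-(μ0 / 2 * a))) :=
          mul_le_mul_of_nonneg_left (hlin μ0 a hμ0 ha) (by positivity)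
      _ = Cb * exp (-(μ0 / 2 * a)) := by rw [hCbdef]; ring
  have hboundInt : IntegrableOn (fun a => Cb * exp (-(μ0 / 2 * a))) (Ioi (0:ℝ)) := by
    have h := (exp_neg_integrableOn_Ioi 0 (by positivity : (0:ℝ) < μ0 / 2)).const_mul Cb
    simpa [neg_mul, IntegrableOn] using h
  have hAJm : ∀ t, AEStronglyMeasurable (fun a => A a * J t a) (volume.restrict (Ioi (0:ℝ))) :=
    fun t => ((hAm.mul (hJcont_a t).measurable)).aestronglyMeasurable.restrict
  have hAJint : ∀ t, 0 ≤ t → IntegrableOn (fun a => A a * J t a) (Ioi (0:ℝ)) := by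
    intro t ht
    refine Integrable.mono' hboundInt (hAJm t) ?_
    rw [ae_restrict_iff' measurableSet_Ioi]
    refine Eventually.of_forall fun a ha => ?_
    rw [Real.norm_eq_abs, abs_of_nonneg (mul_nonneg (hA0 a) (hJ0 t a (le_of_lt ha)))]
    exact hAJ_ub t a ht (le_of_lt ha)
  set G : ℝ → ℝ := fun t => ∫ a in Ioi (0:ℝ), A a * J t a with hGdef
  -- f in terms of G
  have hfeq : ∀ x : ℝ, 0 ≤ x →
      f x = (Λh * Λv / (μv * (μv + x))) * G (Λv * x / (μv * (μv + x))) := by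
    intro x hx
    have hD : (0:ℝ) < μv * (μv + x) := by nlinarith
    set t : ℝ := Λv * x / (μv * (μv + x)) with htdef
    rw [hf x]
    simp only [hGdef]
    congr 1
    refine integral_congr_ae (Eventually.of_forall fun a => ?_)
    have hinner : ∀ s : ℝ,
        βv s * exp (-(∫ ξ in (0:ℝ)..s, (Λv * βv ξ * x / (μv * (μv + x)) + μh ξ)))
          * exp (-(∫ ξ in s..a, w ξ)) = q t s * exp (-(W a)) := by
      intro s
      have hint1 : (∫ ξ in (0:ℝ)..s, (Λv * βv ξ * x / (μv * (μv + x)) + μh ξ))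
          = t * Bv s + Mh s := by
        have heq : ∀ ξ ∈ Set.uIcc (0:ℝ) s,
            Λv * βv ξ * x / (μv * (μv + x)) + μh ξ = t * βv ξ + μh ξ := by
          intro ξ _; rw [htdef]; ring
        rw [intervalIntegral.integral_congr heq,
          intervalIntegral.integral_add ((hβvII 0 s).const_mul t) (hμhII 0 s),
          intervalIntegral.integral_const_mul]
      rw [hint1, hWsub s a]
      simp only [hqdef]
      rw [mul_assoc, ← Real.exp_add, mul_assoc, ← Real.exp_add]
      congr 1
      rw [Real.exp_eq_exp]
      ring
    calc βh a * ∫ s in (0:ℝ)..a,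
          βv s * exp (-(∫ ξ in (0:ℝ)..s, (Λv * βv ξ * x / (μv * (μv + x)) + μh ξ)))
            * exp (-(∫ ξ in s..a, w ξ))
        = βh a * ∫ s in (0:ℝ)..a, q t s * exp (-(W a)) := by
          rw [intervalIntegral.integral_congr (fun s _ => hinner s)]
      _ = βh a * ((∫ s in (0:ℝ)..a, q t s) * exp (-(W a))) := by
          rw [intervalIntegral.integral_mul_const]
      _ = A a * J t a := by simp only [hAdef, hJdef]; ring
  -- continuity of t ↦ J t a
  have hJt_cont : ∀ a : ℝ, a ∈ Ioi (0:ℝ) → ∀ t₀ : ℝ, ContinuousAt (fun t => J t a) t₀ := by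
    intro a ha t₀
    have ha' : (0:ℝ) < a := ha
    have hrepr : (fun t => J t a) = fun t => ∫ s in Ioc (0:ℝ) a, q t s := by
      funext t; simp only [hJdef]; rw [intervalIntegral.integral_of_le (le_of_lt ha')]
    rw [hrepr]
    refine continuousAt_of_dominated
      (bound := fun _ => Bβv * exp ((W a - Mh a) + (|t₀| + 1) * (Bβv * a)))
      (Eventually.of_forall fun t => (hqm t).aestronglyMeasurable.restrict) ?_ ?_ ?_
    · refine eventually_of_mem (Metric.ball_mem_nhds t₀ one_pos) fun t ht => ?_
      rw [ae_restrict_iff' measurableSet_Ioc]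
      refine Eventually.of_forall fun s hs => ?_
      have habs : |t| ≤ |t₀| + 1 := by
        have h5 := abs_sub_abs_le_abs_sub t t₀
        have hd : |t - t₀| < 1 := by rwa [Metric.mem_ball, Real.dist_eq] at ht
        linarith
      have h1 : (W s - Mh s) - t * Bv s ≤ (W a - Mh a) + (|t₀| + 1) * (Bβv * a) := by
        have hs0 : (0:ℝ) ≤ s := le_of_lt hs.1
        have h2 : W s - Mh s ≤ W a - Mh a := hρmono s a hs.2
        have h3 : -(t * Bv s) ≤ (|t₀| + 1) * (Bβv * a) := by
          have h6 : -(t * Bv s) ≤ |t * Bv s| := neg_le_abs _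
          rw [abs_mul, abs_of_nonneg (hBv_lb s hs0)] at h6
          have h4 : Bv s ≤ Bβv * a :=
            le_trans (hBv_ub s hs0) (mul_le_mul_of_nonneg_left hs.2 hBβv0)
          have h5 : |t| * Bv s ≤ (|t₀| + 1) * (Bβv * a) :=
            mul_le_mul habs h4 (hBv_lb s hs0) (by positivity)
          linarith
        linarith
      rw [Real.norm_eq_abs, abs_of_nonneg (hq0 t s)]
      simp only [hqdef]
      exact mul_le_mul (hβvB s) (exp_le_exp.2 h1) (exp_pos _).le hBβv0
    · exact integrableOn_const measure_Ioc_lt_top.ne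
    · exact Eventually.of_forall fun s => (hqcont_t s).continuousAt
  -- continuity of G on [0, ∞)
  have hGcontOn : ContinuousOn G (Ici (0:ℝ)) := by
    intro t₀ _
    simp only [hGdef]
    refine continuousWithinAt_of_dominated
      (Eventually.of_forall fun t => hAJm t) ?_ hboundInt ?_
    · refine eventually_nhdsWithin_of_forall fun t ht => ?_
      rw [ae_restrict_iff' measurableSet_Ioi]
      refine Eventually.of_forall fun a ha => ?_
      rw [Real.norm_eq_abs, abs_of_nonneg (mul_nonneg (hA0 a) (hJ0 t a (le_of_lt ha)))]
      exact hAJ_ub t a ht (le_of_lt ha)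
    · rw [ae_restrict_iff' measurableSet_Ioi]
      exact Eventually.of_forall fun a ha =>
        (continuousAt_const.mul (hJt_cont a ha t₀)).continuousWithinAt
  -- G is antitone on [0, ∞)
  have hGanti : ∀ t t' : ℝ, 0 ≤ t → t ≤ t' → G t' ≤ G t := by
    intro t t' ht htt'
    have ht' : 0 ≤ t' := le_trans ht htt'
    simp only [hGdef]
    apply setIntegral_mono_on (hAJint t' ht') (hAJint t ht) measurableSet_Ioi
    intro a ha
    apply mul_le_mul_of_nonneg_left _ (hA0 a)
    apply intervalIntegral.integral_mono_on (le_of_lt ha) (hqII t' 0 a) (hqII t 0 a)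
    intro s hs
    simp only [hqdef]
    refine mul_le_mul_of_nonneg_left (exp_le_exp.2 ?_) (hβv0 s)
    have h7 : t * Bv s ≤ t' * Bv s := mul_le_mul_of_nonneg_right htt' (hBv_lb s hs.1)
    linarith
  -- integrability of the u-form positivity integrand
  have hu_meas : ∀ c : ℝ, Measurable (fun u => βh u * exp (-(c * u)) * Bv u) := by
    intro c
    exact (hβhm.mul ((Real.continuous_exp.comp
      (continuous_const.mul continuous_id).neg).measurable)).mul hBvcont.measurable
  have hu_int : ∀ c : ℝ, 0 < c →
      IntegrableOn (fun u => βh u * exp (-(c * u)) * Bv u) (Ioi (0:ℝ)) := by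
    intro c hc
    have hbint : IntegrableOn (fun u => Bβh * Bβv * ((2 / c) * exp (-(c / 2 * u)))) (Ioi (0:ℝ)) := by
      have h := ((exp_neg_integrableOn_Ioi 0 (by positivity : (0:ℝ) < c / 2)).const_mul
        ((2 / c))).const_mul (Bβh * Bβv)
      simpa [neg_mul, mul_assoc, IntegrableOn] using h
    refine Integrable.mono' hbint ((hu_meas c).aestronglyMeasurable.restrict) ?_
    rw [ae_restrict_iff' measurableSet_Ioi]
    refine Eventually.of_forall fun u hu => ?_
    have hu0 : (0:ℝ) ≤ u := le_of_lt hu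
    rw [Real.norm_eq_abs, abs_of_nonneg
      (mul_nonneg (mul_nonneg (hβh0 u) (exp_pos _).le) (hBv_lb u hu0))]
    calc βh u * exp (-(c * u)) * Bv u ≤ Bβh * exp (-(c * u)) * (Bβv * u) := by
          apply mul_le_mul
          · exact mul_le_mul_of_nonneg_right (hβhB u) (exp_pos _).le
          · exact hBv_ub u hu0
          · exact hBv_lb u hu0
          · positivity
      _ = Bβh * Bβv * (u * exp (-(c * u))) := by ring
      _ ≤ Bβh * Bβv * ((2 / c) * exp (-(c / 2 * u))) :=
          mul_le_mul_of_nonneg_left (hlin c u hc hu0) (by positivity)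
  have hu_nonneg : ∀ c : ℝ, ∀ u, 0 ≤ u → 0 ≤ βh u * exp (-(c * u)) * Bv u := fun c u hu =>
    mul_nonneg (mul_nonneg (hβh0 u) (exp_pos _).le) (hBv_lb u hu)
  -- Claim A at c = μ0 : the u-form equals the s-form coming from hirr
  set Ψ : ℝ → ℝ := fun s => ∫ u in Ioi s, βh u * exp (-(μ0 * u)) with hΨdef
  have hgprod_int : Integrable
      (fun p : ℝ × ℝ => if p.2 < p.1 then βv p.2 * (βh p.1 * exp (-(μ0 * p.1))) else 0)
      ((volume.restrict (Ioi (0:ℝ))).prod (volume.restrict (Ioi (0:ℝ)))) := by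
    have hbint : Integrable
        (fun p : ℝ × ℝ => (Bβv * Bβh * exp (-(μ0 / 2 * p.1))) * exp (-(μ0 / 2 * p.2)))
        ((volume.restrict (Ioi (0:ℝ))).prod (volume.restrict (Ioi (0:ℝ)))) := by
      have hb1 : Integrable (fun u : ℝ => Bβv * Bβh * exp (-(μ0 / 2 * u)))
          (volume.restrict (Ioi (0:ℝ))) := by
        have h := (exp_neg_integrableOn_Ioi 0
          (by positivity : (0:ℝ) < μ0 / 2)).const_mul (Bβv * Bβh)
        simpa [neg_mul] using h
      have hb2 : Integrable (fun u : ℝ => exp (-(μ0 / 2 * u)))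
          (volume.restrict (Ioi (0:ℝ))) := by
        have h := exp_neg_integrableOn_Ioi 0 (by positivity : (0:ℝ) < μ0 / 2)
        simpa [neg_mul, IntegrableOn] using h
      exact hb1.mul_prod hb2
    have hmeas : AEStronglyMeasurable
        (fun p : ℝ × ℝ => if p.2 < p.1 then βv p.2 * (βh p.1 * exp (-(μ0 * p.1))) else 0)
        ((volume.restrict (Ioi (0:ℝ))).prod (volume.restrict (Ioi (0:ℝ)))) := by
      refine (Measurable.ite (measurableSet_lt measurable_snd measurable_fst) ?_
        measurable_const).aestronglyMeasurable
      exact (hβvm.comp measurable_snd).mul ((hβhm.comp measurable_fst).mul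
        ((Real.continuous_exp.comp (continuous_const.mul continuous_id).neg).measurable.comp
          measurable_fst))
    refine Integrable.mono' hbint hmeas ?_
    rw [Measure.prod_restrict, ae_restrict_iff' (measurableSet_Ioi.prod measurableSet_Ioi)]
    refine Eventually.of_forall fun p hp => ?_
    obtain ⟨hp1, hp2⟩ := hp
    by_cases h : p.2 < p.1
    · rw [if_pos h, Real.norm_eq_abs,
        abs_of_nonneg (mul_nonneg (hβv0 _) (mul_nonneg (hβh0 _) (exp_pos _).le))]
      have hexp : exp (-(μ0 * p.1)) ≤ exp (-(μ0 / 2 * p.1)) * exp (-(μ0 / 2 * p.2)) := by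
        rw [← Real.exp_add, exp_le_exp]
        have : (0:ℝ) < p.2 := hp2
        nlinarith [le_of_lt h]
      calc βv p.2 * (βh p.1 * exp (-(μ0 * p.1)))
          ≤ Bβv * (Bβh * exp (-(μ0 * p.1))) := by
            apply mul_le_mul (hβvB _) _ (mul_nonneg (hβh0 _) (exp_pos _).le) hBβv0
            exact mul_le_mul_of_nonneg_right (hβhB _) (exp_pos _).le
        _ ≤ Bβv * (Bβh * (exp (-(μ0 / 2 * p.1)) * exp (-(μ0 / 2 * p.2)))) := by
            apply mul_le_mul_of_nonneg_left _ hBβv0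
            exact mul_le_mul_of_nonneg_left hexp hBβh0
        _ = (Bβv * Bβh * exp (-(μ0 / 2 * p.1))) * exp (-(μ0 / 2 * p.2)) := by ring
    · rw [if_neg h]
      simp only [norm_zero]
      positivity
  have hClaimA : (∫ u in Ioi (0:ℝ), βh u * exp (-(μ0 * u)) * Bv u)
      = ∫ s in Ioi (0:ℝ), βv s * Ψ s := by
    have h1 : ∀ u ∈ Ioi (0:ℝ), βh u * exp (-(μ0 * u)) * Bv u
        = ∫ s in Ioc (0:ℝ) u, βv s * (βh u * exp (-(μ0 * u))) := by
      intro u hu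
      rw [MeasureTheory.integral_mul_const]
      have : Bv u = ∫ s in Ioc (0:ℝ) u, βv s := by
        simp only [hBvdef]; rw [intervalIntegral.integral_of_le (le_of_lt hu)]
      rw [← this]; ring
    have h2 : ∀ s ∈ Ioi (0:ℝ), (∫ u in Ioi s, βv s * (βh u * exp (-(μ0 * u))))
        = βv s * Ψ s := by
      intro s _
      rw [MeasureTheory.integral_const_mul]
    rw [setIntegral_congr_fun measurableSet_Ioi h1,
      aux_triangle_swap (fun s u => βv s * (βh u * exp (-(μ0 * u)))) hgprod_int,
      setIntegral_congr_fun measurableSet_Ioi h2]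
  -- massage hirr into the s-form
  have hirr' : 0 < ∫ s in Ioi (0:ℝ), βv s * Ψ s := by
    have h1 : ∀ a ∈ Ioi (0:ℝ), (∫ s in Ioi (0:ℝ), βh (a+s) * βv a * exp (-μ0 * (a+s)))
        = βv a * Ψ a := by
      intro a _
      have h2 : ∀ s : ℝ, βh (a+s) * βv a * exp (-μ0 * (a+s))
          = βv a * ((fun u => βh u * exp (-(μ0 * u))) (a + s)) := by
        intro s; simp only; rw [neg_mul]; ring
      rw [integral_congr_ae (Eventually.of_forall h2), MeasureTheory.integral_const_mul,
        aux_integral_Ioi_shift (fun u => βh u * exp (-(μ0 * u))) a]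
    rwa [setIntegral_congr_fun measurableSet_Ioi h1] at hirr
  -- the u-form is positive for every positive rate
  have hu_pos : ∀ c : ℝ, 0 < c → 0 < ∫ u in Ioi (0:ℝ), βh u * exp (-(c * u)) * Bv u := by
    intro c hc
    have hsupp_eq : ∀ c' : ℝ, support (fun u => βh u * exp (-(c' * u)) * Bv u)
        = support βh ∩ support Bv := by
      intro c'
      ext u
      simp only [mem_support, mem_inter_iff, mul_ne_zero_iff]
      constructor
      · rintro ⟨⟨h1, _⟩, h2⟩; exact ⟨h1, h2⟩
      · rintro ⟨h1, h2⟩; exact ⟨⟨h1, Real.exp_ne_zero _⟩, h2⟩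
    have hμpos : 0 < ∫ u in Ioi (0:ℝ), βh u * exp (-(μ0 * u)) * Bv u := by
      rw [hClaimA]; exact hirr'
    have hμae : 0 ≤ᵐ[volume.restrict (Ioi (0:ℝ))] fun u => βh u * exp (-(μ0 * u)) * Bv u :=
      (ae_restrict_iff' measurableSet_Ioi).mpr
        (Eventually.of_forall fun u hu => hu_nonneg μ0 u (le_of_lt hu))
    have hcae : 0 ≤ᵐ[volume.restrict (Ioi (0:ℝ))] fun u => βh u * exp (-(c * u)) * Bv u :=
      (ae_restrict_iff' measurableSet_Ioi).mpr
        (Eventually.of_forall fun u hu => hu_nonneg c u (le_of_lt hu))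
    have hvol : 0 < volume (support (fun u => βh u * exp (-(μ0 * u)) * Bv u) ∩ Ioi 0) :=
      (setIntegral_pos_iff_support_of_nonneg_ae hμae (hu_int μ0 hμ0)).1 hμpos
    refine (setIntegral_pos_iff_support_of_nonneg_ae hcae (hu_int c hc)).2 ?_
    rwa [hsupp_eq c, ← hsupp_eq μ0]
  -- positivity of G
  have hGpos : ∀ t : ℝ, 0 ≤ t → 0 < G t := by
    intro t ht
    set c : ℝ := K + t * Bβv with hcdef
    have hc : 0 < c := by have : 0 ≤ t * Bβv := mul_nonneg ht hBβv0; simp only [hcdef]; linarith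
    have hlow : ∀ a ∈ Ioi (0:ℝ), βh a * exp (-(c * a)) * Bv a ≤ A a * J t a := by
      intro a ha
      have ha0 : (0:ℝ) ≤ a := le_of_lt ha
      have hJlb : exp (-(t * (Bβv * a))) * Bv a ≤ J t a := by
        have h := intervalIntegral.integral_mono_on ha0
          ((hβvII 0 a).mul_const (exp (-(t * (Bβv * a))))) (hqII t 0 a) (fun s hs => ?_)
        · rw [intervalIntegral.integral_mul_const] at h
          calc exp (-(t * (Bβv * a))) * Bv a = Bv a * exp (-(t * (Bβv * a))) := by ring
            _ ≤ J t a := h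
        · simp only [hqdef]
          apply mul_le_mul_of_nonneg_left _ (hβv0 s)
          apply exp_le_exp.2
          have h2 : 0 ≤ W s - Mh s := hρ0 s hs.1
          have h3 : t * Bv s ≤ t * (Bβv * a) := by
            apply mul_le_mul_of_nonneg_left _ ht
            exact le_trans (hBv_ub s hs.1) (mul_le_mul_of_nonneg_left hs.2 hBβv0)
          linarith
      have hAlb : βh a * exp (-(K * a)) ≤ A a := by
        simp only [hAdef]
        exact mul_le_mul_of_nonneg_left (exp_le_exp.2 (by have := hW_ub a ha0; linarith))
          (hβh0 a)
      have hexp : exp (-(K * a)) * exp (-(t * (Bβv * a))) = exp (-(c * a)) := by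
        rw [← Real.exp_add]; congr 1; simp only [hcdef]; ring
      calc βh a * exp (-(c * a)) * Bv a
          = (βh a * exp (-(K * a))) * (exp (-(t * (Bβv * a))) * Bv a) := by
            rw [← hexp]; ring
        _ ≤ A a * J t a := by
            apply mul_le_mul hAlb hJlb
              (mul_nonneg (exp_pos _).le (hBv_lb a ha0))
              (hA0 a)
    have hmono := setIntegral_mono_on (hu_int c hc) (hAJint t ht) measurableSet_Ioi hlow
    exact lt_of_lt_of_le (hu_pos c hc) hmono
  -- the rational prefactor and the inner rate
  have hφ0 : ∀ x : ℝ, 0 ≤ x → 0 ≤ Λv * x / (μv * (μv + x)) := by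
    intro x hx
    have h : (0:ℝ) < μv * (μv + x) := by nlinarith
    positivity
  have hφmono : ∀ x y : ℝ, 0 ≤ x → x ≤ y →
      Λv * x / (μv * (μv + x)) ≤ Λv * y / (μv * (μv + y)) := by
    intro x y hx hxy
    have hDx : (0:ℝ) < μv * (μv + x) := by nlinarith
    have hDy : (0:ℝ) < μv * (μv + y) := by nlinarith
    rw [div_le_div_iff₀ hDx hDy]
    nlinarith [mul_le_mul_of_nonneg_left hxy (by positivity : (0:ℝ) ≤ Λv * (μv * μv))]
  -- continuity of f
  have hφcont : ContinuousOn (fun x => Λv * x / (μv * (μv + x))) (Ici (0:ℝ)) := by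
    apply ContinuousOn.div (continuous_const.mul continuous_id).continuousOn
      (continuous_const.mul (continuous_const.add continuous_id)).continuousOn
    intro x hx
    have hx0 : (0:ℝ) ≤ x := hx
    have : (0:ℝ) < μv * (μv + x) := by nlinarith
    exact ne_of_gt this
  have hCcont : ContinuousOn (fun x => Λh * Λv / (μv * (μv + x))) (Ici (0:ℝ)) := by
    apply ContinuousOn.div continuousOn_const
      (continuous_const.mul (continuous_const.add continuous_id)).continuousOn
    intro x hx
    have hx0 : (0:ℝ) ≤ x := hx
    have : (0:ℝ) < μv * (μv + x) := by nlinarith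
    exact ne_of_gt this
  have hfcont : ContinuousOn f (Ici (0:ℝ)) := by
    apply ContinuousOn.congr
      ((hCcont.mul (hGcontOn.comp hφcont (fun x hx => hφ0 x hx))))
    intro x hx
    exact hfeq x hx
  -- strict antitonicity of f
  have hanti : StrictAntiOn f (Ici (0:ℝ)) := by
    intro x hx y hy hxy
    have hx0 : (0:ℝ) ≤ x := hx
    have hy0 : (0:ℝ) ≤ y := hy
    rw [hfeq x hx0, hfeq y hy0]
    have hGle : G (Λv * y / (μv * (μv + y))) ≤ G (Λv * x / (μv * (μv + x))) :=
      hGanti _ _ (hφ0 x hx0) (hφmono x y hx0 (le_of_lt hxy))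
    have hGx : 0 < G (Λv * x / (μv * (μv + x))) := hGpos _ (hφ0 x hx0)
    have hDx : (0:ℝ) < μv * (μv + x) := by nlinarith
    have hDy : (0:ℝ) < μv * (μv + y) := by nlinarith
    have hC : Λh * Λv / (μv * (μv + y)) < Λh * Λv / (μv * (μv + x)) := by
      apply div_lt_div_of_pos_left (by positivity) hDx
      nlinarith
    calc Λh * Λv / (μv * (μv + y)) * G (Λv * y / (μv * (μv + y)))
        ≤ Λh * Λv / (μv * (μv + y)) * G (Λv * x / (μv * (μv + x))) :=
          mul_le_mul_of_nonneg_left hGle (by positivity)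
      _ < Λh * Λv / (μv * (μv + x)) * G (Λv * x / (μv * (μv + x))) :=
          mul_lt_mul_of_pos_right hC hGx
  -- the double-integral kernel for f 0 = R0 ^ 2
  set F : ℝ → ℝ → ℝ := fun ξ u => βh u * (βv ξ * exp (-Mh ξ - (W u - W ξ))) with hFdef
  have hF0 : ∀ ξ u, 0 ≤ F ξ u := fun ξ u =>
    mul_nonneg (hβh0 u) (mul_nonneg (hβv0 ξ) (exp_pos _).le)
  have hG0eq : G 0 = ∫ u in Ioi (0:ℝ), ∫ ξ in Ioc (0:ℝ) u, F ξ u := by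
    simp only [hGdef]
    refine setIntegral_congr_fun measurableSet_Ioi fun u hu => ?_
    have hJ0u : J 0 u = ∫ s in Ioc (0:ℝ) u, q 0 s := by
      simp only [hJdef]; rw [intervalIntegral.integral_of_le (le_of_lt hu)]
    rw [hJ0u, ← MeasureTheory.integral_const_mul]
    refine setIntegral_congr_fun measurableSet_Ioc fun s _ => ?_
    simp only [hAdef, hqdef, hFdef]
    rw [zero_mul, sub_zero]
    have e1 : exp (-(W u)) * exp (W s - Mh s) = exp (-Mh s - (W u - W s)) := by
      rw [← Real.exp_add]; congr 1; ring
    calc βh u * exp (-W u) * (βv s * exp (W s - Mh s))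
        = βh u * (βv s * (exp (-(W u)) * exp (W s - Mh s))) := by ring
      _ = βh u * (βv s * exp (-Mh s - (W u - W s))) := by rw [e1]
  have hFprod_int : Integrable (fun p : ℝ × ℝ => if p.2 < p.1 then F p.2 p.1 else 0)
      ((volume.restrict (Ioi (0:ℝ))).prod (volume.restrict (Ioi (0:ℝ)))) := by
    have hb1 : Integrable (fun u : ℝ => Bβh * Bβv * exp (-(μ0 / 2 * u)))
        (volume.restrict (Ioi (0:ℝ))) := by
      have h := (exp_neg_integrableOn_Ioi 0
        (by positivity : (0:ℝ) < μ0 / 2)).const_mul (Bβh * Bβv)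
      simpa [neg_mul] using h
    have hb2 : Integrable (fun u : ℝ => exp (-(μ0 / 2 * u)))
        (volume.restrict (Ioi (0:ℝ))) := by
      have h := exp_neg_integrableOn_Ioi 0 (by positivity : (0:ℝ) < μ0 / 2)
      simpa [neg_mul, IntegrableOn] using h
    have hmeas : AEStronglyMeasurable (fun p : ℝ × ℝ => if p.2 < p.1 then F p.2 p.1 else 0)
        ((volume.restrict (Ioi (0:ℝ))).prod (volume.restrict (Ioi (0:ℝ)))) := by
      refine (Measurable.ite (measurableSet_lt measurable_snd measurable_fst) ?_
        measurable_const).aestronglyMeasurable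
      simp only [hFdef]
      exact (hβhm.comp measurable_fst).mul ((hβvm.comp measurable_snd).mul
        (Real.measurable_exp.comp (((hMhcont.measurable.comp measurable_snd).neg).sub
          ((hWcont.measurable.comp measurable_fst).sub
            (hWcont.measurable.comp measurable_snd)))))
    refine Integrable.mono' (hb1.mul_prod hb2) hmeas ?_
    rw [Measure.prod_restrict, ae_restrict_iff' (measurableSet_Ioi.prod measurableSet_Ioi)]
    refine Eventually.of_forall fun p hp => ?_
    obtain ⟨hp1, hp2⟩ := hp
    have hp1' : (0:ℝ) < p.1 := hp1
    have hp2' : (0:ℝ) < p.2 := hp2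
    by_cases h : p.2 < p.1
    · rw [if_pos h, Real.norm_eq_abs, abs_of_nonneg (hF0 _ _)]
      have hexp : exp (-Mh p.2 - (W p.1 - W p.2))
          ≤ exp (-(μ0 / 2 * p.1)) * exp (-(μ0 / 2 * p.2)) := by
        rw [← Real.exp_add, exp_le_exp]
        have h1 := hMh_lb p.2 (le_of_lt hp2')
        have h2 := hWdiff_lb p.2 p.1 (le_of_lt h)
        nlinarith [le_of_lt h]
      simp only [hFdef]
      calc βh p.1 * (βv p.2 * exp (-Mh p.2 - (W p.1 - W p.2)))
          ≤ Bβh * (Bβv * exp (-Mh p.2 - (W p.1 - W p.2))) := by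
            apply mul_le_mul (hβhB _) _ (mul_nonneg (hβv0 _) (exp_pos _).le) hBβh0
            exact mul_le_mul_of_nonneg_right (hβvB _) (exp_pos _).le
        _ ≤ Bβh * (Bβv * (exp (-(μ0 / 2 * p.1)) * exp (-(μ0 / 2 * p.2)))) := by
            apply mul_le_mul_of_nonneg_left _ hBβh0
            exact mul_le_mul_of_nonneg_left hexp hBβv0
        _ = (Bβh * Bβv * exp (-(μ0 / 2 * p.1))) * exp (-(μ0 / 2 * p.2)) := by ring
    · rw [if_neg h]
      simp only [norm_zero]
      positivity
  have hshift_int : Integrable (uncurry fun ξ σ => F ξ (ξ + σ))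
      ((volume.restrict (Ioi (0:ℝ))).prod (volume.restrict (Ioi (0:ℝ)))) := by
    have hb1 : Integrable (fun u : ℝ => Bβh * Bβv * exp (-(μ0 * u)))
        (volume.restrict (Ioi (0:ℝ))) := by
      have h := (exp_neg_integrableOn_Ioi 0 hμ0).const_mul (Bβh * Bβv)
      simpa [neg_mul] using h
    have hb2 : Integrable (fun u : ℝ => exp (-(μ0 * u)))
        (volume.restrict (Ioi (0:ℝ))) := by
      have h := exp_neg_integrableOn_Ioi 0 hμ0
      simpa [neg_mul, IntegrableOn] using h
    have hmeas : AEStronglyMeasurable (uncurry fun ξ σ => F ξ (ξ + σ))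
        ((volume.restrict (Ioi (0:ℝ))).prod (volume.restrict (Ioi (0:ℝ)))) := by
      simp only [hFdef, uncurry]
      exact ((hβhm.comp (measurable_fst.add measurable_snd)).mul
        ((hβvm.comp measurable_fst).mul (Real.measurable_exp.comp
          (((hMhcont.measurable.comp measurable_fst).neg).sub
            ((hWcont.measurable.comp (measurable_fst.add measurable_snd)).sub
              (hWcont.measurable.comp measurable_fst)))))).aestronglyMeasurable
    refine Integrable.mono' (hb1.mul_prod hb2) hmeas ?_
    rw [Measure.prod_restrict, ae_restrict_iff' (measurableSet_Ioi.prod measurableSet_Ioi)]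
    refine Eventually.of_forall fun p hp => ?_
    obtain ⟨hp1, hp2⟩ := hp
    have hp1' : (0:ℝ) < p.1 := hp1
    have hp2' : (0:ℝ) < p.2 := hp2
    rw [Real.norm_eq_abs]
    simp only [uncurry]
    rw [abs_of_nonneg (hF0 _ _)]
    have hexp : exp (-Mh p.1 - (W (p.1 + p.2) - W p.1))
        ≤ exp (-(μ0 * p.1)) * exp (-(μ0 * p.2)) := by
      rw [← Real.exp_add, exp_le_exp]
      have h1 := hMh_lb p.1 (le_of_lt hp1')
      have h2 := hWdiff_lb p.1 (p.1 + p.2) (by linarith)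
      have h3 : μ0 * (p.1 + p.2 - p.1) = μ0 * p.2 := by ring
      rw [h3] at h2
      linarith
    simp only [hFdef]
    calc βh (p.1 + p.2) * (βv p.1 * exp (-Mh p.1 - (W (p.1 + p.2) - W p.1)))
        ≤ Bβh * (Bβv * exp (-Mh p.1 - (W (p.1 + p.2) - W p.1))) := by
          apply mul_le_mul (hβhB _) _ (mul_nonneg (hβv0 _) (exp_pos _).le) hBβh0
          exact mul_le_mul_of_nonneg_right (hβvB _) (exp_pos _).le
      _ ≤ Bβh * (Bβv * (exp (-(μ0 * p.1)) * exp (-(μ0 * p.2)))) := by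
          apply mul_le_mul_of_nonneg_left _ hBβh0
          exact mul_le_mul_of_nonneg_left hexp hBβv0
      _ = (Bβh * Bβv * exp (-(μ0 * p.1))) * exp (-(μ0 * p.2)) := by ring
  have hG0tri : G 0 = ∫ σ in Ioi (0:ℝ), ∫ ξ in Ioi (0:ℝ), F ξ (ξ + σ) := by
    rw [hG0eq, aux_triangle_swap F hFprod_int]
    have h1 : ∀ ξ ∈ Ioi (0:ℝ), (∫ u in Ioi ξ, F ξ u) = ∫ σ in Ioi (0:ℝ), F ξ (ξ + σ) :=
      fun ξ _ => (aux_integral_Ioi_shift (fun u => F ξ u) ξ).symm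
    rw [setIntegral_congr_fun measurableSet_Ioi h1,
      MeasureTheory.integral_integral_swap hshift_int]
  have hf0R : f 0 = R0 ^ 2 := by
    have hXnn : 0 ≤ (Sv0 / μv) * ∫ s in Ioi (0:ℝ), ∫ ξ in Ioi (0:ℝ),
        βh (ξ+s) * βv ξ * sh0 ξ * exp (-(∫ u in ξ..(ξ+s), w u)) := by
      apply mul_nonneg (by rw [hSv0def]; positivity)
      apply setIntegral_nonneg measurableSet_Ioi
      intro σ _
      apply setIntegral_nonneg measurableSet_Ioi
      intro ξ _
      have h0 : 0 ≤ sh0 ξ := by rw [hsh0 ξ]; positivity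
      exact mul_nonneg (mul_nonneg (mul_nonneg (hβh0 _) (hβv0 _)) h0) (exp_pos _).le
    have hR0sq : R0 ^ 2 = (Sv0 / μv) * ∫ s in Ioi (0:ℝ), ∫ ξ in Ioi (0:ℝ),
        βh (ξ+s) * βv ξ * sh0 ξ * exp (-(∫ u in ξ..(ξ+s), w u)) := by
      rw [hR0, sq_sqrt hXnn]
    have hpt : ∀ σ ξ : ℝ, βh (ξ+σ) * βv ξ * sh0 ξ * exp (-(∫ u in ξ..(ξ+σ), w u))
        = Λh * F ξ (ξ + σ) := by
      intro σ ξ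
      have e0 : sh0 ξ = Λh * exp (-(Mh ξ)) := hsh0 ξ
      have e1 : (∫ u in ξ..(ξ+σ), w u) = W (ξ+σ) - W ξ := hWsub ξ (ξ+σ)
      rw [e0, e1]
      have e3 : exp (-(Mh ξ)) * exp (-(W (ξ+σ) - W ξ)) = exp (-Mh ξ - (W (ξ+σ) - W ξ)) := by
        rw [show -Mh ξ - (W (ξ+σ) - W ξ) = (-(Mh ξ)) + (-(W (ξ+σ) - W ξ)) from by ring,
          Real.exp_add]
      simp only [hFdef]
      calc βh (ξ+σ) * βv ξ * (Λh * exp (-(Mh ξ))) * exp (-(W (ξ+σ) - W ξ))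
          = Λh * (βh (ξ+σ) * (βv ξ * (exp (-(Mh ξ)) * exp (-(W (ξ+σ) - W ξ))))) := by ring
        _ = Λh * (βh (ξ+σ) * (βv ξ * exp (-Mh ξ - (W (ξ+σ) - W ξ)))) := by rw [e3]
    have hinner : ∀ σ ∈ Ioi (0:ℝ), (∫ ξ in Ioi (0:ℝ),
        βh (ξ+σ) * βv ξ * sh0 ξ * exp (-(∫ u in ξ..(ξ+σ), w u)))
        = Λh * ∫ ξ in Ioi (0:ℝ), F ξ (ξ + σ) := by
      intro σ _
      rw [← MeasureTheory.integral_const_mul]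
      exact setIntegral_congr_fun measurableSet_Ioi fun ξ _ => hpt σ ξ
    have hf00 : f 0 = (Λh * Λv / (μv * (μv + 0))) * G 0 := by
      rw [hfeq 0 le_rfl]
      norm_num
    rw [hf00, hG0tri, hR0sq, setIntegral_congr_fun measurableSet_Ioi hinner,
      MeasureTheory.integral_const_mul, hSv0def]
    field_simp
    ring
  refine ⟨hfcont, hanti, hf0R, ?_⟩
  intro hR1
  have hf0gt : 1 < f 0 := by rw [hf0R]; nlinarith
  have hG00 : 0 < G 0 := hGpos 0 le_rfl
  set x₁ : ℝ := Λh * Λv * G 0 / μv + 1 with hx₁def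
  have hx₁pos : 0 < x₁ := by
    have h : 0 < Λh * Λv * G 0 / μv := by positivity
    simp only [hx₁def]; linarith
  have hfx₁ : f x₁ < 1 := by
    have h1 : f x₁ = (Λh * Λv / (μv * (μv + x₁))) * G (Λv * x₁ / (μv * (μv + x₁))) :=
      hfeq x₁ (le_of_lt hx₁pos)
    have hD : (0:ℝ) < μv * (μv + x₁) := by nlinarith
    have h2 : G (Λv * x₁ / (μv * (μv + x₁))) ≤ G 0 := by
      have := hφ0 x₁ (le_of_lt hx₁pos)
      exact hGanti 0 _ le_rfl this
    have h3 : f x₁ ≤ (Λh * Λv / (μv * (μv + x₁))) * G 0 := by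
      rw [h1]
      exact mul_le_mul_of_nonneg_left h2 (by positivity)
    have h4 : (Λh * Λv / (μv * (μv + x₁))) * G 0 < 1 := by
      rw [div_mul_eq_mul_div, div_lt_one hD]
      have h5 : μv * x₁ = Λh * Λv * G 0 + μv := by
        simp only [hx₁def]; field_simp
      nlinarith
    linarith
  have hmem : (1:ℝ) ∈ Icc (f x₁) (f 0) := ⟨le_of_lt hfx₁, le_of_lt hf0gt⟩
  obtain ⟨x, hxmem, hfx⟩ := intermediate_value_Icc' (le_of_lt hx₁pos)
    (hfcont.mono (fun z hz => hz.1)) hmem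
  have hxpos : 0 < x := by
    rcases lt_or_eq_of_le hxmem.1 with h | h
    · exact h
    · exfalso; rw [← h] at hfx; linarith
  refine ⟨x, ⟨hxpos, hfx⟩, ?_⟩
  rintro y ⟨hypos, hfy⟩
  exact hanti.injOn (le_of_lt hypos) (le_of_lt hxpos) (by rw [hfy, hfx])
end

section
/- Let Λ_h, Λ_v, μ_h, μ_v, δ, r_1, r_2, β_h, β_v be positive real constants, set S_h^0 = Λ_h/μ_h, S_v^0 = Λ_v/μ_v and R_0 = sqrt( (β_h·S_v^0/(μ_h+δ+r_1))·(β_v·S_h^0/μ_v) ). Consider the equilibrium system: Λ_h + r_2·R_h^* = (β_v·I_v^* + μ_h)·S_h^*; β_v·I_v^*·S_h^* = (μ_h+δ+r_1)·I_h^*; r_1·I_h^* = (r_2+μ_h)·R_h^*; Λ_v = β_h·S_v^*·I_h^* + μ_v·S_v^*; β_h·S_v^*·I_h^* = μ_v·I_v^*. Then this system has a solution (S_h^*, I_h^*, R_h^*, S_v^*, I_v^*) with all five components positive if and only if R_0 > 1; in that case the positive solution is unique and I_v^* = c·(R_0² − 1) where c = μ_h·μ_v·(μ_h+δ+r_1)·(μ_h+r_2)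 / ( β_v·μ_v·(μ_h+δ+r_1)·(μ_h+r_2) + Λ_h·β_v·β_h·(μ_h+r_2) − β_v·μ_v·r_1·r_2 ) > 0. -/
/-- Extraction lemma: any positive solution of the equilibrium system has its
components given by explicit closed forms, and the threshold quantity `K` is
positive. -/
private lemma sirs_aux (Λh Λv μh μv δ r1 r2 βh βv : ℝ)
    (hΛh : 0 < Λh) (hΛv : 0 < Λv) (hμh : 0 < μh) (hμv : 0 < μv)
    (hδ : 0 < δ) (hr1 : 0 < r1) (hr2 : 0 < r2) (hβh : 0 < βh) (hβv : 0 < βv)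
    (D E K G : ℝ)
    (hDe : D = (μh + δ + r1) * (r2 + μh) - r1 * r2)
    (hEe : E = βh * (βv * Λv * D + (μh + δ + r1) * μh * μv * (r2 + μh)))
    (hKe : K = βh * βv * Λh * Λv - (μh + δ + r1) * μh * μv ^ 2)
    (hGe : G = βv * (μv * D + Λh * βh * (r2 + μh)))
    (Sh Ih Rh Sv Iv : ℝ)
    (hSh : 0 < Sh) (hIh : 0 < Ih) (hRh : 0 < Rh) (hSv : 0 < Sv) (hIv : 0 < Iv)
    (e1 : Λh + r2 * Rh = (βv * Iv + μh) * Sh)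
    (e2 : βv * Iv * Sh = (μh + δ + r1) * Ih)
    (e3 : r1 * Ih = (r2 + μh) * Rh)
    (e4 : Λv = βh * Sv * Ih + μv * Sv)
    (e5 : βh * Sv * Ih = μv * Iv) :
    0 < K ∧ Ih = (r2 + μh) * K / E ∧ Iv = (r2 + μh) * K / (μv * G) ∧
      Rh = r1 * K / E ∧ Sv = Λv * E / (βh * ((r2 + μh) * K) + μv * E) ∧
      Sh = (μh + δ + r1) * μv * G / (βv * E) := by
  have hA : 0 < μh + δ + r1 := by linarith
  have hB : 0 < r2 + μh := by linarith
  have hD : 0 < D := by rw [hDe]; nlinarith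
  have hE : 0 < E := by
    rw [hEe]
    exact mul_pos hβh (add_pos (mul_pos (mul_pos hβv hΛv) hD) (by positivity))
  have hG : 0 < G := by
    rw [hGe]
    exact mul_pos hβv (add_pos (mul_pos hμv hD) (by positivity))
  have hC : Ih * (βv * βh * Λv * (Λh * (r2 + μh) - D * Ih))
      = Ih * ((μh + δ + r1) * μh * μv * (r2 + μh) * (βh * Ih + μv)) := by
    rw [hDe]
    linear_combination ((βh * Ih + μv) * μv * βv * Iv * (r2 + μh)) * e1
      + ((βh * Ih + μv) * μv * (βv * Iv * (r2 + μh) + μh * (r2 + μh))) * e2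
      + ((βh * Ih + μv) * μv * βv * Iv * r2) * e3
      + (βv * βh * Ih * (Λh * (r2 + μh)
          - ((μh + δ + r1) * (r2 + μh) - r1 * r2) * Ih)) * e4
      + ((βh * Ih + μv) * βv * (Λh * (r2 + μh)
          - ((μh + δ + r1) * (r2 + μh) - r1 * r2) * Ih)) * e5
  have hC' := mul_left_cancel₀ hIh.ne' hC
  have hM : E * Ih = (r2 + μh) * K := by
    rw [hEe, hKe]; linear_combination -hC'
  have hK : 0 < K := by nlinarith [mul_pos hE hIh]
  have hIvEq : μv * Iv * (βh * Ih + μv) = βh * Λv * Ih := by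
    linear_combination (-(βh * Ih + μv)) * e5 - (βh * Ih) * e4
  have hstar : μv * E + βh * ((r2 + μh) * K) = βh * Λv * G := by
    rw [hEe, hKe, hGe]; ring
  have h8 : (μv * (βh * Ih + μv)) * ((μv * G) * Iv)
      = (μv * (βh * Ih + μv)) * ((r2 + μh) * K) := by
    linear_combination (μv * G) * hIvEq + μv ^ 2 * hM - (μv * Ih) * hstar
  have hIv2 := mul_left_cancel₀
    (mul_pos hμv (add_pos (mul_pos hβh hIh) hμv)).ne' h8
  refine ⟨hK, ?_, ?_, ?_, ?_, ?_⟩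
  · rw [eq_div_iff hE.ne']; linear_combination hM
  · rw [eq_div_iff (mul_pos hμv hG).ne']; linear_combination hIv2
  · rw [eq_div_iff hE.ne']
    have h9 : (r2 + μh) * (Rh * E) = (r2 + μh) * (r1 * K) := by
      linear_combination (-E) * e3 + r1 * hM
    exact mul_left_cancel₀ hB.ne' h9
  · have hX : 0 < βh * ((r2 + μh) * K) + μv * E :=
      add_pos (mul_pos hβh (mul_pos hB hK)) (mul_pos hμv hE)
    rw [eq_div_iff hX.ne']
    linear_combination (-E) * e4 - (βh * Sv) * hM
  · rw [eq_div_iff (mul_pos hβv hE).ne']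
    have h10 : ((r2 + μh) * K) * (Sh * (βv * E))
        = ((r2 + μh) * K) * ((μh + δ + r1) * μv * G) := by
      linear_combination (μv * G * E) * e2 - (Sh * βv * E) * hIv2
        + ((μh + δ + r1) * μv * G) * hM
    exact mul_left_cancel₀ (mul_pos hB hK).ne' h10

/-- Existence lemma: when `K > 0` the explicit closed forms give a positive
solution of the equilibrium system. -/
private lemma sirs_exist (Λh Λv μh μv δ r1 r2 βh βv : ℝ)
    (hΛh : 0 < Λh) (hΛv : 0 < Λv) (hμh : 0 < μh) (hμv : 0 < μv)
    (hδ : 0 < δ) (hr1 : 0 < r1) (hr2 : 0 < r2) (hβh : 0 < βh) (hβv : 0 < βv)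
    (D E K G : ℝ)
    (hDe : D = (μh + δ + r1) * (r2 + μh) - r1 * r2)
    (hEe : E = βh * (βv * Λv * D + (μh + δ + r1) * μh * μv * (r2 + μh)))
    (hKe : K = βh * βv * Λh * Λv - (μh + δ + r1) * μh * μv ^ 2)
    (hGe : G = βv * (μv * D + Λh * βh * (r2 + μh)))
    (hK : 0 < K) :
    (0 < (μh + δ + r1) * μv * G / (βv * E) ∧ 0 < (r2 + μh) * K / E ∧
      0 < r1 * K / E ∧ 0 < Λv * E / (βh * ((r2 + μh) * K) + μv * E) ∧
      0 < (r2 + μh) * K / (μv * G)) ∧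
    Λh + r2 * (r1 * K / E)
      = (βv * ((r2 + μh) * K / (μv * G)) + μh) * ((μh + δ + r1) * μv * G / (βv * E)) ∧
    βv * ((r2 + μh) * K / (μv * G)) * ((μh + δ + r1) * μv * G / (βv * E))
      = (μh + δ + r1) * ((r2 + μh) * K / E) ∧
    r1 * ((r2 + μh) * K / E) = (r2 + μh) * (r1 * K / E) ∧
    Λv = βh * (Λv * E / (βh * ((r2 + μh) * K) + μv * E)) * ((r2 + μh) * K / E)
        + μv * (Λv * E / (βh * ((r2 + μh) * K) + μv * E)) ∧
    βh * (Λv * E / (βh * ((r2 + μh) * K) + μv * E)) * ((r2 + μh) * K / E)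
      = μv * ((r2 + μh) * K / (μv * G)) := by
  have hA : 0 < μh + δ + r1 := by linarith
  have hB : 0 < r2 + μh := by linarith
  have hD : 0 < D := by rw [hDe]; nlinarith
  have hE : 0 < E := by
    rw [hEe]
    exact mul_pos hβh (add_pos (mul_pos (mul_pos hβv hΛv) hD) (by positivity))
  have hG : 0 < G := by
    rw [hGe]
    exact mul_pos hβv (add_pos (mul_pos hμv hD) (by positivity))
  have hX : 0 < βh * ((r2 + μh) * K) + μv * E :=
    add_pos (mul_pos hβh (mul_pos hB hK)) (mul_pos hμv hE)
  refine ⟨⟨by positivity, by positivity, by positivity, by positivity, by positivity⟩,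
    ?_, ?_, ?_, ?_, ?_⟩
  · -- e1
    field_simp [hE.ne', hG.ne', hμv.ne', hβv.ne']
    rw [hEe, hKe, hGe, hDe]
    ring
  · -- e2
    field_simp [hE.ne', hG.ne', hμv.ne', hβv.ne']
  · -- e3
    ring
  · -- e4
    field_simp [hE.ne', hX.ne']
  · -- e5
    field_simp [hE.ne', hG.ne', hμv.ne', hX.ne']
    rw [hEe, hKe, hGe, hDe]
    ring

/-- The endemic equilibrium of the SIRS/SI malaria ODE model exists (with all
components positive) if and only if `R₀ > 1`; in that case it is unique and
`I_v* = c(R₀² − 1)` with `c > 0`. -/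
theorem ode_endemic_equilibrium_iff_R0_gt_one
    (Λh Λv μh μv δ r1 r2 βh βv : ℝ)
    (hΛh : 0 < Λh) (hΛv : 0 < Λv) (hμh : 0 < μh) (hμv : 0 < μv)
    (hδ : 0 < δ) (hr1 : 0 < r1) (hr2 : 0 < r2) (hβh : 0 < βh) (hβv : 0 < βv)
    (Sh0 Sv0 R0 c : ℝ)
    (hSh0 : Sh0 = Λh / μh) (hSv0 : Sv0 = Λv / μv)
    (hR0 : R0 = Real.sqrt ((βh * Sv0 / (μh + δ + r1)) * (βv * Sh0 / μv)))
    (hc : c = μh * μv * (μh + δ + r1) * (μh + r2)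
        / (βv * μv * (μh + δ + r1) * (μh + r2) + Λh * βv * βh * (μh + r2)
            - βv * μv * r1 * r2)) :
    ((∃ Sh Ih Rh Sv Iv : ℝ,
        (0 < Sh ∧ 0 < Ih ∧ 0 < Rh ∧ 0 < Sv ∧ 0 < Iv) ∧
        Λh + r2 * Rh = (βv * Iv + μh) * Sh ∧
        βv * Iv * Sh = (μh + δ + r1) * Ih ∧
        r1 * Ih = (r2 + μh) * Rh ∧
        Λv = βh * Sv * Ih + μv * Sv ∧
        βh * Sv * Ih = μv * Iv)
      ↔ 1 < R0) ∧
    (1 < R0 →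
      0 < c ∧
      (∃! q : ℝ × ℝ × ℝ × ℝ × ℝ,
        (0 < q.1 ∧ 0 < q.2.1 ∧ 0 < q.2.2.1 ∧ 0 < q.2.2.2.1 ∧ 0 < q.2.2.2.2) ∧
        Λh + r2 * q.2.2.1 = (βv * q.2.2.2.2 + μh) * q.1 ∧
        βv * q.2.2.2.2 * q.1 = (μh + δ + r1) * q.2.1 ∧
        r1 * q.2.1 = (r2 + μh) * q.2.2.1 ∧
        Λv = βh * q.2.2.2.1 * q.2.1 + μv * q.2.2.2.1 ∧
        βh * q.2.2.2.1 * q.2.1 = μv * q.2.2.2.2) ∧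
      (∀ Sh Ih Rh Sv Iv : ℝ,
        (0 < Sh ∧ 0 < Ih ∧ 0 < Rh ∧ 0 < Sv ∧ 0 < Iv) →
        Λh + r2 * Rh = (βv * Iv + μh) * Sh →
        βv * Iv * Sh = (μh + δ + r1) * Ih →
        r1 * Ih = (r2 + μh) * Rh →
        Λv = βh * Sv * Ih + μv * Sv →
        βh * Sv * Ih = μv * Iv →
        Iv = c * (R0 ^ 2 - 1))) := by
  subst hSh0 hSv0
  have hA : 0 < μh + δ + r1 := by linarith
  have hB : 0 < r2 + μh := by linarith
  have hAμ : 0 < (μh + δ + r1) * μh * μv ^ 2 := by positivity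
  have hR0sq : R0 ^ 2 = βh * βv * Λh * Λv / ((μh + δ + r1) * μh * μv ^ 2) := by
    rw [hR0, Real.sq_sqrt (by positivity)]
    field_simp
  have hR0nn : 0 ≤ R0 := hR0 ▸ Real.sqrt_nonneg _
  have hKiff : 0 < βh * βv * Λh * Λv - (μh + δ + r1) * μh * μv ^ 2 ↔ 1 < R0 := by
    constructor
    · intro h
      have h2 : 1 < R0 ^ 2 := by rw [hR0sq, lt_div_iff₀ hAμ]; linarith
      nlinarith
    · intro h
      have h2 : 1 < R0 ^ 2 := by nlinarith
      rw [hR0sq, lt_div_iff₀ hAμ] at h2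
      linarith
  have hD : 0 < (μh + δ + r1) * (r2 + μh) - r1 * r2 := by nlinarith
  have hG : 0 < βv * (μv * ((μh + δ + r1) * (r2 + μh) - r1 * r2) + Λh * βh * (r2 + μh)) :=
    mul_pos hβv (add_pos (mul_pos hμv hD) (by positivity))
  have hcden : βv * μv * (μh + δ + r1) * (μh + r2) + Λh * βv * βh * (μh + r2)
      - βv * μv * r1 * r2
      = βv * (μv * ((μh + δ + r1) * (r2 + μh) - r1 * r2) + Λh * βh * (r2 + μh)) := by
    ring
  have hcpos : 0 < c := by
    rw [hc, hcden]
    exact div_pos (by positivity) hG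
  have hcval : c * (R0 ^ 2 - 1)
      = (r2 + μh) * (βh * βv * Λh * Λv - (μh + δ + r1) * μh * μv ^ 2)
        / (μv * (βv * (μv * ((μh + δ + r1) * (r2 + μh) - r1 * r2)
            + Λh * βh * (r2 + μh)))) := by
    rw [hc, hcden, hR0sq]
    field_simp
    ring
  constructor
  · constructor
    · rintro ⟨Sh, Ih, Rh, Sv, Iv, ⟨hSh, hIh, hRh, hSv, hIv⟩, e1, e2, e3, e4, e5⟩
      obtain ⟨hK, -, -, -, -, -⟩ := sirs_aux Λh Λv μh μv δ r1 r2 βh βv hΛh hΛv hμh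
        hμv hδ hr1 hr2 hβh hβv _ _ _ _ rfl rfl rfl rfl Sh Ih Rh Sv Iv
        hSh hIh hRh hSv hIv e1 e2 e3 e4 e5
      exact hKiff.mp hK
    · intro h
      obtain ⟨⟨p1, p2, p3, p4, p5⟩, q1, q2, q3, q4, q5⟩ := sirs_exist Λh Λv μh μv δ
        r1 r2 βh βv hΛh hΛv hμh hμv hδ hr1 hr2 hβh hβv _ _ _ _ rfl rfl rfl rfl
        (hKiff.mpr h)
      exact ⟨_, _, _, _, _, ⟨p1, p2, p3, p4, p5⟩, q1, q2, q3, q4, q5⟩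
  · intro h
    refine ⟨hcpos, ?_, ?_⟩
    · obtain ⟨⟨p1, p2, p3, p4, p5⟩, q1, q2, q3, q4, q5⟩ := sirs_exist Λh Λv μh μv δ
        r1 r2 βh βv hΛh hΛv hμh hμv hδ hr1 hr2 hβh hβv _ _ _ _ rfl rfl rfl rfl
        (hKiff.mpr h)
      refine ⟨⟨_, _, _, _, _⟩, ⟨⟨p1, p2, p3, p4, p5⟩, q1, q2, q3, q4, q5⟩, ?_⟩
      rintro ⟨s, i, r, v, w⟩ ⟨⟨hS, hI, hR, hV, hW⟩, f1, f2, f3, f4, f5⟩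
      obtain ⟨-, h2, h3, h4, h5, h6⟩ := sirs_aux Λh Λv μh μv δ r1 r2 βh βv hΛh hΛv
        hμh hμv hδ hr1 hr2 hβh hβv _ _ _ _ rfl rfl rfl rfl s i r v w
        hS hI hR hV hW f1 f2 f3 f4 f5
      simp only [Prod.mk.injEq]
      exact ⟨h6, h2, h4, h5, h3⟩
    · intro Sh Ih Rh Sv Iv hpos f1 f2 f3 f4 f5
      obtain ⟨hS, hI, hR, hV, hW⟩ := hpos
      obtain ⟨-, -, h3, -, -, -⟩ := sirs_aux Λh Λv μh μv δ r1 r2 βh βv hΛh hΛv hμh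
        hμv hδ hr1 hr2 hβh hβv _ _ _ _ rfl rfl rfl rfl Sh Ih Rh Sv Iv
        hS hI hR hV hW f1 f2 f3 f4 f5
      rw [hcval]
      exact h3
end

section
/- Let Λ_h, Λ_v, μ_h, μ_v, δ, r_1, β_h, β_v be positive real constants and let S_h^*, I_h^*, R_h^*, S_v^*, I_v^* be positive reals satisfying the equilibrium system with r_2 = 0: Λ_h = (β_v·I_v^* + μ_h)·S_h^*; β_v·I_v^*·S_h^* = (μ_h+δ+r_1)·I_h^*; r_1·I_h^* = μ_h·R_h^*; Λ_v = β_h·S_v^*·I_h^* + μ_v·S_v^*; β_h·S_v^*·I_h^* = μ_v·I_v^*. Define the cubic polynomial p(λ) = (λ + μ_h + δ + r_1)·(λ + μ_v + β_h·I_h^*)·(λ + μ_h + β_v·I_v^*) − β_h·β_v·S_h^*·S_v^*·(λ + μ_h). Then every complex root λ of p satisfies Re(λ) < 0. -/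
/-- Routh–Hurwitz stability of the endemic equilibrium of the SIRS/SI malaria ODE
model with `r₂ = 0`: every complex root of the characteristic cubic at the endemic
equilibrium has negative real part. -/
theorem endemic_equilibrium_characteristic_roots_negative
    (Λh Λv μh μv δ r1 βh βv : ℝ)
    (hΛh : 0 < Λh) (hΛv : 0 < Λv) (hμh : 0 < μh) (hμv : 0 < μv)
    (hδ : 0 < δ) (hr1 : 0 < r1) (hβh : 0 < βh) (hβv : 0 < βv)
    (Sh Ih Rh Sv Iv : ℝ)
    (hSh : 0 < Sh) (hIh : 0 < Ih) (hRh : 0 < Rh) (hSv : 0 < Sv) (hIv : 0 < Iv)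
    (heq1 : Λh = (βv * Iv + μh) * Sh)
    (heq2 : βv * Iv * Sh = (μh + δ + r1) * Ih)
    (heq3 : r1 * Ih = μh * Rh)
    (heq4 : Λv = βh * Sv * Ih + μv * Sv)
    (heq5 : βh * Sv * Ih = μv * Iv) :
    ∀ lam : ℂ,
      (lam + ((μh + δ + r1 : ℝ) : ℂ)) * (lam + ((μv + βh * Ih : ℝ) : ℂ))
          * (lam + ((μh + βv * Iv : ℝ) : ℂ))
        - ((βh * βv * Sh * Sv : ℝ) : ℂ) * (lam + ((μh : ℝ) : ℂ)) = 0 →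
      lam.re < 0 := by
  intro lam hroot
  by_contra hre
  push_neg at hre
  -- K = a * μv where a = μh + δ + r1
  have hK : βh * βv * Sh * Sv = (μh + δ + r1) * μv := by
    have h6 : (βh * βv * Sh * Sv) * (Ih * Iv) = ((μh + δ + r1) * μv) * (Ih * Iv) := by
      calc (βh * βv * Sh * Sv) * (Ih * Iv) = (βh * Sv * Ih) * (βv * Iv * Sh) := by ring
        _ = (μv * Iv) * ((μh + δ + r1) * Ih) := by rw [heq5, heq2]
        _ = ((μh + δ + r1) * μv) * (Ih * Iv) := by ring
    exact mul_right_cancel₀ (ne_of_gt (mul_pos hIh hIv)) h6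
  set a : ℝ := μh + δ + r1 with ha
  set b : ℝ := μv + βh * Ih with hb
  set c : ℝ := μh + βv * Iv with hc
  have ha0 : 0 < a := by simp only [ha]; linarith
  have hb0 : μv < b := by simp only [hb]; nlinarith
  have hc0 : μh < c := by simp only [hc]; nlinarith
  set Aa := ‖lam + (a : ℂ)‖ with hAa
  set Ab := ‖lam + (b : ℂ)‖ with hAb
  set Ac := ‖lam + (c : ℂ)‖ with hAc
  set Am := ‖lam + (μh : ℂ)‖ with hAm
  have hra : a ≤ Aa := by
    refine le_trans ?_ (Complex.re_le_norm _)
    simp only [Complex.add_re, Complex.ofReal_re]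
    linarith
  have hrb : b ≤ Ab := by
    refine le_trans ?_ (Complex.re_le_norm _)
    simp only [Complex.add_re, Complex.ofReal_re]
    linarith
  have hrm : μh ≤ Am := by
    refine le_trans ?_ (Complex.re_le_norm _)
    simp only [Complex.add_re, Complex.ofReal_re]
    linarith
  have hcm : Am < Ac := by
    have h2 : Am ^ 2 < Ac ^ 2 := by
      rw [hAm, hAc, Complex.sq_norm, Complex.sq_norm, Complex.normSq_apply,
        Complex.normSq_apply]
      simp only [Complex.add_re, Complex.add_im, Complex.ofReal_re, Complex.ofReal_im]
      nlinarith
    exact lt_of_pow_lt_pow_left₀ 2 (norm_nonneg _) h2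
  -- take moduli of the root equation
  have heqC : (lam + (a : ℂ)) * (lam + (b : ℂ)) * (lam + (c : ℂ))
      = ((βh * βv * Sh * Sv : ℝ) : ℂ) * (lam + (μh : ℂ)) := sub_eq_zero.mp hroot
  have habs : Aa * Ab * Ac = (a * μv) * Am := by
    have := congrArg (‖·‖) heqC
    simpa [map_mul, Complex.norm_real, Real.norm_eq_abs, hK, abs_of_pos ha0, abs_of_pos hμv,
      hAa, hAb, hAc, hAm] using this
  -- contradiction: LHS strictly bigger
  have hAm0 : 0 < Am := lt_of_lt_of_le hμh hrm
  have hAa0 : 0 < Aa := lt_of_lt_of_le ha0 hra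
  have hAb0 : 0 < Ab := lt_of_lt_of_le (hμv.trans hb0) hrb
  have hAc0 : 0 < Ac := hAm0.trans hcm
  have h1 : μv * Am < Ab * Ac :=
    lt_of_le_of_lt (mul_le_mul_of_nonneg_left (le_of_lt hcm) (le_of_lt hμv))
      (lt_of_lt_of_le (mul_lt_mul_of_pos_right hb0 hAc0)
        (mul_le_mul_of_nonneg_right hrb (le_of_lt hAc0)))
  have hstep : (a * μv) * Am < Aa * Ab * Ac := by
    calc (a * μv) * Am = a * (μv * Am) := by ring
      _ < a * (Ab * Ac) := mul_lt_mul_of_pos_left h1 ha0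
      _ ≤ Aa * (Ab * Ac) := mul_le_mul_of_nonneg_right hra (by positivity)
      _ = Aa * Ab * Ac := by ring
  linarith [habs, hstep]
end
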